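/- arXiv:1507.07623 — 11 statements merged into one kernel-verified Lean document; each statement's English description precedes it below -/
import Mathlib

section
/- Let G be a finite simple graph on vertex set {1,…,n} with no isolated vertex. Then vol(G) = (1/(2n)) · Σ_{i=1}^{n} vol(G − i), where G − i denotes the induced subgraph of G on the vertex set {1,…,n} \ {i} (and vol(G − i) is the (n−1)-dimensional volume of its graph polytope). -/
open MeasureTheory

/-- The graph polytope volume: `vol(G)` is the Lebesgue volume of
`{x ∈ [0,1]^V : x_i + x_j ≤ 1 for every edge ij of G}`. -/
noncomputable def gvol {V : Type*} [Fintype V] (G : SimpleGraph V) : ℝ :=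
  (volume {x : V → ℝ | (∀ i, x i ∈ Set.Icc (0:ℝ) 1) ∧
      ∀ ⦃i j⦄, G.Adj i j → x i + x j ≤ 1}).toReal

/-- `G - i`: the induced subgraph of `G` on the vertex set with `i` removed. -/
noncomputable def delVert {n : ℕ} (G : SimpleGraph (Fin n)) (i : Fin n) :
    SimpleGraph {j : Fin n // j ≠ i} :=
  G.comap Subtype.val

namespace RVFAux

open Set

/-- The graph polytope. -/
def pSet {V : Type*} [Fintype V] (G : SimpleGraph V) : Set (V → ℝ) :=
  {x | (∀ i, x i ∈ Set.Icc (0:ℝ) 1) ∧ ∀ ⦃i j⦄, G.Adj i j → x i + x j ≤ 1}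

lemma gvol_eq {V : Type*} [Fintype V] (G : SimpleGraph V) :
    gvol G = (volume (pSet G)).toReal := rfl

lemma measurableSet_pSet {V : Type*} [Fintype V] (G : SimpleGraph V) :
    MeasurableSet (pSet G) := by
  have h1 : MeasurableSet {x : V → ℝ | ∀ i, x i ∈ Set.Icc (0:ℝ) 1} := by
    rw [Set.setOf_forall]
    exact MeasurableSet.iInter fun i => (measurable_pi_apply i) measurableSet_Icc
  have h2 : MeasurableSet {x : V → ℝ | ∀ ⦃i j⦄, G.Adj i j → x i + x j ≤ 1} := by
    have : {x : V → ℝ | ∀ ⦃i j⦄, G.Adj i j → x i + x j ≤ 1}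
        = ⋂ i, ⋂ j, ⋂ (_ : G.Adj i j), {x : V → ℝ | x i + x j ≤ 1} := by
      ext x; simp [Set.mem_iInter]
    rw [this]
    exact MeasurableSet.iInter fun i => MeasurableSet.iInter fun j =>
      MeasurableSet.iInter fun _ =>
        measurableSet_le ((measurable_pi_apply i).add (measurable_pi_apply j)) measurable_const
  exact h1.inter h2

lemma volume_pSet_le {V : Type*} [Fintype V] (G : SimpleGraph V) :
    volume (pSet G) ≤ 1 := by
  have hsub : pSet G ⊆ Set.pi Set.univ (fun _ : V => Set.Icc (0:ℝ) 1) := by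
    intro x hx i _
    exact hx.1 i
  refine le_trans (measure_mono hsub) ?_
  rw [volume_pi_pi]
  simp

lemma volume_pSet_ne_top {V : Type*} [Fintype V] (G : SimpleGraph V) :
    volume (pSet G) ≠ ⊤ :=
  (lt_of_le_of_lt (volume_pSet_le G) ENNReal.one_lt_top).ne

lemma null_coord_zero {ι : Type*} [Fintype ι] (j : ι) :
    volume {z : ι → ℝ | z j = 0} = 0 := by
  classical
  have h : {z : ι → ℝ | z j = 0}
      = (LinearMap.ker (LinearMap.proj (R := ℝ) (φ := fun _ : ι => ℝ) j) : Set (ι → ℝ)) := by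
    ext z; simp [LinearMap.mem_ker]
  rw [h]
  refine Measure.addHaar_submodule _ _ fun htop => ?_
  have h1 : Pi.single j (1:ℝ) ∈ LinearMap.ker (LinearMap.proj (R := ℝ) (φ := fun _ : ι => ℝ) j) :=
    htop ▸ Submodule.mem_top
  simp [LinearMap.mem_ker] at h1

lemma null_coords_eq {ι : Type*} [Fintype ι] {i j : ι} (hij : i ≠ j) :
    volume {x : ι → ℝ | x i = x j} = 0 := by
  classical
  set L : (ι → ℝ) →ₗ[ℝ] ℝ :=
    LinearMap.proj (R := ℝ) (φ := fun _ : ι => ℝ) i - LinearMap.proj (R := ℝ) (φ := fun _ : ι => ℝ) j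
  have h : {x : ι → ℝ | x i = x j} = (LinearMap.ker L : Set (ι → ℝ)) := by
    ext x; simp [L, LinearMap.mem_ker, sub_eq_zero]
  rw [h]
  refine Measure.addHaar_submodule _ _ fun htop => ?_
  have h1 : Pi.single i (1:ℝ) ∈ LinearMap.ker L := htop ▸ Submodule.mem_top
  simp [L, LinearMap.mem_ker, Pi.single_eq_same, Pi.single_eq_of_ne (Ne.symm hij)] at h1

variable {n : ℕ}

/-- The part of the polytope where coordinate `i` is the strict minimum. -/
def Bset (G : SimpleGraph (Fin n)) (i : Fin n) : Set (Fin n → ℝ) :=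
  pSet G ∩ {x | ∀ j, j ≠ i → x i < x j}

lemma measurableSet_Bset (G : SimpleGraph (Fin n)) (i : Fin n) :
    MeasurableSet (Bset G i) := by
  refine (measurableSet_pSet G).inter ?_
  have : {x : Fin n → ℝ | ∀ j, j ≠ i → x i < x j}
      = ⋂ j, ⋂ (_ : j ≠ i), {x : Fin n → ℝ | x i < x j} := by
    ext x; simp [Set.mem_iInter]
  rw [this]
  exact MeasurableSet.iInter fun j => MeasurableSet.iInter fun _ =>
    measurableSet_lt (measurable_pi_apply i) (measurable_pi_apply j)

lemma volume_decomp (hn : 1 ≤ n) (G : SimpleGraph (Fin n)) :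
    volume (pSet G) = ∑ i : Fin n, volume (Bset G i) := by
  haveI : Nonempty (Fin n) := ⟨⟨0, hn⟩⟩
  have hdisj : Pairwise (Function.onFun Disjoint fun i => Bset G i) := by
    intro i j hij
    rw [Function.onFun, Set.disjoint_left]
    rintro x ⟨-, hxi⟩ ⟨-, hxj⟩
    exact lt_asymm (hxi j (Ne.symm hij)) (hxj i hij)
  have hsub : ∀ i, Bset G i ⊆ pSet G := fun i => Set.inter_subset_left
  have hnull2 : volume (⋃ i, ⋃ j, ⋃ (_ : i ≠ j), {x : Fin n → ℝ | x i = x j}) = 0 :=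
    measure_iUnion_null fun i => measure_iUnion_null fun j =>
      measure_iUnion_null fun hij => null_coords_eq hij
  have hnull : volume (pSet G \ ⋃ i, Bset G i) = 0 := by
    refine measure_mono_null ?_ hnull2
    rintro x ⟨hxP, hxB⟩
    obtain ⟨i, hi⟩ : ∃ i : Fin n, ∀ j, x i ≤ x j := Finite.exists_min x
    have hxBi : x ∉ Bset G i := fun h => hxB (Set.mem_iUnion.2 ⟨i, h⟩)
    have : ∃ j, j ≠ i ∧ ¬ x i < x j := by
      by_contra hcon
      push_neg at hcon
      exact hxBi ⟨hxP, fun j hj => hcon j hj⟩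
    obtain ⟨j, hji, hjlt⟩ := this
    refine Set.mem_iUnion.2 ⟨i, Set.mem_iUnion.2 ⟨j, Set.mem_iUnion.2 ⟨Ne.symm hji, ?_⟩⟩⟩
    exact le_antisymm (hi j) (not_lt.1 hjlt)
  calc volume (pSet G) = volume (⋃ i, Bset G i) :=
        (measure_eq_measure_of_null_diff (Set.iUnion_subset hsub) hnull).symm
    _ = ∑' i, volume (Bset G i) := measure_iUnion hdisj fun i => measurableSet_Bset G i
    _ = ∑ i : Fin n, volume (Bset G i) := tsum_fintype _

/-- The section map: insert value `t` at coordinate `i`. -/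
def Xmap (i : Fin n) (t : ℝ) (y : {j : Fin n // ¬ j = i} → ℝ) : Fin n → ℝ :=
  fun j => if h : j = i then t else y ⟨j, h⟩

lemma Xmap_same (i : Fin n) (t : ℝ) (y : {j : Fin n // ¬ j = i} → ℝ) :
    Xmap i t y i = t := dif_pos rfl

lemma Xmap_ne (i : Fin n) (t : ℝ) (y : {j : Fin n // ¬ j = i} → ℝ)
    {j : Fin n} (h : ¬ j = i) : Xmap i t y j = y ⟨j, h⟩ := dif_neg h

lemma volume_pi_fintype_irrel {κ : Type*} (F1 F2 : Fintype κ) :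
    (@MeasureSpace.volume _ (@MeasureSpace.pi κ F1 (fun _ => ℝ) (fun _ => Real.measureSpace)))
      = (@MeasureSpace.volume _ (@MeasureSpace.pi κ F2 (fun _ => ℝ) (fun _ => Real.measureSpace))) := by
  cases Subsingleton.elim F1 F2
  rfl

lemma volume_pi_fintype_irrel' {κ : Type*} (F1 F2 : Fintype κ) (s : Set (κ → ℝ)) :
    @MeasureSpace.volume _ (@MeasureSpace.pi κ F1 (fun _ => ℝ) (fun _ => Real.measureSpace)) s
      = @MeasureSpace.volume _ (@MeasureSpace.pi κ F2 (fun _ => ℝ) (fun _ => Real.measureSpace)) s := by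
  cases Subsingleton.elim F1 F2
  rfl

lemma lintegral_pi_unique {κ : Type*} [Unique κ] (F1 : Fintype κ) {f : (κ → ℝ) → ENNReal}
    (hf : Measurable f) :
    ∫⁻ a, f a ∂(@MeasureSpace.volume _ (@MeasureSpace.pi κ F1 (fun _ => ℝ)
        (fun _ => Real.measureSpace)))
      = ∫⁻ t : ℝ, f (fun _ => t) := by
  have h := ((volume_preserving_funUnique κ ℝ).symm (MeasurableEquiv.funUnique κ ℝ)).lintegral_comp hf
  refine Eq.trans ?_ (Eq.trans h.symm ?_)
  · exact congrArg (fun μ => ∫⁻ b, f b ∂μ) (volume_pi_fintype_irrel F1 _)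
  · refine lintegral_congr fun t => ?_
    congr 1

lemma key_fubini (G : SimpleGraph (Fin n)) (i : Fin n) :
    volume (Bset G i)
      = ∫⁻ t : ℝ, volume {y : {j : Fin n // ¬ j = i} → ℝ | Xmap i t y ∈ Bset G i} := by
  classical
  have hB : MeasurableSet (Bset G i) := measurableSet_Bset G i
  haveI : Unique {j : Fin n // j = i} := ⟨⟨⟨i, rfl⟩⟩, fun a => Subtype.ext a.2⟩
  set e := MeasurableEquiv.piEquivPiSubtypeProd (π := fun _ : Fin n => ℝ) (fun j => j = i) with he
  have hep :=
    (volume_preserving_piEquivPiSubtypeProd (fun _ : Fin n => ℝ) (fun j => j = i)).symm e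
  have hS : MeasurableSet (e.symm ⁻¹' Bset G i) := e.symm.measurable hB
  have h0 := hep.measure_preimage hB.nullMeasurableSet
  rw [← h0, Measure.volume_eq_prod, Measure.prod_apply hS]
  rw [lintegral_pi_unique _ (measurable_measure_prodMk_left hS)]
  refine lintegral_congr fun t => ?_
  exact volume_pi_fintype_irrel' _ _ _

lemma delVert_adj {G : SimpleGraph (Fin n)} {i : Fin n} {j k : {j : Fin n // j ≠ i}} :
    (delVert G i).Adj j k ↔ G.Adj j.1 k.1 := Iff.rfl

lemma slice_empty (G : SimpleGraph (Fin n)) (hiso : ∀ i : Fin n, ∃ j : Fin n, G.Adj i j)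
    (i : Fin n) {t : ℝ} (ht : t ∉ Set.Ico (0:ℝ) 2⁻¹) :
    {y : {j : Fin n // ¬ j = i} → ℝ | Xmap i t y ∈ Bset G i} = ∅ := by
  rw [Set.eq_empty_iff_forall_notMem]
  rintro y ⟨⟨hy01, hyadj⟩, hymin⟩
  rw [Set.mem_Ico, not_and_or, not_le, not_lt] at ht
  have hti := hy01 i
  rw [Xmap_same] at hti
  rcases ht with ht | ht
  · exact absurd hti.1 (not_le.2 ht)
  · obtain ⟨k, hk⟩ := hiso i
    have hki : ¬ k = i := fun h => G.irrefl (h ▸ hk)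
    have h1 := hyadj hk
    rw [Xmap_same, Xmap_ne i t y hki] at h1
    have h2 := hymin k hki
    rw [Xmap_same, Xmap_ne i t y hki] at h2
    have : (2:ℝ) * t < 1 := by linarith
    have : (1:ℝ) ≤ 2 * t := by
      rw [show (1:ℝ) = 2 * 2⁻¹ by norm_num]
      exact mul_le_mul_of_nonneg_left ht (by norm_num)
    linarith

lemma slice_eval (G : SimpleGraph (Fin n)) (hiso : ∀ i : Fin n, ∃ j : Fin n, G.Adj i j)
    (i : Fin n) {t : ℝ} (ht : t ∈ Set.Ico (0:ℝ) 2⁻¹) :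
    {y : {j : Fin n // ¬ j = i} → ℝ | Xmap i t y ∈ Bset G i}
      = (fun (z : {j : Fin n // ¬ j = i} → ℝ) (j : {j : Fin n // ¬ j = i}) =>
            t + (1 - 2*t) * z j) ''
          (pSet (delVert G i) ∩ {z | ∀ j, 0 < z j}) := by
  obtain ⟨ht0, ht1⟩ := ht
  have hc : 0 < 1 - 2*t := by
    have : (2:ℝ) * t < 2 * 2⁻¹ := by
      exact mul_lt_mul_of_pos_left ht1 (by norm_num)
    norm_num at this
    linarith
  ext y
  simp only [Set.mem_setOf_eq, Set.mem_image, Set.mem_inter_iff]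
  constructor
  · rintro ⟨⟨hy01, hyadj⟩, hymin⟩
    have hmin' : ∀ j : {j : Fin n // ¬ j = i}, t < y j := by
      intro j
      have := hymin j.1 j.2
      rwa [Xmap_same, Xmap_ne i t y j.2, Subtype.eta] at this
    have hub : ∀ j : {j : Fin n // ¬ j = i}, y j ≤ 1 - t := by
      intro j
      obtain ⟨k, hk⟩ := hiso j.1
      by_cases hki : k = i
      · have hk' : G.Adj j.1 i := hki ▸ hk
        have := hyadj hk'
        rw [Xmap_ne i t y j.2, Xmap_same, Subtype.eta] at this
        linarith
      · have h1 := hyadj hk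
        rw [Xmap_ne i t y j.2, Xmap_ne i t y hki, Subtype.eta] at h1
        have h2 := hmin' ⟨k, hki⟩
        linarith
    refine ⟨fun j => (y j - t) / (1 - 2*t), ⟨⟨?_, ?_⟩, ?_⟩, ?_⟩
    · intro j
      constructor
      · exact div_nonneg (by linarith [hmin' j]) hc.le
      · rw [div_le_one hc]
        linarith [hub j]
    · intro j k hjk
      rw [delVert_adj] at hjk
      have h1 := hyadj hjk
      rw [Xmap_ne i t y j.2, Xmap_ne i t y k.2, Subtype.eta, Subtype.eta] at h1
      rw [← add_div, div_le_one hc]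
      linarith
    · intro j
      exact div_pos (by linarith [hmin' j]) hc
    · funext j
      rw [mul_div_cancel₀ _ hc.ne']
      ring
  · rintro ⟨z, ⟨⟨hz01, hzadj⟩, hzpos⟩, rfl⟩
    have hval : ∀ (j : Fin n) (h : ¬ j = i),
        Xmap i t (fun j => t + (1 - 2*t) * z j) j = t + (1 - 2*t) * z ⟨j, h⟩ := by
      intro j h
      rw [Xmap_ne i t _ h]
    refine ⟨⟨?_, ?_⟩, ?_⟩
    · intro j
      by_cases h : j = i
      · subst h
        rw [Xmap_same]
        constructor
        · exact ht0
        · linarith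
      · rw [hval j h]
        have h1 := (hz01 ⟨j, h⟩).1
        have h2 := (hz01 ⟨j, h⟩).2
        constructor
        · nlinarith
        · nlinarith
    · intro j k hjk
      by_cases hj : j = i <;> by_cases hk : k = i
      · subst hj; subst hk; exact absurd hjk (G.irrefl)
      · subst hj
        rw [Xmap_same, hval k hk]
        have h2 := (hz01 ⟨k, hk⟩).2
        nlinarith
      · subst hk
        rw [Xmap_same, hval j hj]
        have h2 := (hz01 ⟨j, hj⟩).2
        nlinarith
      · rw [hval j hj, hval k hk]
        have hadj : (delVert G i).Adj ⟨j, hj⟩ ⟨k, hk⟩ := hjk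
        have h1 := hzadj hadj
        nlinarith
    · intro j hj
      rw [Xmap_same, hval j hj]
      have := hzpos ⟨j, hj⟩
      nlinarith

open Pointwise in
lemma volume_image_affine {κ : Type*} [Fintype κ] (t c : ℝ) (hc : 0 ≤ c) (s : Set (κ → ℝ)) :
    volume ((fun (z : κ → ℝ) (j : κ) => t + c * z j) '' s)
      = ENNReal.ofReal (c ^ (Fintype.card κ)) * volume s := by
  have hcomp : (fun (z : κ → ℝ) (j : κ) => t + c * z j)
      = (fun w : κ → ℝ => (fun _ => t) + w) ∘ (fun z : κ → ℝ => c • z) := by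
    funext z
    funext j
    simp [smul_eq_mul]
  rw [hcomp, Set.image_comp, Set.image_smul, Set.image_add_left, measure_preimage_add,
    Measure.addHaar_smul_of_nonneg volume hc, Module.finrank_pi]

lemma volume_posPart {κ : Type*} [Fintype κ] (G' : SimpleGraph κ) :
    volume (pSet G' ∩ {z : κ → ℝ | ∀ j, 0 < z j}) = volume (pSet G') := by
  have hsub : pSet G' ∩ {z : κ → ℝ | ∀ j, 0 < z j}
      = pSet G' \ (⋃ j, {z : κ → ℝ | z j = 0}) := by
    ext z
    simp only [Set.mem_inter_iff, Set.mem_diff, Set.mem_iUnion, Set.mem_setOf_eq, not_exists]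
    constructor
    · rintro ⟨hz, hpos⟩
      exact ⟨hz, fun j => (hpos j).ne'⟩
    · rintro ⟨hz, hne⟩
      exact ⟨hz, fun j => lt_of_le_of_ne (hz.1 j).1 (Ne.symm (hne j))⟩
  rw [hsub, measure_diff_null]
  exact measure_iUnion_null fun j => null_coord_zero j

lemma lintegral_pow_aux (m : ℕ) :
    ∫⁻ t in Set.Ico (0:ℝ) 2⁻¹, ENNReal.ofReal ((1-2*t)^m)
      = ENNReal.ofReal (1/(2*((m:ℝ)+1))) := by
  rw [setLIntegral_congr MeasureTheory.Ico_ae_eq_Ioc]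
  have hcont : Continuous fun t : ℝ => (1-2*t)^m := by
    apply Continuous.pow
    exact continuous_const.sub (continuous_const.mul continuous_id)
  have hint : IntegrableOn (fun t : ℝ => (1-2*t)^m) (Set.Ioc (0:ℝ) 2⁻¹) :=
    hcont.integrableOn_Ioc
  have hnn : 0 ≤ᵐ[volume.restrict (Set.Ioc (0:ℝ) 2⁻¹)] fun t : ℝ => (1-2*t)^m := by
    filter_upwards [ae_restrict_mem measurableSet_Ioc] with t ht
    have h1 : t ≤ 2⁻¹ := ht.2
    have h2 : (0:ℝ) ≤ 1 - 2*t := by linarith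
    positivity
  rw [← MeasureTheory.ofReal_integral_eq_lintegral_ofReal hint hnn]
  congr 1
  have h05 : (0:ℝ) ≤ 2⁻¹ := by norm_num
  rw [← intervalIntegral.integral_of_le h05]
  have hm1 : ((m:ℝ) + 1) ≠ 0 := by positivity
  have hderiv : ∀ t ∈ Set.uIcc (0:ℝ) 2⁻¹,
      HasDerivAt (fun u : ℝ => -(1-2*u)^(m+1) / (2*((m:ℝ)+1))) ((1-2*t)^m) t := by
    intro t _
    have h1 : HasDerivAt (fun u : ℝ => 1 - 2*u) (-2) t := by
      simpa using ((hasDerivAt_id t).const_mul (2:ℝ)).const_sub 1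
    have h2 := (h1.pow (m+1)).neg.div_const (2*((m:ℝ)+1))
    convert h2 using 1
    case e'_4 => rfl
    case e'_5 => rfl
    case e'_8 => rfl
    push_cast
    field_simp
  rw [intervalIntegral.integral_eq_sub_of_hasDerivAt hderiv (hcont.intervalIntegrable _ _)]
  have : (1 - 2 * (2⁻¹:ℝ)) = 0 := by norm_num
  rw [this, zero_pow (Nat.succ_ne_zero m)]
  norm_num
  field_simp

lemma volume_Bset (hn : 1 ≤ n) (G : SimpleGraph (Fin n))
    (hiso : ∀ i : Fin n, ∃ j : Fin n, G.Adj i j) (i : Fin n) :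
    volume (Bset G i)
      = ENNReal.ofReal (1/(2*(n:ℝ))) * volume (pSet (delVert G i)) := by
  classical
  set m := Fintype.card {j : Fin n // ¬ j = i} with hm
  have hmn : m + 1 = n := by
    have h1 : m = n - 1 := by
      rw [hm, Fintype.card_subtype_compl, Fintype.card_subtype_eq, Fintype.card_fin]
    omega
  have hmnr : (m:ℝ) + 1 = (n:ℝ) := by
    rw [← hmn]
    push_cast
    ring
  have hslice : ∀ t : ℝ,
      volume {y : {j : Fin n // ¬ j = i} → ℝ | Xmap i t y ∈ Bset G i}
        = Set.indicator (Set.Ico (0:ℝ) 2⁻¹)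
            (fun t => ENNReal.ofReal ((1-2*t)^m) * volume (pSet (delVert G i))) t := by
    intro t
    by_cases ht : t ∈ Set.Ico (0:ℝ) 2⁻¹
    · rw [Set.indicator_of_mem ht, slice_eval G hiso i ht]
      have hc : (0:ℝ) ≤ 1 - 2*t := by
        have := ht.2
        have h2 : (2:ℝ) * t ≤ 2 * 2⁻¹ := by
          exact mul_le_mul_of_nonneg_left this.le (by norm_num)
        norm_num at h2
        linarith
      rw [volume_image_affine t (1-2*t) hc, volume_posPart]
    · rw [Set.indicator_of_notMem ht, slice_empty G hiso i ht, measure_empty]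
  rw [key_fubini]
  simp_rw [hslice]
  rw [lintegral_indicator measurableSet_Ico]
  rw [lintegral_mul_const _ (by
    apply Measurable.ennreal_ofReal
    apply Measurable.pow_const
    exact measurable_const.sub (measurable_const.mul measurable_id))]
  rw [lintegral_pow_aux m, hmnr]

end RVFAux

/-- Recursive volume formula (RVF): if a graph `G` on `{1,…,n}` has no isolated
vertex, then `vol(G) = (1/(2n)) · Σ_{i=1}^n vol(G − i)`. -/
theorem rvf (n : ℕ) (hn : 1 ≤ n) (G : SimpleGraph (Fin n))
    (hiso : ∀ i : Fin n, ∃ j : Fin n, G.Adj i j) :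
    gvol G = (1 / (2 * (n : ℝ))) * ∑ i : Fin n, gvol (delVert G i) := by
  classical
  have hc : (0:ℝ) ≤ 1 / (2 * (n:ℝ)) := by positivity
  rw [RVFAux.gvol_eq, RVFAux.volume_decomp hn G]
  have hB : ∀ i : Fin n, volume (RVFAux.Bset G i)
      = ENNReal.ofReal (1/(2*(n:ℝ))) * volume (RVFAux.pSet (delVert G i)) :=
    fun i => RVFAux.volume_Bset hn G hiso i
  simp_rw [hB]
  rw [ENNReal.toReal_sum (fun i _ => ENNReal.mul_ne_top ENNReal.ofReal_ne_top
    (RVFAux.volume_pSet_ne_top (delVert G i)))]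
  rw [Finset.mul_sum]
  refine Finset.sum_congr rfl fun i _ => ?_
  rw [ENNReal.toReal_mul, ENNReal.toReal_ofReal hc, RVFAux.gvol_eq]
end

section
/- The generating function of the volumes of the path polytopes is sec x + tan x: for all real x with |x| < π/2, Σ_{n ≥ 0} vol(L_n)·x^n = sec x + tan x (with the convention vol(L_0) = 1). -/
open MeasureTheory Real

/-- The path `L_n` on vertex set `{1,…,n}` with edges `i(i+1)`, `1 ≤ i ≤ n-1`.
Note that `gvol (pathG 0) = 1`, matching the convention `vol(L_0) = 1`. -/
def pathG (n : ℕ) : SimpleGraph (Fin n) :=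
  SimpleGraph.fromRel (fun i j => (i : ℕ) + 1 = (j : ℕ))

open intervalIntegral

noncomputable def V : ℕ → ℝ → ℝ
  | 0, _ => 1
  | n+1, t => ∫ s in (0:ℝ)..(1-t), V n s

lemma V_continuous (n : ℕ) : Continuous (V n) := by
  induction n with
  | zero => exact continuous_const
  | succ n ih =>
    have h : Continuous fun u : ℝ => ∫ s in (0:ℝ)..u, V n s :=
      intervalIntegral.continuous_primitive
        (fun a b => (ih.intervalIntegrable a b)) 0
    exact h.comp (continuous_const.sub continuous_id)

lemma V_nonneg (n : ℕ) {t : ℝ} (ht : t ∈ Set.Icc (0:ℝ) 1) : 0 ≤ V n t := by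
  induction n generalizing t with
  | zero => exact zero_le_one
  | succ n ih =>
    show 0 ≤ ∫ s in (0:ℝ)..(1-t), V n s
    apply intervalIntegral.integral_nonneg (by linarith [ht.2])
    intro u hu
    exact ih ⟨hu.1, by linarith [hu.2, ht.1]⟩

lemma cos_pi_div_two_mul_le {t : ℝ} (ht : t ∈ Set.Icc (0:ℝ) 1) :
    1 - t ≤ Real.cos (π/2 * t) := by
  have h := Real.le_sin_mul (show (0:ℝ) ≤ 1-t by linarith [ht.2]) (by linarith [ht.1])
  calc 1-t ≤ Real.sin (π/2*(1-t)) := h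
    _ = Real.cos (π/2*t) := by rw [mul_sub, mul_one, Real.sin_pi_div_two_sub]

lemma integral_cos_pi_div_two (t : ℝ) :
    ∫ s in (0:ℝ)..(1-t), Real.cos (π/2 * s) = 2/π * Real.cos (π/2 * t) := by
  have hπ : (π/2) ≠ 0 := by positivity
  rw [intervalIntegral.integral_comp_mul_left Real.cos hπ]
  rw [integral_cos]
  rw [mul_sub, mul_one]
  rw [Real.sin_pi_div_two_sub]
  simp [smul_eq_mul]

lemma V_le (n : ℕ) {t : ℝ} (ht : t ∈ Set.Icc (0:ℝ) 1) :
    V (n+1) t ≤ (2/π)^n * Real.cos (π/2 * t) := by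
  induction n generalizing t with
  | zero =>
    show (∫ s in (0:ℝ)..(1-t), (1:ℝ)) ≤ _
    rw [intervalIntegral.integral_const]
    simpa using cos_pi_div_two_mul_le ht
  | succ n ih =>
    show (∫ s in (0:ℝ)..(1-t), V (n+1) s) ≤ _
    have h1 : (∫ s in (0:ℝ)..(1-t), V (n+1) s)
        ≤ ∫ s in (0:ℝ)..(1-t), (2/π)^n * Real.cos (π/2 * s) := by
      apply intervalIntegral.integral_mono_on (by linarith [ht.2])
      · exact (V_continuous (n+1)).intervalIntegrable _ _
      · exact (continuous_const.mul (Real.continuous_cos.comp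
          (continuous_const.mul continuous_id))).intervalIntegrable _ _
      · intro u hu
        exact ih ⟨hu.1, by linarith [hu.2, ht.1]⟩
    calc _ ≤ _ := h1
      _ = (2/π)^n * ∫ s in (0:ℝ)..(1-t), Real.cos (π/2 * s) := by
          rw [intervalIntegral.integral_const_mul]
      _ = (2/π)^(n+1) * Real.cos (π/2 * t) := by
          rw [integral_cos_pi_div_two]; ring

noncomputable def Ff (x t : ℝ) : ℝ :=
  (1 + Real.sin x)/Real.cos x * Real.cos (x*t) - Real.sin (x*t)

lemma Ff_continuous (x : ℝ) : Continuous (Ff x) := by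
  unfold Ff
  fun_prop

lemma Ff_eq {x : ℝ} (hx : |x| < π/2) (t : ℝ) :
    Ff x t = 1 + x * ∫ s in (0:ℝ)..(1-t), Ff x s := by
  have hc : 0 < Real.cos x := Real.cos_pos_of_mem_Ioo
    ⟨by linarith [(abs_lt.1 hx).1], (abs_lt.1 hx).2⟩
  by_cases hx0 : x = 0
  · simp [hx0, Ff]
  · have h1 : ∫ s in (0:ℝ)..(1-t), Real.cos (x*s) = x⁻¹ * Real.sin (x*(1-t)) := by
      rw [intervalIntegral.integral_comp_mul_left Real.cos hx0, integral_cos]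
      simp [smul_eq_mul]
    have h2 : ∫ s in (0:ℝ)..(1-t), Real.sin (x*s) = x⁻¹ * (1 - Real.cos (x*(1-t))) := by
      rw [intervalIntegral.integral_comp_mul_left Real.sin hx0, integral_sin]
      simp [smul_eq_mul]
    have h3 : ∫ s in (0:ℝ)..(1-t), Ff x s
        = (1 + Real.sin x)/Real.cos x * (x⁻¹ * Real.sin (x*(1-t)))
          - x⁻¹ * (1 - Real.cos (x*(1-t))) := by
      unfold Ff
      rw [intervalIntegral.integral_sub, intervalIntegral.integral_const_mul, h1, h2]
      · exact (by fun_prop : Continuous fun s => (1 + Real.sin x)/Real.cos x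
          * Real.cos (x*s)).intervalIntegrable _ _
      · exact (by fun_prop : Continuous fun s => Real.sin (x*s)).intervalIntegrable _ _
    rw [h3]
    unfold Ff
    have h4 : x*(1-t) = x - x*t := by ring
    rw [h4, Real.sin_sub, Real.cos_sub]
    have hpy := Real.sin_sq_add_cos_sq x
    field_simp
    linear_combination (-Real.cos (x*t)) * hpy

noncomputable def Rr (x : ℝ) (N : ℕ) (t : ℝ) : ℝ :=
  Ff x t - ∑ n ∈ Finset.range N, V n t * x^n

lemma Rr_continuous (x : ℝ) (N : ℕ) : Continuous (Rr x N) := by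
  unfold Rr
  exact (Ff_continuous x).sub (continuous_finset_sum _ fun n _ =>
    (V_continuous n).mul continuous_const)

lemma Rr_rec {x : ℝ} (hx : |x| < π/2) (N : ℕ) (t : ℝ) :
    Rr x (N+1) t = x * ∫ s in (0:ℝ)..(1-t), Rr x N s := by
  have hsum : ∫ s in (0:ℝ)..(1-t), Rr x N s
      = (∫ s in (0:ℝ)..(1-t), Ff x s)
        - ∑ n ∈ Finset.range N, (V (n+1) t) * x^n := by
    unfold Rr
    rw [intervalIntegral.integral_sub ((Ff_continuous x).intervalIntegrable _ _)
      ((show Continuous fun s => ∑ n ∈ Finset.range N, V n s * x^n from continuous_finset_sum _ fun n _ =>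
        (V_continuous n).mul continuous_const).intervalIntegrable _ _)]
    congr 1
    rw [intervalIntegral.integral_finset_sum (f := fun n s => V n s * x^n)
      (fun n _ => ((V_continuous n).mul continuous_const).intervalIntegrable _ _)]
    refine Finset.sum_congr rfl fun n _ => ?_
    rw [intervalIntegral.integral_mul_const]
    rfl
  rw [hsum, mul_sub]
  unfold Rr
  rw [Finset.sum_range_succ']
  have h0 : V 0 t * x ^ 0 = 1 := by simp [V]
  have hS : ∑ n ∈ Finset.range N, V (n+1) t * x^(n+1)
      = ∑ n ∈ Finset.range N, x * (V (n+1) t * x^n) :=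
    Finset.sum_congr rfl fun n _ => by ring
  rw [h0, hS, Ff_eq hx t, Finset.mul_sum]
  ring

lemma Rr_bound {x : ℝ} (hx : |x| < π/2) (M : ℝ)
    (hM : ∀ t ∈ Set.Icc (0:ℝ) 1, |Rr x 0 t| ≤ M) (N : ℕ) :
    ∀ t ∈ Set.Icc (0:ℝ) 1,
      |Rr x (N+1) t| ≤ M * |x| * (|x| * (2/π))^N * Real.cos (π/2 * t) := by
  induction N with
  | zero =>
    intro t ht
    rw [Rr_rec hx 0 t, abs_mul]
    have h1 : |∫ s in (0:ℝ)..(1-t), Rr x 0 s| ≤ M * |1 - t - 0| := by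
      rw [← Real.norm_eq_abs]
      apply intervalIntegral.norm_integral_le_of_norm_le_const
      intro s hs
      rw [Real.norm_eq_abs]
      rw [Set.uIoc_of_le (by linarith [ht.2])] at hs
      exact hM s ⟨le_of_lt hs.1, by linarith [hs.2, ht.1]⟩
    have h2 : M * |1 - t - 0| ≤ M * Real.cos (π/2 * t) := by
      have hM0 : 0 ≤ M := le_trans (abs_nonneg _) (hM 0 ⟨le_refl _, zero_le_one⟩)
      have : |1 - t - 0| = 1 - t := by
        rw [abs_of_nonneg (by linarith [ht.2])]; ring
      rw [this]
      exact mul_le_mul_of_nonneg_left (cos_pi_div_two_mul_le ht) hM0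
    calc |x| * |∫ s in (0:ℝ)..(1-t), Rr x 0 s| ≤ |x| * (M * Real.cos (π/2*t)) :=
          mul_le_mul_of_nonneg_left (le_trans h1 h2) (abs_nonneg x)
      _ = M * |x| * (|x| * (2/π))^0 * Real.cos (π/2*t) := by ring
  | succ N ih =>
    intro t ht
    rw [Rr_rec hx (N+1) t, abs_mul]
    have hInt1 : IntervalIntegrable (fun s => |Rr x (N+1) s|) volume 0 (1-t) :=
      ((Rr_continuous x (N+1)).abs).intervalIntegrable _ _
    have hInt2 : IntervalIntegrable
        (fun s => M * |x| * (|x| * (2/π))^N * Real.cos (π/2 * s)) volume 0 (1-t) :=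
      (by fun_prop : Continuous fun s => M * |x| * (|x| * (2/π))^N
        * Real.cos (π/2 * s)).intervalIntegrable _ _
    have h1 : |∫ s in (0:ℝ)..(1-t), Rr x (N+1) s|
        ≤ ∫ s in (0:ℝ)..(1-t), |Rr x (N+1) s| :=
      intervalIntegral.abs_integral_le_integral_abs (by linarith [ht.2])
    have h2 : (∫ s in (0:ℝ)..(1-t), |Rr x (N+1) s|)
        ≤ ∫ s in (0:ℝ)..(1-t), M * |x| * (|x| * (2/π))^N * Real.cos (π/2 * s) := by
      apply intervalIntegral.integral_mono_on (by linarith [ht.2]) hInt1 hInt2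
      intro s hs
      exact ih s ⟨hs.1, by linarith [hs.2, ht.1]⟩
    have h3 : (∫ s in (0:ℝ)..(1-t), M * |x| * (|x| * (2/π))^N * Real.cos (π/2 * s))
        = M * |x| * (|x| * (2/π))^N * (2/π * Real.cos (π/2 * t)) := by
      rw [intervalIntegral.integral_const_mul, integral_cos_pi_div_two]
    calc |x| * |∫ s in (0:ℝ)..(1-t), Rr x (N+1) s|
        ≤ |x| * (M * |x| * (|x| * (2/π))^N * (2/π * Real.cos (π/2 * t))) := by
          apply mul_le_mul_of_nonneg_left _ (abs_nonneg x)
          rw [← h3]; exact le_trans h1 h2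
      _ = M * |x| * (|x| * (2/π))^(N+1) * Real.cos (π/2 * t) := by ring

lemma hasSum_V {x : ℝ} (hx : |x| < π/2) :
    HasSum (fun n => V n 0 * x^n) (1/Real.cos x + Real.tan x) := by
  have hπ : (0:ℝ) < π := Real.pi_pos
  have hc : 0 < Real.cos x := Real.cos_pos_of_mem_Ioo
    ⟨by linarith [(abs_lt.1 hx).1], (abs_lt.1 hx).2⟩
  set q : ℝ := |x| * (2/π) with hq_def
  have hq0 : 0 ≤ q := by positivity
  have hq1 : q < 1 := by
    have : |x| * (2/π) < (π/2) * (2/π) := by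
      apply mul_lt_mul_of_pos_right hx (by positivity)
    calc q < (π/2) * (2/π) := this
      _ = 1 := by field_simp
  -- summability
  have hbound : ∀ n : ℕ, |V (n+1) 0 * x^(n+1)| ≤ |x| * q^n := by
    intro n
    rw [abs_mul, abs_pow]
    have h1 : |V (n+1) 0| ≤ (2/π)^n := by
      rw [abs_of_nonneg (V_nonneg _ ⟨le_refl _, zero_le_one⟩)]
      have := V_le n (Set.mem_Icc.2 ⟨le_refl (0:ℝ), zero_le_one⟩)
      simpa using this
    calc |V (n+1) 0| * |x|^(n+1) ≤ (2/π)^n * |x|^(n+1) := by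
          apply mul_le_mul_of_nonneg_right h1 (by positivity)
      _ = |x| * q^n := by
          rw [hq_def, mul_pow, pow_succ]
          ring
  have hsum_abs : Summable (fun n => |V n 0 * x^n|) := by
    apply (summable_nat_add_iff 1).mp
    apply Summable.of_nonneg_of_le (fun n => abs_nonneg _) hbound
    exact (summable_geometric_of_lt_one hq0 hq1).mul_left |x|
  have hsum : Summable (fun n => V n 0 * x^n) := hsum_abs.of_abs
  -- bound on Ff
  set M : ℝ := |(1 + Real.sin x)/Real.cos x| + 1 with hM_def
  have hM : ∀ t ∈ Set.Icc (0:ℝ) 1, |Rr x 0 t| ≤ M := by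
    intro t _
    have : Rr x 0 t = Ff x t := by simp [Rr]
    rw [this, hM_def]
    unfold Ff
    calc |(1 + Real.sin x)/Real.cos x * Real.cos (x*t) - Real.sin (x*t)|
        ≤ |(1 + Real.sin x)/Real.cos x * Real.cos (x*t)| + |Real.sin (x*t)| :=
          abs_sub _ _
      _ ≤ |(1 + Real.sin x)/Real.cos x| * 1 + 1 := by
          rw [abs_mul]
          gcongr
          · exact Real.abs_cos_le_one _
          · exact Real.abs_sin_le_one _
      _ = |(1 + Real.sin x)/Real.cos x| + 1 := by ring
  -- remainder tends to zero
  have hR0 : Filter.Tendsto (fun N => Rr x N 0) Filter.atTop (nhds 0) := by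
    rw [← Filter.tendsto_add_atTop_iff_nat 1]
    apply squeeze_zero_norm (f := fun N => Rr x (N+1) 0) (a := fun N => M * |x| * q^N)
    · intro N
      have := Rr_bound hx M hM N 0 ⟨le_refl _, zero_le_one⟩
      simpa using this
    · have : Filter.Tendsto (fun N : ℕ => q^N) Filter.atTop (nhds 0) :=
        tendsto_pow_atTop_nhds_zero_of_lt_one hq0 hq1
      simpa using this.const_mul (M * |x|)
  -- partial sums
  have hpartial : Filter.Tendsto (fun N => ∑ n ∈ Finset.range N, V n 0 * x^n)
      Filter.atTop (nhds (Ff x 0)) := by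
    have : ∀ N, ∑ n ∈ Finset.range N, V n 0 * x^n = Ff x 0 - Rr x N 0 := by
      intro N; simp [Rr]
    simp only [this]
    simpa using (tendsto_const_nhds (x := Ff x 0)).sub hR0
  have hL := hsum.hasSum
  have hL2 := hL.tendsto_sum_nat
  have hEq : (∑' n, V n 0 * x^n) = Ff x 0 := tendsto_nhds_unique hL2 hpartial
  rw [hEq] at hL
  have hFf0 : Ff x 0 = 1/Real.cos x + Real.tan x := by
    unfold Ff
    rw [Real.tan_eq_sin_div_cos]
    simp
    field_simp
  rwa [hFf0] at hL

lemma pathG_adj {n : ℕ} {i j : Fin n} :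
    (pathG n).Adj i j ↔ ((i:ℕ)+1 = j ∨ (j:ℕ)+1 = i) := by
  rw [pathG, SimpleGraph.fromRel_adj]
  constructor
  · rintro ⟨_, h⟩; exact h
  · intro h
    refine ⟨fun e => ?_, h⟩
    subst e
    omega

lemma pathG_adj_succ {n : ℕ} {i j : Fin n} :
    (pathG (n+1)).Adj i.succ j.succ ↔ (pathG n).Adj i j := by
  rw [pathG_adj, pathG_adj]
  simp only [Fin.val_succ]
  omega

def SS (n : ℕ) (t : ℝ) : Set (Fin n → ℝ) :=
  {x | (∀ i, x i ∈ Set.Icc (0:ℝ) 1) ∧ (∀ ⦃i j⦄, (pathG n).Adj i j → x i + x j ≤ 1)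
     ∧ ∀ h : 0 < n, t + x ⟨0, h⟩ ≤ 1}

lemma SS_closed (n : ℕ) (t : ℝ) : IsClosed (SS n t) := by
  have h1 : IsClosed {x : Fin n → ℝ | ∀ i, x i ∈ Set.Icc (0:ℝ) 1} := by
    rw [Set.setOf_forall]
    exact isClosed_iInter fun i => isClosed_Icc.preimage (continuous_apply i)
  have h2 : IsClosed {x : Fin n → ℝ | ∀ ⦃i j⦄, (pathG n).Adj i j → x i + x j ≤ 1} := by
    rw [Set.setOf_forall]
    refine isClosed_iInter fun i => ?_
    rw [Set.setOf_forall]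
    refine isClosed_iInter fun j => ?_
    rw [Set.setOf_forall]
    refine isClosed_iInter fun _ => ?_
    exact isClosed_le ((continuous_apply i).add (continuous_apply j)) continuous_const
  have h3 : IsClosed {x : Fin n → ℝ | ∀ h : 0 < n, t + x ⟨0, h⟩ ≤ 1} := by
    rw [Set.setOf_forall]
    refine isClosed_iInter fun h => ?_
    exact isClosed_le (continuous_const.add (continuous_apply _)) continuous_const
  have : SS n t = {x : Fin n → ℝ | ∀ i, x i ∈ Set.Icc (0:ℝ) 1}
      ∩ ({x | ∀ ⦃i j⦄, (pathG n).Adj i j → x i + x j ≤ 1}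
        ∩ {x | ∀ h : 0 < n, t + x ⟨0, h⟩ ≤ 1}) := by
    ext x
    simp [SS, Set.mem_inter_iff, and_assoc]
  rw [this]
  exact h1.inter (h2.inter h3)

lemma cons_mem_SS {n : ℕ} {t a : ℝ} {y : Fin n → ℝ} :
    Fin.cons a y ∈ SS (n+1) t ↔ (a ∈ Set.Icc (0:ℝ) 1 ∧ t + a ≤ 1) ∧ y ∈ SS n a := by
  constructor
  · rintro ⟨h1, h2, h3⟩
    refine ⟨⟨h1 0, h3 (Nat.succ_pos n)⟩, fun i => ?_, fun i j hij => ?_, fun hn => ?_⟩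
    · have := h1 i.succ
      rwa [Fin.cons_succ] at this
    · have := h2 (pathG_adj_succ.2 hij)
      rwa [Fin.cons_succ, Fin.cons_succ] at this
    · -- edge 0 -- 1 in pathG (n+1)
      have hadj : (pathG (n+1)).Adj 0 (Fin.succ ⟨0, hn⟩) := by
        rw [pathG_adj]
        left
        simp
      have := h2 hadj
      rwa [Fin.cons_zero, Fin.cons_succ] at this
  · rintro ⟨⟨ha, hta⟩, hy1, hy2, hy3⟩
    have key : ∀ i j : Fin (n+1), (i:ℕ)+1 = (j:ℕ) →
        (Fin.cons a y : Fin (n+1) → ℝ) i + (Fin.cons a y : Fin (n+1) → ℝ) j ≤ 1 := by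
      intro i j hij
      rcases Fin.eq_zero_or_eq_succ i with rfl | ⟨k, rfl⟩
      · have hij0 := hij
        simp only [Fin.val_zero] at hij0
        have hn : 0 < n := by
          have := j.isLt
          omega
        have hj : j = Fin.succ ⟨0, hn⟩ := by
          apply Fin.ext
          simp only [Fin.val_succ, Fin.mk_zero]
          omega
        rw [hj, Fin.cons_zero, Fin.cons_succ]
        exact hy3 hn
      · have hijk := hij
        simp only [Fin.val_succ] at hijk
        have hk1 : (k:ℕ)+1 < n := by
          have := j.isLt
          omega
        have hj : j = Fin.succ ⟨(k:ℕ)+1, hk1⟩ := by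
          apply Fin.ext
          simp only [Fin.val_succ]
          omega
        rw [hj, Fin.cons_succ, Fin.cons_succ]
        apply hy2
        rw [pathG_adj]
        left
        rfl
    refine ⟨fun i => ?_, fun i j hij => ?_, fun _ => ?_⟩
    · refine Fin.cases ?_ ?_ i
      · simpa using ha
      · intro k; simpa using hy1 k
    · rw [pathG_adj] at hij
      rcases hij with h | h
      · exact key i j h
      · rw [add_comm]; exact key j i h
    · exact hta

lemma volume_SS (n : ℕ) : ∀ t ∈ Set.Icc (0:ℝ) 1,
    volume (SS n t) = ENNReal.ofReal (V n t) := by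
  induction n with
  | zero =>
    intro t ht
    have h : SS 0 t = Set.univ :=
      Set.eq_univ_of_forall fun x =>
        ⟨fun i => i.elim0, fun i j _ => i.elim0, fun h => absurd h (by omega)⟩
    rw [h]
    have : V 0 t = 1 := rfl
    rw [this, ENNReal.ofReal_one, MeasureTheory.volume_pi]
    exact MeasureTheory.Measure.pi_empty_univ (fun _ : Fin 0 => (volume : Measure ℝ))
  | succ n ih =>
    intro t ht
    have hmp := ((measurePreserving_piFinSuccAbove
      (fun _ : Fin (n+1) => (volume : Measure ℝ)) 0).symm)
    set e := MeasurableEquiv.piFinSuccAbove (fun _ : Fin (n+1) => ℝ) 0 with he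
    have hSmeas : MeasurableSet (SS (n+1) t) := (SS_closed _ _).measurableSet
    have h1 : volume (SS (n+1) t)
        = ((volume : Measure ℝ).prod (Measure.pi fun _ : Fin n => (volume : Measure ℝ)))
          (e.symm ⁻¹' SS (n+1) t) := by
      rw [MeasureTheory.volume_pi]
      exact (hmp.measure_preimage hSmeas.nullMeasurableSet).symm
    have hfiber : ∀ a : ℝ,
        (Prod.mk a ⁻¹' (e.symm ⁻¹' SS (n+1) t))
          = {y : Fin n → ℝ | Fin.cons a y ∈ SS (n+1) t} := by
      intro a
      ext y
      simp only [Set.mem_preimage, Set.mem_setOf_eq, he,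
        MeasurableEquiv.piFinSuccAbove_symm_apply, Fin.insertNthEquiv,
        Equiv.coe_fn_mk, Fin.insertNth_zero]
      rfl
    have h2 : ((volume : Measure ℝ).prod (Measure.pi fun _ : Fin n => (volume : Measure ℝ)))
          (e.symm ⁻¹' SS (n+1) t)
        = ∫⁻ a, (Measure.pi fun _ : Fin n => (volume : Measure ℝ))
            {y : Fin n → ℝ | Fin.cons a y ∈ SS (n+1) t} := by
      rw [Measure.prod_apply (hSmeas.preimage e.symm.measurable)]
      simp_rw [hfiber]
    have h3 : ∀ a : ℝ,
        (Measure.pi fun _ : Fin n => (volume : Measure ℝ))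
            {y : Fin n → ℝ | Fin.cons a y ∈ SS (n+1) t}
        = Set.indicator (Set.Icc 0 (1-t)) (fun a => ENNReal.ofReal (V n a)) a := by
      intro a
      by_cases hc : a ∈ Set.Icc (0:ℝ) (1-t)
      · have hc1 : a ∈ Set.Icc (0:ℝ) 1 := ⟨hc.1, by linarith [hc.2, ht.1]⟩
        have hset : {y : Fin n → ℝ | Fin.cons a y ∈ SS (n+1) t} = SS n a := by
          ext y
          rw [Set.mem_setOf_eq, cons_mem_SS]
          simp only [Set.mem_Icc] at hc1
          have : t + a ≤ 1 := by linarith [hc.2]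
          simp [hc1.1, hc1.2, this, Set.mem_Icc]
        rw [hset, Set.indicator_of_mem hc, ← MeasureTheory.volume_pi]
        exact ih a hc1
      · have hset : {y : Fin n → ℝ | Fin.cons a y ∈ SS (n+1) t} = (∅ : Set (Fin n → ℝ)) := by
          ext y
          rw [Set.mem_setOf_eq, cons_mem_SS]
          simp only [Set.mem_empty_iff_false, iff_false]
          rintro ⟨⟨h4, h5⟩, -⟩
          simp only [Set.mem_Icc, not_and, not_le] at hc
          rcases lt_or_ge a 0 with h | h
          · exact absurd h4.1 (not_le.2 h)
          · linarith [hc h, h5]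
        rw [hset, Set.indicator_of_notMem hc]
        simp
    have h4 : (∫⁻ a, (Measure.pi fun _ : Fin n => (volume : Measure ℝ))
            {y : Fin n → ℝ | Fin.cons a y ∈ SS (n+1) t})
        = ∫⁻ a in Set.Icc 0 (1-t), ENNReal.ofReal (V n a) := by
      simp_rw [h3]
      rw [lintegral_indicator measurableSet_Icc]
    have h5 : (∫⁻ a in Set.Icc 0 (1-t), ENNReal.ofReal (V n a))
        = ∫⁻ a in Set.Ioc 0 (1-t), ENNReal.ofReal (V n a) :=
      (setLIntegral_congr Ioc_ae_eq_Icc).symm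
    have hInt : IntegrableOn (V n) (Set.Ioc 0 (1-t)) volume :=
      ((V_continuous n).integrableOn_Icc).mono_set Set.Ioc_subset_Icc_self
    have hnn : 0 ≤ᵐ[volume.restrict (Set.Ioc 0 (1-t))] V n := by
      refine (ae_restrict_iff' measurableSet_Ioc).2 (Filter.Eventually.of_forall ?_)
      intro a ha
      exact V_nonneg n ⟨le_of_lt ha.1, by linarith [ha.2, ht.1]⟩
    have h6 : (∫⁻ a in Set.Ioc 0 (1-t), ENNReal.ofReal (V n a))
        = ENNReal.ofReal (∫ a in Set.Ioc 0 (1-t), V n a) :=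
      (MeasureTheory.ofReal_integral_eq_lintegral_ofReal hInt hnn).symm
    have h7 : (∫ a in Set.Ioc 0 (1-t), V n a) = V (n+1) t := by
      have : V (n+1) t = ∫ s in (0:ℝ)..(1-t), V n s := rfl
      rw [this, intervalIntegral.integral_of_le (by linarith [ht.2])]
    rw [h1, h2, h4, h5, h6, h7]

lemma gvol_eq (n : ℕ) : gvol (pathG n) = V n 0 := by
  have hset : {x : Fin n → ℝ | (∀ i, x i ∈ Set.Icc (0:ℝ) 1) ∧
      ∀ ⦃i j⦄, (pathG n).Adj i j → x i + x j ≤ 1} = SS n 0 := by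
    ext x
    constructor
    · rintro ⟨h1, h2⟩
      exact ⟨h1, h2, fun h => by linarith [(h1 ⟨0, h⟩).2]⟩
    · rintro ⟨h1, h2, -⟩
      exact ⟨h1, h2⟩
  rw [gvol, hset, volume_SS n 0 ⟨le_refl _, zero_le_one⟩,
    ENNReal.toReal_ofReal (V_nonneg n ⟨le_refl _, zero_le_one⟩)]

/-- For `|x| < π/2`, `Σ_{n ≥ 0} vol(L_n)·xⁿ = sec x + tan x`. -/
theorem vol_path_genFun (x : ℝ) (hx : |x| < π / 2) :
    HasSum (fun n : ℕ => gvol (pathG n) * x ^ n) (1 / Real.cos x + Real.tan x) := by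
  have := hasSum_V hx
  simpa only [gvol_eq] using this
end

section
/- For every n ≥ 1, the volume of the graph polytope of the complete graph K_n equals 2^{1−n}, i.e. vol(K_n) = 2^{1−n}. -/
open MeasureTheory

open Set

/-- A diagonal hyperplane in `ℝ^n` has measure zero. -/
lemma hyperplane_null {n : ℕ} {i j : Fin n} (hij : i ≠ j) :
    volume {x : Fin n → ℝ | x i = x j} = 0 := by
  have h : {x : Fin n → ℝ | x i = x j}
      = (LinearMap.ker ((LinearMap.proj i : (Fin n → ℝ) →ₗ[ℝ] ℝ) - LinearMap.proj j) :
          Set (Fin n → ℝ)) := by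
    ext x
    simp [LinearMap.mem_ker, sub_eq_zero]
  rw [h]
  refine Measure.addHaar_submodule _ _ ?_
  intro htop
  have hm : (Pi.single i (1:ℝ)) ∈
      LinearMap.ker ((LinearMap.proj i : (Fin n → ℝ) →ₗ[ℝ] ℝ) - LinearMap.proj j) := by
    rw [htop]; trivial
  simp [LinearMap.mem_ker, sub_eq_zero, Pi.single_eq_same,
    Pi.single_eq_of_ne hij.symm] at hm

/-- Reflecting the `k`-th coordinate `x_k ↦ 1 - x_k` preserves volume. -/
lemma reflect_measurePreserving {n : ℕ} (k : Fin n) :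
    MeasurePreserving (fun (x : Fin n → ℝ) (i : Fin n) =>
      if i = k then 1 - x i else x i) volume volume := by
  have h1 : MeasurePreserving (fun t : ℝ => 1 - t) volume volume := by
    have := (measurePreserving_add_left (volume : Measure ℝ) 1).comp
      (Measure.measurePreserving_neg (volume : Measure ℝ))
    simpa [Function.comp_def, sub_eq_add_neg] using this
  have := volume_preserving_pi
    (f := fun (i : Fin n) => fun t : ℝ => if i = k then 1 - t else t)
    (fun i => by
      by_cases h : i = k
      · simpa [h] using h1
      · simpa [h, Function.id_def] using MeasurePreserving.id (volume : Measure ℝ))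
  convert this using 1

/-- The volume of the graph polytope of the complete graph `K_n` is `2^{1-n}`. -/
theorem vol_complete (n : ℕ) (hn : 1 ≤ n) :
    gvol (⊤ : SimpleGraph (Fin n)) = (2 : ℝ) ^ ((1 : ℤ) - (n : ℤ)) := by
  classical
  haveI : Nonempty (Fin n) := ⟨⟨0, hn⟩⟩
  set S : Set (Fin n → ℝ) := {x | (∀ i, x i ∈ Set.Icc (0:ℝ) 1) ∧
      ∀ ⦃i j⦄, (⊤ : SimpleGraph (Fin n)).Adj i j → x i + x j ≤ 1} with hS_def
  set A0 : Set (Fin n → ℝ) := Set.pi Set.univ (fun _ => Icc (0:ℝ) (1/2)) with hA0_def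
  set A : Fin n → Set (Fin n → ℝ) := fun k =>
    {x | x k ∈ Ioc (1/2 : ℝ) 1 ∧ ∀ i, i ≠ k → x i ∈ Icc (0:ℝ) (1 - x k)} with hA_def
  set B : Fin n → Set (Fin n → ℝ) := fun k =>
    {y | y k ∈ Ico (0:ℝ) (1/2) ∧ ∀ i, i ≠ k → y i ∈ Icc (0:ℝ) (y k)} with hB_def
  set D : Fin n → Set (Fin n → ℝ) := fun k =>
    B k ∩ {y | ∀ i, i < k → y i ≠ y k} with hD_def
  set Box : Set (Fin n → ℝ) := Set.pi Set.univ (fun _ => Ico (0:ℝ) (1/2)) with hBox_def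
  -- measurability
  have mA0 : MeasurableSet A0 := MeasurableSet.univ_pi fun _ => measurableSet_Icc
  have mBox : MeasurableSet Box := MeasurableSet.univ_pi fun _ => measurableSet_Ico
  have mA : ∀ k, MeasurableSet (A k) := by
    intro k
    have : A k = ({x : Fin n → ℝ | x k ∈ Ioc (1/2 : ℝ) 1} ∩
        ⋂ i, {x : Fin n → ℝ | i ≠ k → x i ∈ Icc (0:ℝ) (1 - x k)}) := by
      ext x; simp [hA_def]
    rw [this]
    refine MeasurableSet.inter ((measurable_pi_apply k) measurableSet_Ioc) ?_
    refine MeasurableSet.iInter fun i => ?_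
    by_cases h : i = k
    · simp [h]
    · have : {x : Fin n → ℝ | i ≠ k → x i ∈ Icc (0:ℝ) (1 - x k)}
          = {x : Fin n → ℝ | 0 ≤ x i} ∩ {x | x i ≤ 1 - x k} := by
        ext x; simp [h]
      rw [this]
      exact (measurableSet_le measurable_const (measurable_pi_apply i)).inter
        (measurableSet_le (measurable_pi_apply i)
          (measurable_const.sub (measurable_pi_apply k)))
  have mB : ∀ k, MeasurableSet (B k) := by
    intro k
    have : B k = ({y : Fin n → ℝ | y k ∈ Ico (0:ℝ) (1/2)} ∩
        ⋂ i, {y : Fin n → ℝ | i ≠ k → y i ∈ Icc (0:ℝ) (y k)}) := by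
      ext y; simp [hB_def]
    rw [this]
    refine MeasurableSet.inter ((measurable_pi_apply k) measurableSet_Ico) ?_
    refine MeasurableSet.iInter fun i => ?_
    by_cases h : i = k
    · simp [h]
    · have : {y : Fin n → ℝ | i ≠ k → y i ∈ Icc (0:ℝ) (y k)}
          = {y : Fin n → ℝ | 0 ≤ y i} ∩ {y | y i ≤ y k} := by
        ext y; simp [h]
      rw [this]
      exact (measurableSet_le measurable_const (measurable_pi_apply i)).inter
        (measurableSet_le (measurable_pi_apply i) (measurable_pi_apply k))
  have mD : ∀ k, MeasurableSet (D k) := by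
    intro k
    refine (mB k).inter ?_
    have : {y : Fin n → ℝ | ∀ i, i < k → y i ≠ y k}
        = ⋂ i, {y : Fin n → ℝ | i < k → y i ≠ y k} := by
      ext y; simp
    rw [this]
    refine MeasurableSet.iInter fun i => ?_
    by_cases h : i < k
    · have : {y : Fin n → ℝ | i < k → y i ≠ y k} = {y : Fin n → ℝ | y i = y k}ᶜ := by
        ext y; simp [h]
      rw [this]
      exact (measurableSet_eq_fun (measurable_pi_apply i) (measurable_pi_apply k)).compl
    · have : {y : Fin n → ℝ | i < k → y i ≠ y k} = Set.univ := by
        ext y; simp [h]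
      rw [this]; exact MeasurableSet.univ
  -- the decomposition of S
  have hS : S = A0 ∪ ⋃ k, A k := by
    ext x
    constructor
    · rintro ⟨hx1, hx2⟩
      by_cases hall : ∀ i, x i ≤ 1/2
      · left
        intro i _
        exact ⟨(hx1 i).1, hall i⟩
      · right
        push_neg at hall
        obtain ⟨k, hk⟩ := hall
        refine Set.mem_iUnion.2 ⟨k, ⟨⟨hk, (hx1 k).2⟩, fun i hik => ?_⟩⟩
        have hadj : (⊤ : SimpleGraph (Fin n)).Adj i k := by simpa using hik
        exact ⟨(hx1 i).1, by linarith [hx2 hadj]⟩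
    · rintro (h | h)
      · have h' : ∀ i, x i ∈ Icc (0:ℝ) (1/2) := fun i => h i (Set.mem_univ i)
        refine ⟨fun i => ⟨(h' i).1, le_trans (h' i).2 (by norm_num)⟩, fun i j _ => ?_⟩
        linarith [(h' i).2, (h' j).2]
      · obtain ⟨k, ⟨hk1, hk2⟩⟩ := Set.mem_iUnion.1 h
        have hxk1 : (1/2 : ℝ) < x k := hk1.1
        have hxk2 : x k ≤ 1 := hk1.2
        have hi : ∀ i, i ≠ k → 0 ≤ x i ∧ x i ≤ 1 - x k := fun i hik =>
          ⟨(hk2 i hik).1, (hk2 i hik).2⟩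
        refine ⟨fun i => ?_, fun i j hij => ?_⟩
        · by_cases hik : i = k
          · subst hik; exact ⟨by linarith, hxk2⟩
          · exact ⟨(hi i hik).1, by linarith [(hi i hik).2]⟩
        · have hij' : i ≠ j := hij.ne
          by_cases hik : i = k
          · subst hik
            have := (hi j (Ne.symm hij')).2
            linarith
          · by_cases hjk : j = k
            · subst hjk
              have := (hi i hik).2
              linarith
            · have h1 := (hi i hik).2
              have h2 := (hi j hjk).2
              linarith
  -- Disjointness
  have hdisj0 : Disjoint A0 (⋃ k, A k) := by
    rw [Set.disjoint_left]
    rintro x hx0 hx1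
    obtain ⟨k, hk⟩ := Set.mem_iUnion.1 hx1
    have h1 : x k ≤ 1/2 := (hx0 k (Set.mem_univ k)).2
    have h2 : (1/2 : ℝ) < x k := hk.1.1
    linarith
  have hdisjA : Pairwise (Function.onFun Disjoint A) := by
    intro k j hkj
    rw [Function.onFun, Set.disjoint_left]
    rintro x hxk hxj
    have h1 : (1/2 : ℝ) < x k := hxk.1.1
    have h2 : (1/2 : ℝ) < x j := hxj.1.1
    have h3 : x k ≤ 1 - x j := (hxj.2 k hkj).2
    linarith
  have hdisjD : Pairwise (Function.onFun Disjoint D) := by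
    intro k j hkj
    rw [Function.onFun, Set.disjoint_left]
    rintro y ⟨hyk, hyk'⟩ ⟨hyj, hyj'⟩
    rcases lt_or_gt_of_ne hkj with h | h
    · have h1 : y k ≤ y j := (hyj.2 k hkj).2
      have h2 : y j ≤ y k := (hyk.2 j (Ne.symm hkj)).2
      exact hyj' k h (le_antisymm h1 h2)
    · have h1 : y k ≤ y j := (hyj.2 k hkj).2
      have h2 : y j ≤ y k := (hyk.2 j (Ne.symm hkj)).2
      exact hyk' j h (le_antisymm h2 h1)
  -- volume of A k equals volume of B k via reflection
  have hAB : ∀ k, volume (A k) = volume (B k) := by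
    intro k
    have hpre : (fun (x : Fin n → ℝ) (i : Fin n) => if i = k then 1 - x i else x i) ⁻¹' (B k)
        = A k := by
      ext x
      simp only [Set.mem_preimage, hB_def, hA_def, Set.mem_setOf_eq, eq_self_iff_true,
        if_true, Set.mem_Ico, Set.mem_Ioc, Set.mem_Icc]
      constructor
      · rintro ⟨⟨h1, h2⟩, h3⟩
        refine ⟨⟨by linarith, by linarith⟩, fun i hik => ?_⟩
        have := h3 i hik
        rw [if_neg hik] at this
        exact this
      · rintro ⟨⟨h1, h2⟩, h3⟩
        refine ⟨⟨by linarith, by linarith⟩, fun i hik => ?_⟩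
        rw [if_neg hik]
        exact h3 i hik
    rw [← hpre]
    exact (reflect_measurePreserving k).measure_preimage (mB k).nullMeasurableSet
  -- volume of B k equals volume of D k
  have hBD : ∀ k, volume (B k) = volume (D k) := by
    intro k
    have hnull : volume (B k \ D k) = 0 := by
      have hsub2 : B k \ D k ⊆ ⋃ (i : Fin n), ⋃ (_ : i ≠ k), {y : Fin n → ℝ | y i = y k} := by
        rintro y ⟨hyB, hyD⟩
        simp only [hD_def, Set.mem_inter_iff, Set.mem_setOf_eq, not_and, not_forall] at hyD
        obtain ⟨i, hik, hyi⟩ := hyD hyB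
        rw [not_not] at hyi
        exact Set.mem_iUnion.2 ⟨i, Set.mem_iUnion.2 ⟨Fin.ne_of_lt hik, hyi⟩⟩
      exact measure_mono_null hsub2
        (measure_iUnion_null fun i => measure_iUnion_null fun hik => hyperplane_null hik)
    have hsub : D k ⊆ B k := Set.inter_subset_left
    have hle : volume (B k) ≤ volume (D k) := by
      calc volume (B k) = volume (D k ∪ (B k \ D k)) := by
            rw [Set.union_diff_cancel hsub]
        _ ≤ volume (D k) + volume (B k \ D k) := measure_union_le _ _
        _ = volume (D k) := by rw [hnull, add_zero]
    exact le_antisymm hle (measure_mono hsub)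
  -- the D k cover the box
  have hDBox : (⋃ k, D k) = Box := by
    ext y
    constructor
    · rintro hy
      obtain ⟨k, ⟨⟨hk1, hk2⟩, _⟩⟩ := Set.mem_iUnion.1 hy
      intro i _
      by_cases hik : i = k
      · subst hik; exact ⟨hk1.1, hk1.2⟩
      · have := hk2 i hik
        exact ⟨this.1, lt_of_le_of_lt this.2 hk1.2⟩
    · intro hy
      have hy' : ∀ i, y i ∈ Ico (0:ℝ) (1/2) := fun i => hy i (Set.mem_univ i)
      -- pick the least index attaining the maximum
      set T : Finset (Fin n) := Finset.univ.filter (fun k => ∀ i, y i ≤ y k) with hT_def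
      have hTne : T.Nonempty := by
        obtain ⟨k, hk⟩ := Finite.exists_max y
        exact ⟨k, by simp [hT_def, hk]⟩
      set k : Fin n := T.min' hTne with hk_def
      have hkmem : ∀ i, y i ≤ y k := by
        have := T.min'_mem hTne
        simpa [hT_def] using this
      refine Set.mem_iUnion.2 ⟨k, ⟨⟨hy' k, fun i _ => ⟨(hy' i).1, hkmem i⟩⟩, ?_⟩⟩
      intro i hik hyik
      have hiT : i ∈ T := by
        simp only [hT_def, Finset.mem_filter, Finset.mem_univ, true_and]
        intro j
        rw [hyik]
        exact hkmem j
      exact absurd (T.min'_le i hiT) (not_le.2 hik)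
  -- put it together
  have hvol : volume S = volume A0 + volume Box := by
    rw [hS, measure_union hdisj0 (MeasurableSet.iUnion mA),
      measure_iUnion hdisjA mA]
    congr 1
    rw [← hDBox, measure_iUnion hdisjD mD]
    exact tsum_congr fun k => (hAB k).trans (hBD k)
  have hhalf : volume (Icc (0:ℝ) (1/2)) = ENNReal.ofReal (1/2) := by
    rw [Real.volume_Icc]; norm_num
  have hhalf' : volume (Ico (0:ℝ) (1/2)) = ENNReal.ofReal (1/2) := by
    rw [Real.volume_Ico]; norm_num
  have hvA0 : volume A0 = ENNReal.ofReal (1/2) ^ n := by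
    rw [hA0_def, volume_pi_pi]
    simp [hhalf]
  have hvBox : volume Box = ENNReal.ofReal (1/2) ^ n := by
    rw [hBox_def, volume_pi_pi]
    simp [hhalf']
  have hfin : ENNReal.ofReal (1/2) ^ n ≠ ⊤ := by
    exact ENNReal.pow_ne_top ENNReal.ofReal_ne_top
  rw [gvol, ← hS_def, hvol, hvA0, hvBox,
    ENNReal.toReal_add hfin hfin, ENNReal.toReal_pow,
    ENNReal.toReal_ofReal (by norm_num : (0:ℝ) ≤ 1/2)]
  rw [div_pow, one_pow, ← add_div, zpow_sub₀ (two_ne_zero), zpow_one, zpow_natCast]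
  norm_num
end

section
/- For all positive integers s and t, the volume of the graph polytope of the complete bipartite graph K_{s,t} equals 1/C(s+t, s), i.e. vol(K_{s,t}) = 1/C(s+t,s). -/
open MeasureTheory ENNReal

section Aux

variable {n : Type*} [Fintype n] [DecidableEq n]

/-- The set of points of the unit cube whose coordinates in `T` are all
at most the coordinates outside `T`. -/
def Bset (T : Finset n) : Set (n → ℝ) :=
  {w | (∀ k, w k ∈ Set.Icc (0:ℝ) 1) ∧ ∀ i ∈ T, ∀ j ∉ T, w i ≤ w j}

lemma isClosed_Bset (T : Finset n) : IsClosed (Bset T) := by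
  have h1 : IsClosed {w : n → ℝ | ∀ k, w k ∈ Set.Icc (0:ℝ) 1} := by
    have : {w : n → ℝ | ∀ k, w k ∈ Set.Icc (0:ℝ) 1}
        = ⋂ k, (fun w : n → ℝ => w k) ⁻¹' Set.Icc (0:ℝ) 1 := by
      ext w; simp
    rw [this]
    exact isClosed_iInter fun k => isClosed_Icc.preimage (continuous_apply k)
  have h2 : IsClosed {w : n → ℝ | ∀ i ∈ T, ∀ j ∉ T, w i ≤ w j} := by
    have : {w : n → ℝ | ∀ i ∈ T, ∀ j ∉ T, w i ≤ w j}
        = ⋂ i ∈ T, ⋂ j ∈ Tᶜ, {w : n → ℝ | w i ≤ w j} := by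
      ext w; simp [Finset.mem_compl]
    rw [this]
    exact isClosed_biInter fun i _ => isClosed_biInter fun j _ =>
      isClosed_le (continuous_apply i) (continuous_apply j)
  exact h1.inter h2

lemma null_pair (i j : n) (hij : i ≠ j) :
    (volume : Measure (n → ℝ)) {w | w i = w j} = 0 := by
  classical
  set e := MeasurableEquiv.piEquivPiSubtypeProd (fun _ : n => ℝ) (fun k => k ≠ j) with he
  have hmp : MeasurePreserving e volume volume :=
    volume_preserving_piEquivPiSubtypeProd (fun _ : n => ℝ) (fun k => k ≠ j)
  set S : Set (({k : n // k ≠ j} → ℝ) × ({k : n // ¬ k ≠ j} → ℝ)) :=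
    {p | p.1 ⟨i, hij⟩ = p.2 ⟨j, not_not_intro rfl⟩} with hS
  have hSm : MeasurableSet S := by
    apply measurableSet_eq_fun
    · exact (measurable_pi_apply _).comp measurable_fst
    · exact (measurable_pi_apply _).comp measurable_snd
  have hpre : {w : n → ℝ | w i = w j} = e ⁻¹' S := rfl
  rw [hpre, hmp.measure_preimage hSm.nullMeasurableSet]
  rw [MeasureTheory.Measure.volume_eq_prod, Measure.prod_apply hSm]
  have : ∀ x : {k : n // k ≠ j} → ℝ,
      (volume : Measure ({k : n // ¬ k ≠ j} → ℝ)) (Prod.mk x ⁻¹' S) = 0 := by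
    intro x
    have hsub : Prod.mk x ⁻¹' S ⊆ {v : {k : n // ¬ k ≠ j} → ℝ |
        v ⟨j, not_not_intro rfl⟩ = x ⟨i, hij⟩} := by
      intro v hv; exact hv.symm
    refine measure_mono_null hsub ?_
    rw [volume_pi]
    exact Measure.pi_hyperplane _ _ _
  simp [this]

lemma measurePreserving_comp_perm (σ : Equiv.Perm n) :
    MeasurePreserving (fun w : n → ℝ => w ∘ σ) volume volume := by
  have h := (volume_measurePreserving_piCongrLeft (fun _ : n => ℝ) σ).symm
    (MeasurableEquiv.piCongrLeft (fun _ : n => ℝ) σ)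
  have hfun : ⇑(MeasurableEquiv.piCongrLeft (fun _ : n => ℝ) σ).symm
      = fun w : n → ℝ => w ∘ σ := by
    ext w k
    simp [MeasurableEquiv.piCongrLeft, Equiv.piCongrLeft_symm_apply]
  rwa [hfun] at h

lemma preimage_comp_perm (σ : Equiv.Perm n) (T : Finset n) :
    (fun w : n → ℝ => w ∘ σ) ⁻¹' Bset T = Bset (T.image σ) := by
  ext w
  simp only [Bset, Set.mem_preimage, Set.mem_setOf_eq, Function.comp]
  constructor
  · rintro ⟨h1, h2⟩
    refine ⟨fun k => by simpa using h1 (σ.symm k), ?_⟩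
    intro i hi j hj
    obtain ⟨i₀, hi₀, rfl⟩ := Finset.mem_image.mp hi
    have hj₀ : σ.symm j ∉ T := fun h =>
      hj (Finset.mem_image.mpr ⟨_, h, by simp⟩)
    simpa using h2 i₀ hi₀ (σ.symm j) hj₀
  · rintro ⟨h1, h2⟩
    refine ⟨fun k => h1 (σ k), ?_⟩
    intro i hi j hj
    refine h2 (σ i) (Finset.mem_image_of_mem _ hi) (σ j) fun h => hj ?_
    obtain ⟨j₀, hj₀, he⟩ := Finset.mem_image.mp h
    rwa [← σ.injective he]

lemma volume_Bset_eq (L T : Finset n) (h : L.card = T.card) :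
    volume (Bset T) = volume (Bset L) := by
  classical
  let e1 : {x // x ∈ L} ≃ {x // x ∈ T} := Finset.equivOfCardEq h
  let σ : Equiv.Perm n := e1.extendSubtype
  have himg : L.image σ = T := by
    apply Finset.eq_of_subset_of_card_le
    · intro x hx
      obtain ⟨y, hy, rfl⟩ := Finset.mem_image.mp hx
      exact e1.extendSubtype_mem y hy
    · rw [Finset.card_image_of_injective _ σ.injective, ← h]
  have := (measurePreserving_comp_perm σ).measure_preimage
    (isClosed_Bset L).measurableSet.nullMeasurableSet
  rw [preimage_comp_perm, himg] at this
  exact this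

end Aux

/-- The volume of the graph polytope of the complete bipartite graph `K_{s,t}`
is `1 / C(s+t, s)`. -/
theorem vol_completeBipartite (s t : ℕ) (hs : 1 ≤ s) (ht : 1 ≤ t) :
    gvol (completeBipartiteGraph (Fin s) (Fin t)) = 1 / ((s + t).choose s : ℝ) := by
  classical
  set ι := (Fin s ⊕ Fin t)
  set P : Finset (Finset ι) := Finset.powersetCard s Finset.univ with hP
  set L : Finset ι := Finset.univ.map ⟨Sum.inl, Sum.inl_injective⟩ with hLdef
  have hLcard : L.card = s := by simp [hLdef]
  have hmemL : ∀ k : ι, k ∈ L ↔ k.isLeft := by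
    rintro (a | b) <;> simp [hLdef]
  have hcardι : Fintype.card ι = s + t := by simp [ι]
  -- Step 1: every Bset T for T of card s has the same volume as Bset L
  have key : ∀ T ∈ P, volume (Bset T) = volume (Bset L) := by
    intro T hT
    have hTc : T.card = s := (Finset.mem_powersetCard_univ.mp hT)
    exact volume_Bset_eq L T (by rw [hLcard, hTc])
  -- Step 2: the union of the Bset T over T ∈ P is the cube
  have hunion : (⋃ T ∈ P, Bset T) = {w : ι → ℝ | ∀ k, w k ∈ Set.Icc (0:ℝ) 1} := by
    apply Set.Subset.antisymm
    · refine Set.iUnion₂_subset fun T _ => fun w hw => hw.1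
    · intro w hw
      obtain ⟨T, hT, hmin⟩ := Finset.exists_min_image P (fun T => ∑ i ∈ T, w i)
        (Finset.powersetCard_nonempty.mpr (by rw [Finset.card_univ, hcardι]; omega))
      refine Set.mem_biUnion hT ⟨hw, ?_⟩
      intro i hi j hj
      by_contra hlt
      push_neg at hlt
      have hTc : T.card = s := Finset.mem_powersetCard_univ.mp hT
      have hji : j ∉ T.erase i := fun h => hj (Finset.mem_of_mem_erase h)
      have hT'c : (insert j (T.erase i)).card = s := by
        rw [Finset.card_insert_of_notMem hji, Finset.card_erase_of_mem hi]
        have : 1 ≤ T.card := Finset.card_pos.mpr ⟨i, hi⟩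
        omega
      have hT' : insert j (T.erase i) ∈ P := Finset.mem_powersetCard_univ.mpr hT'c
      have hsum : ∑ k ∈ insert j (T.erase i), w k < ∑ k ∈ T, w k := by
        rw [Finset.sum_insert hji, Finset.sum_erase_eq_sub hi]
        linarith
      exact absurd (hmin _ hT') (not_le.mpr hsum)
  -- Step 3: pairwise a.e. disjointness
  have hdisj : (↑P : Set (Finset ι)).Pairwise (Function.onFun (AEDisjoint volume) Bset) := by
    intro T hT T' hT' hne
    have hTc : T.card = s := Finset.mem_powersetCard_univ.mp hT
    have hT'c : T'.card = s := Finset.mem_powersetCard_univ.mp hT'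
    have h1 : (T \ T').Nonempty := by
      rw [Finset.sdiff_nonempty]
      intro hsub
      exact hne (Finset.eq_of_subset_of_card_le hsub (by omega))
    have h2 : (T' \ T).Nonempty := by
      rw [Finset.sdiff_nonempty]
      intro hsub
      exact hne (Finset.eq_of_subset_of_card_le hsub (by omega)).symm
    obtain ⟨i, hi⟩ := h1
    obtain ⟨j, hj⟩ := h2
    rw [Finset.mem_sdiff] at hi hj
    have hij : i ≠ j := fun h => hi.2 (h ▸ hj.1)
    have hsub : Bset T ∩ Bset T' ⊆ {w : ι → ℝ | w i = w j} := by
      rintro w ⟨⟨_, hw1⟩, ⟨_, hw2⟩⟩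
      exact le_antisymm (hw1 i hi.1 j hj.2) (hw2 j hj.1 i hi.2)
    exact measure_mono_null hsub (null_pair i j hij)
  -- Step 4: sum of volumes is 1
  have hvolcube : volume {w : ι → ℝ | ∀ k, w k ∈ Set.Icc (0:ℝ) 1} = 1 := by
    have : {w : ι → ℝ | ∀ k, w k ∈ Set.Icc (0:ℝ) 1}
        = Set.pi Set.univ (fun _ : ι => Set.Icc (0:ℝ) 1) := by
      ext w; rw [Set.mem_setOf_eq, Set.mem_univ_pi]
    rw [this, volume_pi_pi]
    simp [Real.volume_Icc]
  have hsum : ∑ T ∈ P, volume (Bset T) = 1 := by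
    rw [← measure_biUnion_finset₀ hdisj
      (fun T _ => (isClosed_Bset T).measurableSet.nullMeasurableSet), hunion, hvolcube]
  have hPcard : P.card = (s + t).choose s := by
    rw [hP, Finset.card_powersetCard, Finset.card_univ, hcardι]
  have hmain : ((s + t).choose s : ℝ≥0∞) * volume (Bset L) = 1 := by
    calc ((s + t).choose s : ℝ≥0∞) * volume (Bset L)
        = ∑ _T ∈ P, volume (Bset L) := by
          rw [Finset.sum_const, hPcard, nsmul_eq_mul]
      _ = ∑ T ∈ P, volume (Bset T) := (Finset.sum_congr rfl key).symm
      _ = 1 := hsum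
  -- Step 5: relate the graph polytope to Bset L via the reflection map
  let f : ι → ℝ → ℝ := Sum.elim (fun _ => (id : ℝ → ℝ)) (fun _ x => 1 - x)
  have hf : ∀ k : ι, MeasurePreserving (f k) volume volume := by
    rintro (a | b)
    · exact MeasurePreserving.id _
    · have h1 : MeasurePreserving (fun x : ℝ => -x) volume volume :=
        ⟨measurable_neg, Measure.map_neg_eq_self _⟩
      have h2 : MeasurePreserving (fun x : ℝ => 1 + x) volume volume :=
        measurePreserving_add_left volume 1
      have heq : f (Sum.inr b) = (fun x : ℝ => 1 + x) ∘ (fun x : ℝ => -x) := by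
        funext x; simp [f, sub_eq_add_neg]
      rw [heq]
      exact h2.comp h1
  have hR : MeasurePreserving (fun w : ι → ℝ => fun k => f k (w k)) volume volume := by
    have := measurePreserving_pi (fun _ : ι => (volume : Measure ℝ))
      (fun _ => (volume : Measure ℝ)) hf
    rwa [← volume_pi] at this
  have hSpre : {x : ι → ℝ | (∀ i, x i ∈ Set.Icc (0:ℝ) 1) ∧
      ∀ ⦃i j⦄, (completeBipartiteGraph (Fin s) (Fin t)).Adj i j → x i + x j ≤ 1}
      = (fun w : ι → ℝ => fun k => f k (w k)) ⁻¹' Bset L := by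
    ext w
    simp only [Set.mem_preimage, Bset, Set.mem_setOf_eq]
    constructor
    · rintro ⟨h1, h2⟩
      constructor
      · rintro (a | b)
        · simpa [f] using h1 (Sum.inl a)
        · have := h1 (Sum.inr b)
          simp only [Set.mem_Icc] at this ⊢
          constructor <;> simp [f] <;> linarith [this.1, this.2]
      · intro i hi j hj
        rw [hmemL] at hi hj
        obtain ⟨a, rfl⟩ := Sum.isLeft_iff.mp hi
        obtain ⟨b, rfl⟩ := Sum.isRight_iff.mp (Sum.not_isLeft.mp hj)
        have := h2 (show (completeBipartiteGraph (Fin s) (Fin t)).Adj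
          (Sum.inl a) (Sum.inr b) by simp [completeBipartiteGraph])
        simp only [f, Sum.elim_inl, Sum.elim_inr, id_eq]
        linarith
    · rintro ⟨h1, h2⟩
      constructor
      · rintro (a | b)
        · simpa [f] using h1 (Sum.inl a)
        · have := h1 (Sum.inr b)
          simp only [Set.mem_Icc, f, Sum.elim_inr] at this ⊢
          constructor <;> linarith [this.1, this.2]
      · intro i j hadj
        rcases hadj with ⟨hi, hj⟩ | ⟨hi, hj⟩
        · obtain ⟨a, rfl⟩ := Sum.isLeft_iff.mp hi
          obtain ⟨b, rfl⟩ := Sum.isRight_iff.mp hj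
          have := h2 (Sum.inl a) ((hmemL _).mpr rfl) (Sum.inr b)
            (fun h => by simpa using (hmemL _).mp h)
          simp only [f, Sum.elim_inl, Sum.elim_inr, id_eq] at this
          linarith
        · obtain ⟨a, rfl⟩ := Sum.isLeft_iff.mp hj
          obtain ⟨b, rfl⟩ := Sum.isRight_iff.mp hi
          have := h2 (Sum.inl a) ((hmemL _).mpr rfl) (Sum.inr b)
            (fun h => by simpa using (hmemL _).mp h)
          simp only [f, Sum.elim_inl, Sum.elim_inr, id_eq] at this
          linarith
  have hvol : volume {x : ι → ℝ | (∀ i, x i ∈ Set.Icc (0:ℝ) 1) ∧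
      ∀ ⦃i j⦄, (completeBipartiteGraph (Fin s) (Fin t)).Adj i j → x i + x j ≤ 1}
      = volume (Bset L) := by
    rw [hSpre]
    exact hR.measure_preimage (isClosed_Bset L).measurableSet.nullMeasurableSet
  -- Step 6: conclude
  have hchoose : (0:ℝ) < ((s + t).choose s : ℝ) := by
    exact_mod_cast Nat.choose_pos (by omega)
  have htoReal : ((s + t).choose s : ℝ) * (volume (Bset L)).toReal = 1 := by
    have := congrArg ENNReal.toReal hmain
    rwa [ENNReal.toReal_mul, ENNReal.toReal_natCast, ENNReal.toReal_one] at this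
  rw [gvol, hvol]
  field_simp
  linarith [htoReal]
end

section
/- Let m, n be positive integers and let 1/2 ≤ c ≤ 1. Then the sliced volume of the graph polytope of the complete bipartite graph K_{m,n} is vol(K_{m,n}, c) = c^n·(1−c)^m + m · Σ_{i=0}^{n} C(n,i)·(−1)^i·(c^{m+i} − (1−c)^{m+i})/(m+i). -/
open MeasureTheory
open Set

section aux

lemma one_sub_pow_expand (t : ℝ) (n : ℕ) :
    (1 - t)^n = ∑ i ∈ Finset.range (n+1), (n.choose i : ℝ) * (-1)^i * t^i := by
  rw [sub_eq_add_neg, add_comm, add_pow]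
  refine Finset.sum_congr rfl fun i hi => ?_
  rw [neg_pow]; ring



lemma lint_pow_Icc (m : ℕ) (u : ℝ) :
    ∫⁻ s in Icc (0:ℝ) u, ENNReal.ofReal ((m+1) * s^m) = ENNReal.ofReal u ^ (m+1) := by
  rcases lt_or_ge u 0 with hu | hu
  · rw [Icc_eq_empty (by linarith), Measure.restrict_empty, lintegral_zero_measure,
      ENNReal.ofReal_of_nonpos hu.le, zero_pow (Nat.succ_ne_zero m)]
  · rw [← ofReal_integral_eq_lintegral_ofReal]
    · rw [integral_Icc_eq_integral_Ioc, ← intervalIntegral.integral_of_le hu,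
        intervalIntegral.integral_const_mul, integral_pow, ← ENNReal.ofReal_pow hu]
      congr 1
      field_simp
      simp
    · exact (continuous_const.mul (continuous_pow m)).integrableOn_Icc
    · filter_upwards [ae_restrict_mem measurableSet_Icc] with s hs
      exact mul_nonneg (by positivity) (pow_nonneg hs.1 m)

lemma map_sup_box (m : ℕ) (c : ℝ) :
    Measure.map (fun x : Fin (m+1) → ℝ => ⨆ i, x i)
      (volume.restrict (univ.pi fun _ => Icc (0:ℝ) c)) =
    volume.withDensity ((Icc (0:ℝ) c).indicator fun t => ENNReal.ofReal ((m+1) * t^m)) := by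
  have hsup : Measurable (fun x : Fin (m+1) → ℝ => ⨆ i, x i) :=
    Measurable.iSup (fun i => measurable_pi_apply i)
  have hbox : MeasurableSet (univ.pi fun _ : Fin (m+1) => Icc (0:ℝ) c) :=
    MeasurableSet.univ_pi fun _ => measurableSet_Icc
  haveI : IsFiniteMeasure (Measure.map (fun x : Fin (m+1) → ℝ => ⨆ i, x i)
      (volume.restrict (univ.pi fun _ => Icc (0:ℝ) c))) := by
    constructor
    rw [Measure.map_apply hsup MeasurableSet.univ, Set.preimage_univ,
      Measure.restrict_apply MeasurableSet.univ, Set.univ_inter, volume_pi_pi]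
    simp [Real.volume_Icc]
  refine Measure.ext_of_Iic _ _ fun t => ?_
  rw [Measure.map_apply hsup measurableSet_Iic,
    Measure.restrict_apply (hsup measurableSet_Iic)]
  have hset : (fun x : Fin (m+1) → ℝ => ⨆ i, x i) ⁻¹' Iic t ∩
      (univ.pi fun _ => Icc (0:ℝ) c) = univ.pi fun _ => Icc (0:ℝ) (min c t) := by
    ext x
    simp only [mem_inter_iff, mem_preimage, mem_Iic, mem_pi, mem_univ, forall_true_left,
      mem_Icc, le_min_iff]
    constructor
    · rintro ⟨h1, h2⟩ i
      exact ⟨(h2 i).1, (h2 i).2, le_trans (le_ciSup (Set.Finite.bddAbove (finite_range x)) i) h1⟩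
    · intro h
      exact ⟨ciSup_le fun i => (h i).2.2, fun i => ⟨(h i).1, (h i).2.1⟩⟩
  rw [hset, volume_pi_pi]
  simp only [Real.volume_Icc, sub_zero, Finset.prod_const, Finset.card_univ, Fintype.card_fin]
  rw [withDensity_apply _ measurableSet_Iic]
  rw [lintegral_indicator measurableSet_Icc _,
    Measure.restrict_restrict measurableSet_Icc]
  have : Icc (0:ℝ) c ∩ Iic t = Icc 0 (min c t) := by
    ext s; simp [mem_Icc, le_min_iff, and_assoc]
  rw [this, lint_pow_Icc]

lemma real_integral_comp (m' n : ℕ) (c : ℝ) (hc0 : 1 / 2 ≤ c) (hc1 : c ≤ 1) :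
    ∫ t in Icc (0:ℝ) c, ((m' + 1 : ℝ) * t ^ m') * (min c (1 - t)) ^ n =
      c ^ n * (1 - c) ^ (m' + 1) +
        ((m' + 1 : ℕ) : ℝ) * ∑ i ∈ Finset.range (n + 1),
          (n.choose i : ℝ) * (-1 : ℝ) ^ i *
            ((c ^ (m' + 1 + i) - (1 - c) ^ (m' + 1 + i)) / (((m' + 1 : ℕ) : ℝ) + (i : ℝ))) := by
  have hc0' : (0:ℝ) ≤ c := by linarith
  have h1c : (0:ℝ) ≤ 1 - c := by linarith
  have h1cc : 1 - c ≤ c := by linarith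
  have hcont : Continuous fun t : ℝ => ((m' + 1 : ℝ) * t ^ m') * (min c (1 - t)) ^ n := by
    apply Continuous.mul (by continuity)
    exact (continuous_const.min (by continuity)).pow n
  rw [integral_Icc_eq_integral_Ioc, ← intervalIntegral.integral_of_le hc0',
    ← intervalIntegral.integral_add_adjacent_intervals (b := 1 - c)
      (hcont.intervalIntegrable _ _) (hcont.intervalIntegrable _ _)]
  have e1 : ∫ t in (0:ℝ)..(1-c), ((m' + 1 : ℝ) * t ^ m') * (min c (1 - t)) ^ n
      = c ^ n * (1 - c) ^ (m' + 1) := by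
    rw [intervalIntegral.integral_congr (g := fun t => c ^ n * ((m' + 1 : ℝ) * t ^ m'))
      (by intro t ht
          rw [uIcc_of_le h1c] at ht
          dsimp only
          rw [min_eq_left (by linarith [ht.2])]
          ring)]
    rw [intervalIntegral.integral_const_mul, intervalIntegral.integral_const_mul, integral_pow]
    have : ((m':ℝ) + 1) ≠ 0 := by positivity
    field_simp
    simp
  have e2 : ∫ t in (1-c)..c, ((m' + 1 : ℝ) * t ^ m') * (min c (1 - t)) ^ n
      = ((m' + 1 : ℕ) : ℝ) * ∑ i ∈ Finset.range (n + 1),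
          (n.choose i : ℝ) * (-1 : ℝ) ^ i *
            ((c ^ (m' + 1 + i) - (1 - c) ^ (m' + 1 + i)) / (((m' + 1 : ℕ) : ℝ) + (i : ℝ))) := by
    rw [intervalIntegral.integral_congr
      (g := fun t => ∑ i ∈ Finset.range (n + 1),
        (n.choose i : ℝ) * (-1 : ℝ) ^ i * ((m' + 1 : ℝ) * t ^ (m' + i)))
      (by intro t ht
          rw [uIcc_of_le h1cc] at ht
          dsimp only
          rw [min_eq_right (by linarith [ht.1]), one_sub_pow_expand, Finset.mul_sum]
          refine Finset.sum_congr rfl fun i _ => ?_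
          rw [pow_add]; ring)]
    rw [intervalIntegral.integral_finset_sum
      (fun i _ => (Continuous.intervalIntegrable (by continuity) _ _)),
      Finset.mul_sum]
    refine Finset.sum_congr rfl fun i _ => ?_
    rw [intervalIntegral.integral_const_mul, intervalIntegral.integral_const_mul, integral_pow]
    have h : ((m':ℝ) + (i:ℝ) + 1) ≠ 0 := by positivity
    push_cast
    field_simp
    ring
  rw [e1, e2]


end aux

/-- The sliced volume `vol(G, a)`: the Lebesgue volume of
`{x ∈ [0,a]^V : x_i + x_j ≤ 1 for every edge ij of G}`. -/
noncomputable def svol {V : Type*} [Fintype V] (G : SimpleGraph V) (a : ℝ) : ℝ :=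
  (volume {x : V → ℝ | (∀ i, x i ∈ Set.Icc (0:ℝ) a) ∧
      ∀ ⦃i j⦄, G.Adj i j → x i + x j ≤ 1}).toReal

set_option maxHeartbeats 1000000 in
theorem svol_completeBipartite' (m' n : ℕ)
    (c : ℝ) (hc0 : 1 / 2 ≤ c) (hc1 : c ≤ 1) :
    svol (completeBipartiteGraph (Fin (m'+1)) (Fin n)) c =
      (∫ t in Icc (0:ℝ) c, ((m' + 1 : ℝ) * t ^ m') * (min c (1 - t)) ^ n) := by
  classical
  have hc0' : (0:ℝ) ≤ c := by linarith
  set G := completeBipartiteGraph (Fin (m'+1)) (Fin n)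
  set S : Set ((Fin (m'+1) ⊕ Fin n) → ℝ) :=
    {x | (∀ i, x i ∈ Set.Icc (0:ℝ) c) ∧ ∀ ⦃i j⦄, G.Adj i j → x i + x j ≤ 1} with hSdef
  have hS : MeasurableSet S := by
    have : S = (⋂ v, (fun x : (Fin (m'+1) ⊕ Fin n) → ℝ => x v) ⁻¹' Icc 0 c) ∩
        ⋂ v, ⋂ w, ⋂ (_ : G.Adj v w), {x : (Fin (m'+1) ⊕ Fin n) → ℝ | x v + x w ≤ 1} := by
      ext x
      simp only [hSdef, mem_setOf_eq, mem_inter_iff, mem_iInter, mem_preimage]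
    rw [this]
    refine MeasurableSet.inter (MeasurableSet.iInter fun v =>
      (measurable_pi_apply v) measurableSet_Icc) ?_
    exact MeasurableSet.iInter fun v => MeasurableSet.iInter fun w =>
      MeasurableSet.iInter fun _ =>
        measurableSet_le ((measurable_pi_apply v).add (measurable_pi_apply w)) measurable_const
  set e := MeasurableEquiv.sumPiEquivProdPi (fun _ : Fin (m'+1) ⊕ Fin n => ℝ) with he
  set boxm : Set (Fin (m'+1) → ℝ) := univ.pi fun _ => Icc 0 c with hboxm
  have hboxmM : MeasurableSet boxm := MeasurableSet.univ_pi fun _ => measurableSet_Icc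
  set A : Set ((Fin (m'+1) → ℝ) × (Fin n → ℝ)) :=
    {p | (∀ i, p.1 i ∈ Icc (0:ℝ) c) ∧ (∀ j, p.2 j ∈ Icc (0:ℝ) c) ∧
      ∀ i j, p.1 i + p.2 j ≤ 1} with hAdef
  have hA : e.symm ⁻¹' S = A := by
    ext ⟨x, y⟩
    simp only [hSdef, hAdef, mem_preimage, mem_setOf_eq]
    constructor
    · rintro ⟨h1, h2⟩
      refine ⟨fun i => h1 (Sum.inl i), fun j => h1 (Sum.inr j), fun i j => ?_⟩
      have hadj : G.Adj (Sum.inl i) (Sum.inr j) := Or.inl ⟨rfl, rfl⟩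
      exact h2 hadj
    · rintro ⟨h1, h2, h3⟩
      refine ⟨fun v => ?_, fun v w hvw => ?_⟩
      · cases v with
        | inl i => exact h1 i
        | inr j => exact h2 j
      · rcases v with i | j <;> rcases w with i' | j' <;>
          simp only [G, completeBipartiteGraph_adj, Sum.isLeft_inl, Sum.isRight_inr,
            Sum.isLeft_inr, Sum.isRight_inl] at hvw
        · exact absurd hvw (by simp)
        · exact h3 i j'
        · have := h3 i' j
          calc (e.symm (x,y)) (Sum.inr j) + (e.symm (x,y)) (Sum.inl i') = x i' + y j := by
                rw [add_comm]; rfl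
            _ ≤ 1 := h3 i' j
        · exact absurd hvw (by simp)
  have hAM : MeasurableSet A := by
    have : A = (⋂ i, {p : (Fin (m'+1) → ℝ) × (Fin n → ℝ) | p.1 i ∈ Icc (0:ℝ) c}) ∩
        (⋂ j, {p : (Fin (m'+1) → ℝ) × (Fin n → ℝ) | p.2 j ∈ Icc (0:ℝ) c}) ∩
        ⋂ i, ⋂ j, {p : (Fin (m'+1) → ℝ) × (Fin n → ℝ) | p.1 i + p.2 j ≤ 1} := by
      ext p
      simp only [hAdef, mem_setOf_eq, mem_inter_iff, mem_iInter, mem_setOf_eq]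
      tauto
    rw [this]
    refine MeasurableSet.inter (MeasurableSet.inter ?_ ?_) ?_
    · exact MeasurableSet.iInter fun i =>
        ((measurable_pi_apply i).comp measurable_fst) measurableSet_Icc
    · exact MeasurableSet.iInter fun j =>
        ((measurable_pi_apply j).comp measurable_snd) measurableSet_Icc
    · exact MeasurableSet.iInter fun i => MeasurableSet.iInter fun j =>
        measurableSet_le (((measurable_pi_apply i).comp measurable_fst).add
          ((measurable_pi_apply j).comp measurable_snd)) measurable_const
  have hvolS : volume S = volume A := by
    rw [← hA]
    exact ((volume_measurePreserving_sumPiEquivProdPi_symm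
      (fun _ : Fin (m'+1) ⊕ Fin n => ℝ)).measure_preimage hS.nullMeasurableSet).symm
  -- slice computation
  have hslice : ∀ x : Fin (m'+1) → ℝ, volume (Prod.mk x ⁻¹' A) =
      Set.indicator boxm (fun x => ENNReal.ofReal ((min c (1 - ⨆ i, x i)) ^ n)) x := by
    intro x
    by_cases hx : x ∈ boxm
    · have hxmem : ∀ i, x i ∈ Icc (0:ℝ) c := by
        intro i; exact hx i (mem_univ i)
      have hbdd : BddAbove (range x) := (finite_range x).bddAbove
      have hM_le : (⨆ i, x i) ≤ c := ciSup_le fun i => (hxmem i).2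
      have hM0 : (0:ℝ) ≤ ⨆ i, x i := le_trans (hxmem 0).1 (le_ciSup hbdd 0)
      have hmin0 : (0:ℝ) ≤ min c (1 - ⨆ i, x i) := le_min hc0' (by linarith)
      have hset : Prod.mk x ⁻¹' A = univ.pi fun _ : Fin n => Icc 0 (min c (1 - ⨆ i, x i)) := by
        ext y
        simp only [hAdef, mem_preimage, mem_setOf_eq, mem_pi, mem_univ, forall_true_left,
          mem_Icc, le_min_iff]
        constructor
        · rintro ⟨-, h2, h3⟩ j
          refine ⟨(h2 j).1, (h2 j).2, ?_⟩
          have : (⨆ i, x i) ≤ 1 - y j := ciSup_le fun i => by linarith [h3 i j]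
          linarith
        · intro h
          refine ⟨hxmem, fun j => ⟨(h j).1, (h j).2.1⟩, fun i j => ?_⟩
          have hxi : x i ≤ ⨆ i, x i := le_ciSup hbdd i
          linarith [(h j).2.2]
      rw [hset, volume_pi_pi]
      simp only [Real.volume_Icc, sub_zero, Finset.prod_const, Finset.card_univ,
        Fintype.card_fin]
      rw [Set.indicator_of_mem hx, ← ENNReal.ofReal_pow hmin0]
    · have hset : Prod.mk x ⁻¹' A = ∅ := by
        ext y
        simp only [hAdef, mem_preimage, mem_setOf_eq, mem_empty_iff_false, iff_false]
        rintro ⟨h1, -, -⟩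
        exact hx fun i _ => h1 i
      rw [hset, measure_empty, Set.indicator_of_notMem hx]
  -- put together
  have hsup : Measurable (fun x : Fin (m'+1) → ℝ => ⨆ i, x i) :=
    Measurable.iSup (fun i => measurable_pi_apply i)
  have hgmeas : Measurable (fun t : ℝ => ENNReal.ofReal ((min c (1 - t)) ^ n)) := by
    apply Measurable.ennreal_ofReal
    exact ((continuous_const.min (continuous_const.sub continuous_id)).pow n).measurable
  have hdmeas : Measurable ((Icc (0:ℝ) c).indicator
      fun t => ENNReal.ofReal ((m'+1) * t^m')) := by
    apply Measurable.indicator _ measurableSet_Icc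
    apply Measurable.ennreal_ofReal
    exact (continuous_const.mul (continuous_pow m')).measurable
  have key : volume S = ENNReal.ofReal
      (∫ t in Icc (0:ℝ) c, ((m' + 1 : ℝ) * t ^ m') * (min c (1 - t)) ^ n) := by
    rw [hvolS, Measure.volume_eq_prod, Measure.prod_apply hAM]
    rw [lintegral_congr hslice, lintegral_indicator hboxmM]
    have step1 : ∫⁻ x in boxm, ENNReal.ofReal ((min c (1 - ⨆ i, x i)) ^ n) =
        ∫⁻ t, ENNReal.ofReal ((min c (1 - t)) ^ n)
          ∂(Measure.map (fun x : Fin (m'+1) → ℝ => ⨆ i, x i) (volume.restrict boxm)) :=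
      (lintegral_map hgmeas hsup).symm
    rw [step1, map_sup_box m' c,
      lintegral_withDensity_eq_lintegral_mul volume hdmeas hgmeas]
    have step2 : ∫⁻ t, ((Icc (0:ℝ) c).indicator (fun t => ENNReal.ofReal ((m'+1) * t^m')) *
        fun t => ENNReal.ofReal ((min c (1 - t)) ^ n)) t =
        ∫⁻ t in Icc (0:ℝ) c,
          ENNReal.ofReal (((m' + 1 : ℝ) * t ^ m') * (min c (1 - t)) ^ n) := by
      rw [← lintegral_indicator measurableSet_Icc]
      refine lintegral_congr fun t => ?_
      by_cases ht : t ∈ Icc (0:ℝ) c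
      · simp only [Pi.mul_apply, Set.indicator_of_mem ht]
        rw [← ENNReal.ofReal_mul (mul_nonneg (by positivity) (pow_nonneg ht.1 m'))]
      · simp [Set.indicator_of_notMem ht]
    rw [step2, ← ofReal_integral_eq_lintegral_ofReal]
    · apply Continuous.integrableOn_Icc
      exact ((continuous_const.mul (continuous_pow m')).mul
        ((continuous_const.min (continuous_const.sub continuous_id)).pow n))
    · filter_upwards [ae_restrict_mem measurableSet_Icc] with t ht
      have h1 : (0:ℝ) ≤ min c (1 - t) := le_min hc0' (by linarith [ht.2])
      exact mul_nonneg (mul_nonneg (by positivity) (pow_nonneg ht.1 m')) (pow_nonneg h1 n)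
  rw [svol, ← hSdef, key, ENNReal.toReal_ofReal]
  apply setIntegral_nonneg measurableSet_Icc
  intro t ht
  have h1 : (0:ℝ) ≤ min c (1 - t) := le_min hc0' (by linarith [ht.2])
  exact mul_nonneg (mul_nonneg (by positivity) (pow_nonneg ht.1 m')) (pow_nonneg h1 n)

/-- For `1/2 ≤ c ≤ 1`, the sliced volume of the complete bipartite graph:
`vol(K_{m,n}, c) = cⁿ(1-c)^m + m·Σ_{i=0}^n C(n,i)(-1)^i (c^{m+i} - (1-c)^{m+i})/(m+i)`. -/
theorem svol_completeBipartite (m n : ℕ) (hm : 1 ≤ m) (hn : 1 ≤ n)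
    (c : ℝ) (hc0 : 1 / 2 ≤ c) (hc1 : c ≤ 1) :
    svol (completeBipartiteGraph (Fin m) (Fin n)) c =
      c ^ n * (1 - c) ^ m +
        (m : ℝ) * ∑ i ∈ Finset.range (n + 1),
          (n.choose i : ℝ) * (-1 : ℝ) ^ i *
            ((c ^ (m + i) - (1 - c) ^ (m + i)) / ((m : ℝ) + (i : ℝ))) := by
  obtain ⟨m', rfl⟩ : ∃ m', m = m' + 1 := ⟨m - 1, (Nat.sub_add_cancel hm).symm⟩
  rw [svol_completeBipartite' m' n c hc0 hc1, real_integral_comp m' n c hc0 hc1]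
end

section
/- For all positive integers m and n, vol(K_{m,n}) = Σ_{i=0}^{n} C(n,i)·(−1)^i·m/(m+i). -/
open MeasureTheory Set

namespace VolKmn

variable {m n : ℕ}

noncomputable def mx {k : ℕ} (hk : 0 < k) (y : Fin k → ℝ) : ℝ :=
  haveI : Nonempty (Fin k) := Fin.pos_iff_nonempty.mp hk
  Finset.univ.sup' Finset.univ_nonempty y

lemma le_mx {k : ℕ} (hk : 0 < k) (y : Fin k → ℝ) (j : Fin k) : y j ≤ mx hk y :=
  Finset.le_sup' y (Finset.mem_univ j)

lemma mx_le_iff {k : ℕ} (hk : 0 < k) {y : Fin k → ℝ} {a : ℝ} :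
    mx hk y ≤ a ↔ ∀ j, y j ≤ a := by
  rw [mx, Finset.sup'_le_iff]; simp

lemma mx_lt_iff {k : ℕ} (hk : 0 < k) {y : Fin k → ℝ} {a : ℝ} :
    mx hk y < a ↔ ∀ j, y j < a := by
  rw [mx, Finset.sup'_lt_iff]; simp

lemma continuous_mx {k : ℕ} (hk : 0 < k) : Continuous (mx hk) := by
  haveI : Nonempty (Fin k) := Fin.pos_iff_nonempty.mp hk
  exact Continuous.finset_sup'_apply Finset.univ_nonempty fun i _ => continuous_apply i

def cube (k : ℕ) : Set (Fin k → ℝ) := univ.pi fun _ => Icc (0:ℝ) 1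

lemma measurableSet_cube (k : ℕ) : MeasurableSet (cube k) :=
  MeasurableSet.univ_pi fun _ => measurableSet_Icc

lemma mx_mem {k : ℕ} (hk : 0 < k) {y : Fin k → ℝ} (hy : y ∈ cube k) : mx hk y ∈ Icc (0:ℝ) 1 := by
  obtain ⟨j⟩ : Nonempty (Fin k) := Fin.pos_iff_nonempty.mp hk
  exact ⟨le_trans (hy j (mem_univ j)).1 (le_mx hk y j),
    (mx_le_iff hk).2 fun j => (hy j (mem_univ j)).2⟩

lemma volume_pi_Icc (k : ℕ) (c : ℝ) :
    volume (univ.pi fun _ : Fin k => Icc (0:ℝ) c) = ENNReal.ofReal c ^ k := by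
  rw [volume_pi, Measure.pi_pi]; simp [Real.volume_Icc]

lemma volume_pi_Ico (k : ℕ) (c : ℝ) :
    volume (univ.pi fun _ : Fin k => Ico (0:ℝ) c) = ENNReal.ofReal c ^ k := by
  rw [volume_pi, Measure.pi_pi]; simp [Real.volume_Ico]

def S (m n : ℕ) : Set ((Fin m → ℝ) × (Fin n → ℝ)) :=
  {p | (∀ i, p.1 i ∈ Icc (0:ℝ) 1) ∧ (∀ j, p.2 j ∈ Icc (0:ℝ) 1) ∧ ∀ i j, p.1 i + p.2 j ≤ 1}

lemma measurableSet_S (m n : ℕ) : MeasurableSet (S m n) := by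
  have : S m n = (⋂ i, {p : (Fin m → ℝ) × (Fin n → ℝ) | p.1 i ∈ Icc (0:ℝ) 1}) ∩
      ((⋂ j, {p : (Fin m → ℝ) × (Fin n → ℝ) | p.2 j ∈ Icc (0:ℝ) 1}) ∩
       (⋂ i, ⋂ j, {p : (Fin m → ℝ) × (Fin n → ℝ) | p.1 i + p.2 j ≤ 1})) := by
    ext p; simp [S]
  rw [this]
  refine (MeasurableSet.iInter fun i => measurableSet_Icc.preimage measurable_fst.eval).inter
    ((MeasurableSet.iInter fun j => measurableSet_Icc.preimage measurable_snd.eval).inter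
      (MeasurableSet.iInter fun i => MeasurableSet.iInter fun j =>
        measurableSet_le (Measurable.add (f := fun p : (Fin m → ℝ) × (Fin n → ℝ) => p.1 i)
          (g := fun p => p.2 j) measurable_fst.eval measurable_snd.eval) measurable_const))

lemma volS_eq (hm : 0 < m) (hn : 0 < n) :
    (volume.prod volume) (S m n)
      = ∫⁻ y in cube n, ENNReal.ofReal ((1 - mx hn y) ^ m) := by
  rw [Measure.prod_apply_symm (measurableSet_S m n)]
  have key : ∀ y : Fin n → ℝ, volume ((fun x => (x, y)) ⁻¹' S m n)
      = (cube n).indicator (fun y => ENNReal.ofReal ((1 - mx hn y) ^ m)) y := by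
    intro y
    by_cases hy : y ∈ cube n
    · have hmx := mx_mem hn hy
      have hslice : ((fun x => (x, y)) ⁻¹' S m n)
          = univ.pi fun _ : Fin m => Icc (0:ℝ) (1 - mx hn y) := by
        ext x
        simp only [mem_preimage, S, mem_setOf_eq, mem_univ_pi, mem_Icc]
        constructor
        · rintro ⟨h1, _, h3⟩ i
          refine ⟨(h1 i).1, ?_⟩
          have : mx hn y ≤ 1 - x i := (mx_le_iff hn).2 fun j => by linarith [h3 i j]
          linarith
        · intro h
          refine ⟨fun i => ⟨(h i).1, by linarith [(h i).2, hmx.1]⟩,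
            fun j => hy j (mem_univ j), fun i j => ?_⟩
          linarith [(h i).2, le_mx hn y j]
      rw [hslice, volume_pi_Icc, indicator_of_mem hy,
        ENNReal.ofReal_pow (by linarith [hmx.2])]
    · have hslice : ((fun x => (x, y)) ⁻¹' S m n) = ∅ := by
        ext x
        simp only [mem_preimage, S, mem_setOf_eq, mem_empty_iff_false, iff_false, not_and]
        intro _ h2
        exact absurd (fun j _ => h2 j) hy
      rw [hslice, measure_empty, indicator_of_notMem hy]
  simp_rw [key]
  rw [lintegral_indicator (measurableSet_cube n)]

lemma lint_cube_eq (hm : 0 < m) (hn : 0 < n) :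
    ∫⁻ y in cube n, ENNReal.ofReal ((1 - mx hn y) ^ m)
      = ∫⁻ t in Ioo (0:ℝ) 1, ENNReal.ofReal ((1 - t ^ ((m:ℝ)⁻¹)) ^ n) := by
  have f_nn : 0 ≤ᵐ[volume.restrict (cube n)] fun y => (1 - mx hn y) ^ m := by
    filter_upwards [ae_restrict_mem (measurableSet_cube n)] with y hy
    exact pow_nonneg (by linarith [(mx_mem hn hy).2]) m
  have f_mble : AEMeasurable (fun y => (1 - mx hn y) ^ m) (volume.restrict (cube n)) :=
    (((continuous_const.sub (continuous_mx hn)).pow m).measurable).aemeasurable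
  rw [lintegral_eq_lintegral_meas_lt _ f_nn f_mble]
  have step : ∀ t ∈ Ioi (0:ℝ),
      (volume.restrict (cube n)) {y | t < (1 - mx hn y) ^ m}
        = (Ioo (0:ℝ) 1).indicator (fun t => ENNReal.ofReal (1 - t ^ ((m:ℝ)⁻¹)) ^ n) t := by
    intro t ht
    rw [Measure.restrict_apply' (measurableSet_cube n)]
    rcases lt_or_ge t 1 with ht1 | ht1
    · have hin : t ∈ Ioo (0:ℝ) 1 := ⟨ht, ht1⟩
      have htm : t ^ ((m:ℝ)⁻¹) < 1 := by
        calc t ^ ((m:ℝ)⁻¹) < 1 ^ ((m:ℝ)⁻¹) :=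
          Real.rpow_lt_rpow ht.le ht1 (by positivity)
        _ = 1 := Real.one_rpow _
      have htm0 : 0 ≤ t ^ ((m:ℝ)⁻¹) := Real.rpow_nonneg ht.le _
      have hset : {y | t < (1 - mx hn y) ^ m} ∩ cube n
          = univ.pi fun _ : Fin n => Ico (0:ℝ) (1 - t ^ ((m:ℝ)⁻¹)) := by
        ext y
        simp only [mem_inter_iff, mem_setOf_eq, mem_univ_pi, mem_Ico]
        constructor
        · rintro ⟨hty, hy⟩ j
          have hmx := mx_mem hn hy
          have h1 : t < (1 - mx hn y) ^ ((m:ℝ):ℝ) := by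
            rw [Real.rpow_natCast]; exact hty
          have h2 : t ^ ((m:ℝ)⁻¹) < 1 - mx hn y :=
            (Real.rpow_inv_lt_iff_of_pos ht.le (by linarith [hmx.2])
              (by exact_mod_cast hm)).2 h1
          exact ⟨(hy j (mem_univ j)).1, lt_of_le_of_lt (le_mx hn y j) (by linarith)⟩
        · intro h
          have hy : y ∈ cube n := fun j _ =>
            ⟨(h j).1, by linarith [(h j).2, htm0]⟩
          have hmxlt : mx hn y < 1 - t ^ ((m:ℝ)⁻¹) := (mx_lt_iff hn).2 fun j => (h j).2
          have hmx := mx_mem hn hy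
          refine ⟨?_, hy⟩
          have h2 : t ^ ((m:ℝ)⁻¹) < 1 - mx hn y := by linarith
          have h1 : t < (1 - mx hn y) ^ ((m:ℝ):ℝ) :=
            (Real.rpow_inv_lt_iff_of_pos ht.le (by linarith [hmx.2])
              (by exact_mod_cast hm)).1 h2
          rwa [Real.rpow_natCast] at h1
      rw [hset, volume_pi_Ico, indicator_of_mem hin]
    · have hset : {y | t < (1 - mx hn y) ^ m} ∩ cube n = ∅ := by
        ext y
        simp only [mem_inter_iff, mem_setOf_eq, mem_empty_iff_false, iff_false, not_and]
        intro hty hy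
        have hmx := mx_mem hn hy
        have : (1 - mx hn y) ^ m ≤ 1 := pow_le_one₀ (by linarith [hmx.2]) (by linarith [hmx.1])
        linarith
      rw [hset, measure_empty, indicator_of_notMem (by simp [ht1.not_gt] : t ∉ Ioo (0:ℝ) 1)]
  rw [setLIntegral_congr_fun measurableSet_Ioi step]
  rw [lintegral_indicator measurableSet_Ioo, Measure.restrict_restrict measurableSet_Ioo,
    inter_eq_self_of_subset_left (fun t ht => ht.1)]
  refine setLIntegral_congr_fun measurableSet_Ioo (fun t ht => ?_)
  rw [ENNReal.ofReal_pow]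
  have : t ^ ((m:ℝ)⁻¹) ≤ 1 := Real.rpow_le_one ht.1.le ht.2.le (by positivity)
  linarith

lemma measurableSet_A (m n : ℕ) :
    MeasurableSet {x : Fin m ⊕ Fin n → ℝ | (∀ i, x i ∈ Set.Icc (0:ℝ) 1) ∧
      ∀ ⦃i j⦄, (completeBipartiteGraph (Fin m) (Fin n)).Adj i j → x i + x j ≤ 1} := by
  have : {x : Fin m ⊕ Fin n → ℝ | (∀ i, x i ∈ Set.Icc (0:ℝ) 1) ∧
      ∀ ⦃i j⦄, (completeBipartiteGraph (Fin m) (Fin n)).Adj i j → x i + x j ≤ 1}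
      = (⋂ v, {x : Fin m ⊕ Fin n → ℝ | x v ∈ Icc (0:ℝ) 1}) ∩
        ⋂ i, ⋂ j, ⋂ (_ : (completeBipartiteGraph (Fin m) (Fin n)).Adj i j),
          {x : Fin m ⊕ Fin n → ℝ | x i + x j ≤ 1} := by
    ext x; simp only [mem_setOf_eq, mem_inter_iff, mem_iInter]
  rw [this]
  exact (MeasurableSet.iInter fun v => measurableSet_Icc.preimage (measurable_pi_apply v)).inter
    (MeasurableSet.iInter fun i => MeasurableSet.iInter fun j => MeasurableSet.iInter fun _ =>
      measurableSet_le ((measurable_pi_apply i).add (measurable_pi_apply j)) measurable_const)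

lemma volA_eq_volS (m n : ℕ) :
    volume {x : Fin m ⊕ Fin n → ℝ | (∀ i, x i ∈ Set.Icc (0:ℝ) 1) ∧
      ∀ ⦃i j⦄, (completeBipartiteGraph (Fin m) (Fin n)).Adj i j → x i + x j ≤ 1}
    = (volume.prod volume) (S m n) := by
  have hmp := MeasureTheory.volume_measurePreserving_sumPiEquivProdPi_symm
      (fun _ : Fin m ⊕ Fin n => ℝ)
  have key : (MeasurableEquiv.sumPiEquivProdPi (fun _ : Fin m ⊕ Fin n => ℝ)).symm ⁻¹'
      {x : Fin m ⊕ Fin n → ℝ | (∀ i, x i ∈ Set.Icc (0:ℝ) 1) ∧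
      ∀ ⦃i j⦄, (completeBipartiteGraph (Fin m) (Fin n)).Adj i j → x i + x j ≤ 1} = S m n := by
    ext ⟨x, y⟩
    simp only [mem_preimage, MeasurableEquiv.coe_sumPiEquivProdPi_symm, mem_setOf_eq, S]
    constructor
    · rintro ⟨h1, h2⟩
      refine ⟨fun i => h1 (Sum.inl i), fun j => h1 (Sum.inr j), fun i j => ?_⟩
      have := h2 (i := Sum.inl i) (j := Sum.inr j) (by simp)
      simpa [Equiv.sumPiEquivProdPi] using this
    · rintro ⟨h1, h2, h3⟩
      constructor
      · rintro (i | j)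
        · simpa [Equiv.sumPiEquivProdPi] using h1 i
        · simpa [Equiv.sumPiEquivProdPi] using h2 j
      · rintro (i | i) (j | j) hadj <;> simp only [completeBipartiteGraph_adj] at hadj <;>
          simp [Equiv.sumPiEquivProdPi] at hadj ⊢
        · exact h3 i j
        · linarith [h3 j i]
  calc volume _ = volume ((MeasurableEquiv.sumPiEquivProdPi (fun _ : Fin m ⊕ Fin n => ℝ)).symm ⁻¹'
        {x : Fin m ⊕ Fin n → ℝ | (∀ i, x i ∈ Set.Icc (0:ℝ) 1) ∧
          ∀ ⦃i j⦄, (completeBipartiteGraph (Fin m) (Fin n)).Adj i j → x i + x j ≤ 1}) := by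
        rw [hmp.measure_preimage (measurableSet_A m n).nullMeasurableSet]
    _ = (volume.prod volume) (S m n) := by rw [← Measure.volume_eq_prod, key]


lemma contOn (m n : ℕ) : ContinuousOn (fun t : ℝ => (1 - t ^ ((m:ℝ)⁻¹)) ^ n) (Icc 0 1) := by
  refine (continuousOn_const.sub ?_).pow n
  exact fun x hx => (Real.continuousAt_rpow_const x _ (Or.inr (by positivity))).continuousWithinAt

lemma integrableOn (m n : ℕ) :
    IntegrableOn (fun t : ℝ => (1 - t ^ ((m:ℝ)⁻¹)) ^ n) (Ioo 0 1) volume :=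
  ((contOn m n).integrableOn_Icc).mono_set Ioo_subset_Icc_self

lemma nn (m n : ℕ) : ∀ t ∈ Ioo (0:ℝ) 1, 0 ≤ (1 - t ^ ((m:ℝ)⁻¹)) ^ n := fun t ht =>
  pow_nonneg (by linarith [Real.rpow_le_one ht.1.le ht.2.le (by positivity : (0:ℝ) ≤ (m:ℝ)⁻¹)]) n

lemma I_eq (m n : ℕ) (hm : 0 < m) :
    ∫ t in Ioo (0:ℝ) 1, (1 - t ^ ((m:ℝ)⁻¹)) ^ n
      = ∑ i ∈ Finset.range (n + 1),
        (n.choose i : ℝ) * (-1 : ℝ) ^ i * ((m : ℝ) / ((m : ℝ) + (i : ℝ))) := by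
  have hm' : (0:ℝ) < (m:ℝ) := by exact_mod_cast hm
  rw [← integral_Ioc_eq_integral_Ioo, ← intervalIntegral.integral_of_le zero_le_one]
  have expand : EqOn (fun t : ℝ => (1 - t ^ ((m:ℝ)⁻¹)) ^ n)
      (fun t : ℝ => ∑ i ∈ Finset.range (n + 1),
        (n.choose i : ℝ) * (-1 : ℝ) ^ i * t ^ ((m:ℝ)⁻¹ * (i:ℝ))) (uIcc 0 1) := by
    intro t ht
    rw [uIcc_of_le zero_le_one] at ht
    have ht0 : (0:ℝ) ≤ t := ht.1
    simp only
    rw [sub_eq_add_neg, add_comm, add_pow]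
    refine Finset.sum_congr rfl fun i hi => ?_
    rw [neg_pow, one_pow, ← Real.rpow_natCast (t ^ ((m:ℝ)⁻¹)) i, ← Real.rpow_mul ht0]
    ring
  rw [intervalIntegral.integral_congr expand]
  have intgr : ∀ i ∈ Finset.range (n + 1), IntervalIntegrable
      (fun t : ℝ => (n.choose i : ℝ) * (-1 : ℝ) ^ i * t ^ ((m:ℝ)⁻¹ * (i:ℝ))) volume 0 1 :=
    fun i _ => (intervalIntegral.intervalIntegrable_rpow'
      (show (-1:ℝ) < (m:ℝ)⁻¹ * (i:ℝ) by
        have : (0:ℝ) ≤ (m:ℝ)⁻¹ * (i:ℝ) := by positivity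
        linarith)).const_mul _
  rw [intervalIntegral.integral_finset_sum intgr]
  refine Finset.sum_congr rfl fun i hi => ?_
  rw [intervalIntegral.integral_const_mul, integral_rpow (Or.inl (show (-1:ℝ) < (m:ℝ)⁻¹ * (i:ℝ) by
    have : (0:ℝ) ≤ (m:ℝ)⁻¹ * (i:ℝ) := by positivity
    linarith))]
  have h1 : (m:ℝ)⁻¹ * (i:ℝ) + 1 ≠ 0 := by positivity
  rw [Real.one_rpow, Real.zero_rpow h1]
  have : (1 - 0) / ((m:ℝ)⁻¹ * (i:ℝ) + 1) = (m:ℝ) / ((m:ℝ) + (i:ℝ)) := by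
    rw [sub_zero, eq_div_iff (by positivity : ((m:ℝ) + (i:ℝ)) ≠ 0), one_div,
      inv_mul_eq_iff_eq_mul₀ (by positivity : ((m:ℝ)⁻¹ * (i:ℝ) + 1) ≠ 0)]
    field_simp
    ring
  rw [this]

end VolKmn

open MeasureTheory

/-- `vol(K_{m,n}) = Σ_{i=0}^n C(n,i)·(-1)^i·m/(m+i)`. -/
theorem vol_completeBipartite_sum (m n : ℕ) (hm : 1 ≤ m) (hn : 1 ≤ n) :
    gvol (completeBipartiteGraph (Fin m) (Fin n)) =
      ∑ i ∈ Finset.range (n + 1),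
        (n.choose i : ℝ) * (-1 : ℝ) ^ i * ((m : ℝ) / ((m : ℝ) + (i : ℝ))) := by
  classical
  have hm0 : 0 < m := hm
  have hn0 : 0 < n := hn
  have h1 := VolKmn.volA_eq_volS m n
  have h2 := VolKmn.volS_eq hm0 hn0
  have h3 := VolKmn.lint_cube_eq hm0 hn0
  have h4 : ∫⁻ t in Set.Ioo (0:ℝ) 1, ENNReal.ofReal ((1 - t ^ ((m:ℝ)⁻¹)) ^ n)
      = ENNReal.ofReal (∫ t in Set.Ioo (0:ℝ) 1, (1 - t ^ ((m:ℝ)⁻¹)) ^ n) := by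
    rw [ofReal_integral_eq_lintegral_ofReal (VolKmn.integrableOn m n)]
    filter_upwards [ae_restrict_mem measurableSet_Ioo] with t ht
    exact VolKmn.nn m n t ht
  have hInn : 0 ≤ ∫ t in Set.Ioo (0:ℝ) 1, (1 - t ^ ((m:ℝ)⁻¹)) ^ n :=
    setIntegral_nonneg measurableSet_Ioo (VolKmn.nn m n)
  rw [gvol, h1, h2, h3, h4, ENNReal.toReal_ofReal hInn, VolKmn.I_eq m n hm0]
end

section
/- For all positive integers m and n, the identity Σ_{i=0}^{n} C(n,i)·(−1)^i·m/(m+i) = 1/C(m+n, n) = Σ_{i=0}^{m} C(m,i)·(−1)^i·n/(n+i) holds. -/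
open Finset

lemma prod_pos_aux (x : ℝ) (hx : 0 < x) (k : ℕ) : 0 < ∏ i ∈ range k, (x + i) :=
  Finset.prod_pos fun i _ => by positivity

lemma key (x : ℝ) (hx : 0 < x) : ∀ n : ℕ,
    ∑ i ∈ range (n + 1), (-1 : ℝ) ^ i * (n.choose i : ℝ) / (x + i)
      = (n.factorial : ℝ) / ∏ i ∈ range (n + 1), (x + i) := by
  intro n
  induction n generalizing x hx with
  | zero => simp
  | succ n ih =>
    have hrec : ∑ i ∈ range (n + 2), (-1 : ℝ) ^ i * ((n+1).choose i : ℝ) / (x + i)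
        = (∑ i ∈ range (n + 1), (-1 : ℝ) ^ i * (n.choose i : ℝ) / (x + i))
          - ∑ i ∈ range (n + 1), (-1 : ℝ) ^ i * (n.choose i : ℝ) / ((x+1) + i) := by
      have h1 : ∑ i ∈ range (n + 2), (-1 : ℝ) ^ i * ((n+1).choose i : ℝ) / (x + i)
          = ∑ i ∈ range (n + 2), (-1 : ℝ) ^ i * (n.choose i : ℝ) / (x + i)
            + ∑ i ∈ range (n + 2),
                (if i = 0 then 0 else (-1 : ℝ) ^ i * (n.choose (i-1) : ℝ) / (x + i)) := by
        rw [← Finset.sum_add_distrib]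
        refine Finset.sum_congr rfl fun i _ => ?_
        cases i with
        | zero => simp
        | succ k =>
          rw [Nat.choose_succ_succ, if_neg (Nat.succ_ne_zero k)]
          push_cast
          ring
      rw [h1]
      have h2 : ∑ i ∈ range (n + 2), (-1 : ℝ) ^ i * (n.choose i : ℝ) / (x + i)
          = ∑ i ∈ range (n + 1), (-1 : ℝ) ^ i * (n.choose i : ℝ) / (x + i) := by
        rw [Finset.sum_range_succ, Nat.choose_succ_self]
        simp
      have h3 : ∑ i ∈ range (n + 2),
            (if i = 0 then 0 else (-1 : ℝ) ^ i * (n.choose (i-1) : ℝ) / (x + i))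
          = - ∑ i ∈ range (n + 1), (-1 : ℝ) ^ i * (n.choose i : ℝ) / ((x+1) + i) := by
        rw [Finset.sum_range_succ']
        simp only [Nat.succ_ne_zero, ite_false, ite_true, if_true, Nat.succ_sub_one, add_zero]
        rw [← Finset.sum_neg_distrib]
        refine Finset.sum_congr rfl fun i _ => ?_
        push_cast
        ring
      rw [h2, h3]; ring
    rw [hrec, ih x hx, ih (x+1) (by linarith)]
    have hA : (0:ℝ) < ∏ i ∈ range (n + 1), (x + i) := prod_pos_aux x hx _
    have hB : (0:ℝ) < ∏ i ∈ range (n + 1), ((x+1) + i) := prod_pos_aux (x+1) (by linarith) _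
    have hC : (0:ℝ) < ∏ i ∈ range (n + 2), (x + i) := prod_pos_aux x hx _
    have hrel1 : ∏ i ∈ range (n + 2), (x + i) = (∏ i ∈ range (n + 1), (x + i)) * (x + (n+1)) := by
      rw [Finset.prod_range_succ]; push_cast; ring
    have hrel2 : x * ∏ i ∈ range (n + 1), ((x+1) + i) = ∏ i ∈ range (n + 2), (x + i) := by
      rw [Finset.prod_range_succ' (fun i : ℕ => x + (i : ℝ)) (n + 1)]
      push_cast
      rw [add_zero, mul_comm]
      congr 1
      exact Finset.prod_congr rfl fun i _ => by push_cast; ring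
    rw [hrel1] at hC hrel2 ⊢
    rw [Nat.factorial_succ]
    field_simp
    push_cast
    linear_combination (n.factorial : ℝ) * hrel2

lemma prod_eq_asc (m : ℕ) : ∀ k : ℕ, ∏ i ∈ range k, ((m : ℝ) + i) = (m.ascFactorial k : ℝ)
  | 0 => by simp
  | k + 1 => by
    rw [Finset.prod_range_succ, prod_eq_asc m k, Nat.ascFactorial_succ]
    push_cast
    ring

lemma half (m n : ℕ) (hm : 1 ≤ m) :
    ∑ i ∈ range (n + 1), (n.choose i : ℝ) * (-1 : ℝ) ^ i * ((m : ℝ) / ((m : ℝ) + (i : ℝ)))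
      = 1 / ((m + n).choose n : ℝ) := by
  have hx : (0 : ℝ) < m := by exact_mod_cast hm
  have h := key (m : ℝ) hx n
  have hL : ∑ i ∈ range (n + 1), (n.choose i : ℝ) * (-1 : ℝ) ^ i * ((m : ℝ) / ((m : ℝ) + (i : ℝ)))
      = (m : ℝ) * ∑ i ∈ range (n + 1), (-1 : ℝ) ^ i * (n.choose i : ℝ) / ((m : ℝ) + i) := by
    rw [Finset.mul_sum]
    exact Finset.sum_congr rfl fun i _ => by ring
  rw [hL, h, prod_eq_asc]
  have key_nat : m * n.factorial * ((m + n).choose n) = m.ascFactorial (n + 1) := by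
    apply Nat.eq_of_mul_eq_mul_left (Nat.factorial_pos (m - 1))
    have h1 := Nat.factorial_mul_ascFactorial' m (n + 1) hm
    have h2 : m + (n + 1) - 1 = m + n := by omega
    rw [h2] at h1
    have h3 : (m - 1).factorial * (m * n.factorial * ((m + n).choose n))
        = (m + n).choose n * m.factorial * n.factorial := by
      rw [← Nat.mul_factorial_pred (by omega : m ≠ 0)]
      ring
    rw [h1, h3, Nat.add_choose_mul_factorial_mul_factorial]
  have hasc : (0 : ℝ) < (m.ascFactorial (n + 1) : ℝ) := by
    rw [← prod_eq_asc]
    exact prod_pos_aux _ hx _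
  have hch : (0 : ℝ) < ((m + n).choose n : ℝ) := by
    exact_mod_cast Nat.choose_pos (Nat.le_add_left n m)
  rw [mul_div_assoc', div_eq_div_iff hasc.ne' hch.ne', one_mul]
  exact_mod_cast key_nat



/-- For positive integers `m` and `n`,
`Σ_{i=0}^n C(n,i)(-1)^i m/(m+i) = 1/C(m+n,n) = Σ_{i=0}^m C(m,i)(-1)^i n/(n+i)`. -/
theorem alternating_binomial_identity (m n : ℕ) (hm : 1 ≤ m) (hn : 1 ≤ n) :
    (∑ i ∈ Finset.range (n + 1),
        (n.choose i : ℝ) * (-1 : ℝ) ^ i * ((m : ℝ) / ((m : ℝ) + (i : ℝ)))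
      = 1 / ((m + n).choose n : ℝ)) ∧
    (∑ i ∈ Finset.range (m + 1),
        (m.choose i : ℝ) * (-1 : ℝ) ^ i * ((n : ℝ) / ((n : ℝ) + (i : ℝ)))
      = 1 / ((m + n).choose n : ℝ)) := by
  refine ⟨half m n hm, ?_⟩
  have h := half n m hn
  rwa [show (n + m).choose m = (m + n).choose n by rw [add_comm]; exact Nat.choose_symm_add] at h
end

section
/- For all positive integers m and n, vol(K_{m,n}) = m·B(m, n+1) = n·B(m+1, n), where B is the Euler beta function. -/
open MeasureTheory

/-- The Euler beta function `B(r,s) = ∫_0^1 x^{r-1}(1-x)^{s-1} dx`. -/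
noncomputable def betaFn (r s : ℝ) : ℝ :=
  ∫ x in (0:ℝ)..1, x ^ (r - 1) * (1 - x) ^ (s - 1)

open Set

section Aux

lemma gvolAux_lint_pow (m : ℕ) (hm : 1 ≤ m) (c : ℝ) :
    ∫⁻ t in Icc (0:ℝ) c, ENNReal.ofReal ((m:ℝ) * t ^ (m - 1)) = ENNReal.ofReal c ^ m := by
  rcases le_or_gt c 0 with hc | hc
  · have h0 : volume (Icc (0:ℝ) c) = 0 := by
      rw [Real.volume_Icc]
      simp [ENNReal.ofReal_eq_zero, hc]
    rw [Measure.restrict_eq_zero.mpr h0, lintegral_zero_measure,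
      ENNReal.ofReal_eq_zero.mpr hc, zero_pow (by omega)]
  · have hint : IntegrableOn (fun t : ℝ => (m:ℝ) * t ^ (m - 1)) (Icc 0 c) volume :=
      (continuous_const.mul (continuous_pow _)).integrableOn_Icc
    have hnn : 0 ≤ᶠ[ae (volume.restrict (Icc (0:ℝ) c))] fun t : ℝ => (m:ℝ) * t ^ (m - 1) := by
      refine (ae_restrict_iff' measurableSet_Icc).mpr (ae_of_all _ fun t ht => ?_)
      exact mul_nonneg (Nat.cast_nonneg m) (pow_nonneg ht.1 _)
    rw [← ofReal_integral_eq_lintegral_ofReal hint hnn]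
    have : ∫ t in Icc (0:ℝ) c, (m:ℝ) * t ^ (m - 1) = c ^ m := by
      rw [MeasureTheory.integral_Icc_eq_integral_Ioc,
        ← intervalIntegral.integral_of_le hc.le,
        intervalIntegral.integral_const_mul, integral_pow]
      have h1 : m - 1 + 1 = m := Nat.succ_pred_eq_of_pos hm
      have h2 : ((m - 1 : ℕ) : ℝ) + 1 = (m : ℝ) := by
        rw [Nat.cast_sub hm]; ring
      rw [h1, h2]
      have hm0 : (m : ℝ) ≠ 0 := Nat.cast_ne_zero.mpr (by omega)
      field_simp
      rw [zero_pow (by omega), sub_zero]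
    rw [this, ENNReal.ofReal_pow hc.le]

lemma gvolAux_map_max_eq (m : ℕ) (hm : 1 ≤ m)
    (hne : (Finset.univ : Finset (Fin m)).Nonempty) :
    Measure.map (Finset.univ.sup' hne fun i (u : Fin m → ℝ) => u i)
      (volume.restrict (Set.pi Set.univ fun _ : Fin m => Icc (0:ℝ) 1))
    = (volume.restrict (Icc (0:ℝ) 1)).withDensity
        (fun t => ENNReal.ofReal ((m:ℝ) * t ^ (m - 1))) := by
  set M : (Fin m → ℝ) → ℝ := Finset.univ.sup' hne fun i (u : Fin m → ℝ) => u i with hMdef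
  have hM : Measurable M := Finset.measurable_sup' hne fun i _ => measurable_pi_apply i
  haveI : IsFiniteMeasure ((volume : Measure (Fin m → ℝ)).restrict
      (Set.pi univ fun _ => Icc (0:ℝ) 1)) := by
    constructor
    rw [Measure.restrict_apply MeasurableSet.univ, Set.univ_inter, volume_pi_pi]
    simp
  apply Measure.ext_of_Iic
  intro a
  rw [Measure.map_apply hM measurableSet_Iic,
    Measure.restrict_apply (hM measurableSet_Iic),
    withDensity_apply _ measurableSet_Iic,
    Measure.restrict_restrict measurableSet_Iic]
  have hset1 : (M ⁻¹' Iic a) ∩ (Set.pi univ fun _ : Fin m => Icc (0:ℝ) 1)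
      = Set.pi univ fun _ : Fin m => Icc (0:ℝ) (min a 1) := by
    ext u
    simp only [mem_inter_iff, mem_preimage, mem_Iic, hMdef, Finset.sup'_apply,
      Finset.sup'_le_iff, Finset.mem_univ, forall_true_left, mem_pi, mem_Icc, le_min_iff]
    constructor
    · rintro ⟨h1, h2⟩ i _; exact ⟨(h2 i trivial).1, h1 i, (h2 i trivial).2⟩
    · intro h; exact ⟨fun i => (h i trivial).2.1, fun i _ => ⟨(h i trivial).1, (h i trivial).2.2⟩⟩
  have hset2 : Iic a ∩ Icc (0:ℝ) 1 = Icc 0 (min a 1) := by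
    ext t; simp only [mem_inter_iff, mem_Iic, mem_Icc, le_min_iff]; tauto
  rw [hset1, hset2, volume_pi_pi]
  simp only [Real.volume_Icc, sub_zero, Finset.prod_const, Finset.card_univ, Fintype.card_fin]
  rw [gvolAux_lint_pow m hm (min a 1)]

lemma gvolAux_volume_S (m n : ℕ) (hm : 1 ≤ m) (hn : 1 ≤ n)
    (hne : (Finset.univ : Finset (Fin m)).Nonempty) :
    volume {x : (Fin m ⊕ Fin n) → ℝ | (∀ i, x i ∈ Icc (0:ℝ) 1) ∧
        ∀ a b, x (Sum.inl a) + x (Sum.inr b) ≤ 1}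
    = ∫⁻ u in (Set.pi univ fun _ : Fin m => Icc (0:ℝ) 1),
        ENNReal.ofReal (1 - Finset.univ.sup' hne (fun i => u i)) ^ n := by
  set M : (Fin m → ℝ) → ℝ := fun u => Finset.univ.sup' hne (fun i => u i) with hMdef
  set S : Set ((Fin m ⊕ Fin n) → ℝ) := {x | (∀ i, x i ∈ Icc (0:ℝ) 1) ∧
        ∀ a b, x (Sum.inl a) + x (Sum.inr b) ≤ 1} with hSdef
  have hS : MeasurableSet S := by
    have : S = (⋂ k, (fun x : (Fin m ⊕ Fin n) → ℝ => x k) ⁻¹' Icc (0:ℝ) 1) ∩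
        ⋂ a, ⋂ b, {x : (Fin m ⊕ Fin n) → ℝ | x (Sum.inl a) + x (Sum.inr b) ≤ 1} := by
      ext x; simp [hSdef, Set.mem_iInter, forall_and]
    rw [this]
    refine MeasurableSet.inter (MeasurableSet.iInter fun k =>
        (measurable_pi_apply k) measurableSet_Icc) ?_
    refine MeasurableSet.iInter fun a => MeasurableSet.iInter fun b => ?_
    exact measurableSet_le ((measurable_pi_apply (Sum.inl a)).add
      (measurable_pi_apply (Sum.inr b))) measurable_const
  set e := MeasurableEquiv.sumPiEquivProdPi (fun _ : Fin m ⊕ Fin n => ℝ) with hedef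
  have hpres := MeasureTheory.volume_measurePreserving_sumPiEquivProdPi_symm
    (fun _ : Fin m ⊕ Fin n => ℝ)
  have h1 : volume S = (volume.prod volume) (e.symm ⁻¹' S) :=
    (hpres.measure_preimage hS.nullMeasurableSet).symm
  have hT : MeasurableSet (e.symm ⁻¹' S) := e.symm.measurable hS
  rw [h1, Measure.prod_apply hT]
  have hfun : (fun u : Fin m → ℝ => volume (Prod.mk u ⁻¹' (e.symm ⁻¹' S)))
      = (Set.pi univ fun _ : Fin m => Icc (0:ℝ) 1).indicator
        (fun u => ENNReal.ofReal (1 - M u) ^ n) := by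
    funext u
    by_cases hu : u ∈ Set.pi univ fun _ : Fin m => Icc (0:ℝ) 1
    · rw [Set.indicator_of_mem hu]
      have hu' : ∀ a, u a ∈ Icc (0:ℝ) 1 := fun a => hu a trivial
      have hM0 : 0 ≤ M u := le_trans (hu' hne.choose).1 (Finset.le_sup' _ (Finset.mem_univ _))
      have hslice : Prod.mk u ⁻¹' (e.symm ⁻¹' S)
          = Set.pi univ fun _ : Fin n => Icc (0:ℝ) (1 - M u) := by
        ext v
        have hcoord : ∀ k, e.symm (u, v) k = Sum.rec u v k := fun k => rfl
        simp only [mem_preimage, hSdef, mem_setOf_eq, hcoord, mem_pi, mem_univ,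
          forall_true_left, mem_Icc]
        constructor
        · rintro ⟨h1, h2⟩ b
          refine ⟨(h1 (Sum.inr b)).1, ?_⟩
          have : M u ≤ 1 - v b := by
            rw [hMdef]
            exact Finset.sup'_le hne _ fun a _ => by linarith [h2 a b]
          linarith
        · intro h
          have h1mu : (1:ℝ) - M u ≤ 1 := by linarith
          refine ⟨?_, ?_⟩
          · rintro (a | b)
            · exact hu' a
            · exact ⟨(h b).1, le_trans (h b).2 h1mu⟩
          · intro a b
            have hua : u a ≤ M u := Finset.le_sup' _ (Finset.mem_univ a)
            linarith [(h b).2]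
      rw [hslice, volume_pi_pi]
      simp [Real.volume_Icc, Finset.prod_const]
    · rw [Set.indicator_of_notMem hu]
      have : Prod.mk u ⁻¹' (e.symm ⁻¹' S) = ∅ := by
        ext v
        simp only [mem_preimage, hSdef, mem_setOf_eq, mem_empty_iff_false, iff_false, not_and]
        intro h1
        exfalso
        exact hu fun a _ => h1 (Sum.inl a)
      rw [this, measure_empty]
  rw [hfun, lintegral_indicator (by exact MeasurableSet.univ_pi fun _ => measurableSet_Icc)]

lemma gvolAux_lint_final (m n : ℕ) (hm : 1 ≤ m)
    (hne : (Finset.univ : Finset (Fin m)).Nonempty) :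
    ∫⁻ u in (Set.pi univ fun _ : Fin m => Icc (0:ℝ) 1),
        ENNReal.ofReal (1 - Finset.univ.sup' hne (fun i => u i)) ^ n
    = ENNReal.ofReal ((m:ℝ) * ∫ t in (0:ℝ)..1, t ^ (m-1) * (1-t) ^ n) := by
  have hM : Measurable (Finset.univ.sup' hne fun i (u : Fin m → ℝ) => u i) :=
    Finset.measurable_sup' hne fun i _ => measurable_pi_apply i
  have hf : Measurable (fun t : ℝ => ENNReal.ofReal (1 - t) ^ n) :=
    ((measurable_const.sub measurable_id).ennreal_ofReal).pow_const n
  have hdens : Measurable (fun t : ℝ => ENNReal.ofReal ((m:ℝ) * t ^ (m - 1))) :=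
    (measurable_const.mul (measurable_id.pow_const _)).ennreal_ofReal
  have step1 : ∫⁻ u in (Set.pi univ fun _ : Fin m => Icc (0:ℝ) 1),
        ENNReal.ofReal (1 - Finset.univ.sup' hne (fun i => u i)) ^ n
      = ∫⁻ t, ENNReal.ofReal (1 - t) ^ n
          ∂(Measure.map (Finset.univ.sup' hne fun i (u : Fin m → ℝ) => u i)
            (volume.restrict (Set.pi Set.univ fun _ : Fin m => Icc (0:ℝ) 1))) := by
    rw [lintegral_map hf hM]
    simp_rw [Finset.sup'_apply]
  rw [step1, gvolAux_map_max_eq m hm hne, lintegral_withDensity_eq_lintegral_mul _ hdens hf]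
  have step2 : ∫⁻ t in Icc (0:ℝ) 1,
        ((fun t : ℝ => ENNReal.ofReal ((m:ℝ) * t ^ (m - 1))) *
          fun t : ℝ => ENNReal.ofReal (1 - t) ^ n) t
      = ∫⁻ t in Icc (0:ℝ) 1, ENNReal.ofReal ((m:ℝ) * t ^ (m-1) * (1-t) ^ n) := by
    refine lintegral_congr_ae ((ae_restrict_mem measurableSet_Icc).mono fun t ht => ?_)
    simp only [Pi.mul_apply]
    rw [← ENNReal.ofReal_pow (by linarith [ht.2]), ← ENNReal.ofReal_mul
      (mul_nonneg (Nat.cast_nonneg m) (pow_nonneg ht.1 _))]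
  rw [step2]
  have hint : IntegrableOn (fun t : ℝ => (m:ℝ) * t ^ (m-1) * (1-t) ^ n) (Icc 0 1) volume :=
    (((continuous_const.mul (continuous_pow _)).mul
      ((continuous_const.sub continuous_id).pow _))).integrableOn_Icc
  have hnn : 0 ≤ᶠ[ae (volume.restrict (Icc (0:ℝ) 1))]
      fun t : ℝ => (m:ℝ) * t ^ (m-1) * (1-t) ^ n :=
    (ae_restrict_mem measurableSet_Icc).mono fun t ht =>
      mul_nonneg (mul_nonneg (Nat.cast_nonneg m) (pow_nonneg ht.1 _))
        (pow_nonneg (by linarith [ht.2]) _)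
  rw [← ofReal_integral_eq_lintegral_ofReal hint hnn]
  congr 1
  rw [MeasureTheory.integral_Icc_eq_integral_Ioc, ← intervalIntegral.integral_of_le zero_le_one]
  simp_rw [mul_assoc]
  rw [intervalIntegral.integral_const_mul]

lemma gvolAux_beta1 (m n : ℕ) (hm : 1 ≤ m) :
    betaFn m (n + 1) = ∫ t in (0:ℝ)..1, t ^ (m-1) * (1-t) ^ n := by
  unfold betaFn
  refine intervalIntegral.integral_congr fun x _ => ?_
  have h1 : (m:ℝ) - 1 = ((m - 1 : ℕ) : ℝ) := by
    rw [Nat.cast_sub hm]; simp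
  have h2 : (n:ℝ) + 1 - 1 = ((n : ℕ) : ℝ) := by ring
  rw [h1, h2, Real.rpow_natCast, Real.rpow_natCast]

lemma gvolAux_beta2 (m n : ℕ) (hn : 1 ≤ n) :
    betaFn (m + 1) n = ∫ t in (0:ℝ)..1, t ^ m * (1-t) ^ (n-1) := by
  unfold betaFn
  refine intervalIntegral.integral_congr fun x _ => ?_
  have h1 : (m:ℝ) + 1 - 1 = ((m : ℕ) : ℝ) := by ring
  have h2 : (n:ℝ) - 1 = ((n - 1 : ℕ) : ℝ) := by
    rw [Nat.cast_sub hn]; simp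
  rw [h1, h2, Real.rpow_natCast, Real.rpow_natCast]

lemma gvolAux_parts (m n : ℕ) (hm : 1 ≤ m) (hn : 1 ≤ n) :
    (n:ℝ) * ∫ t in (0:ℝ)..1, t ^ m * (1-t) ^ (n-1)
      = (m:ℝ) * ∫ t in (0:ℝ)..1, t ^ (m-1) * (1-t) ^ n := by
  have hu : ∀ x ∈ Set.uIcc (0:ℝ) 1, HasDerivAt (fun x : ℝ => x ^ m)
      ((m:ℝ) * x ^ (m-1)) x := fun x _ => hasDerivAt_pow m x
  have hv : ∀ x ∈ Set.uIcc (0:ℝ) 1, HasDerivAt (fun x : ℝ => -((1-x) ^ n))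
      ((n:ℝ) * (1-x) ^ (n-1)) x := by
    intro x _
    have hin : HasDerivAt (fun x : ℝ => 1 - x) (-1) x := by
      simpa using (hasDerivAt_id x).const_sub 1
    have h := ((hasDerivAt_pow n (1-x)).comp x hin).neg
    refine h.congr_deriv ?_
    ring
  have hu' : IntervalIntegrable (fun x : ℝ => (m:ℝ) * x ^ (m-1)) volume 0 1 :=
    (continuous_const.mul (continuous_pow _)).intervalIntegrable _ _
  have hv' : IntervalIntegrable (fun x : ℝ => (n:ℝ) * (1-x) ^ (n-1)) volume 0 1 :=
    (continuous_const.mul ((continuous_const.sub continuous_id).pow _)).intervalIntegrable _ _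
  have key := intervalIntegral.integral_mul_deriv_eq_deriv_mul hu hv hu' hv'
  have hl : ∫ x in (0:ℝ)..1, x ^ m * ((n:ℝ) * (1-x) ^ (n-1))
      = (n:ℝ) * ∫ t in (0:ℝ)..1, t ^ m * (1-t) ^ (n-1) := by
    rw [← intervalIntegral.integral_const_mul]
    refine intervalIntegral.integral_congr fun x _ => ?_
    ring
  have hr : ∫ x in (0:ℝ)..1, (m:ℝ) * x ^ (m-1) * -((1-x) ^ n)
      = -((m:ℝ) * ∫ t in (0:ℝ)..1, t ^ (m-1) * (1-t) ^ n) := by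
    rw [← intervalIntegral.integral_const_mul, ← intervalIntegral.integral_neg]
    refine intervalIntegral.integral_congr fun x _ => ?_
    ring
  rw [hl, hr] at key
  rw [key]
  have h0 : (0:ℝ) ^ m = 0 := zero_pow (by omega)
  have h1 : ((1:ℝ) - 1) ^ n = 0 := by rw [sub_self]; exact zero_pow (by omega)
  rw [h0, h1]
  ring

end Aux

/-- `vol(K_{m,n}) = m·B(m, n+1) = n·B(m+1, n)` where `B` is the beta function. -/
theorem vol_completeBipartite_beta (m n : ℕ) (hm : 1 ≤ m) (hn : 1 ≤ n) :
    gvol (completeBipartiteGraph (Fin m) (Fin n)) = (m : ℝ) * betaFn m (n + 1) ∧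
    gvol (completeBipartiteGraph (Fin m) (Fin n)) = (n : ℝ) * betaFn (m + 1) n := by
  have hne : (Finset.univ : Finset (Fin m)).Nonempty := ⟨⟨0, hm⟩, Finset.mem_univ _⟩
  have hsetEq : {x : (Fin m ⊕ Fin n) → ℝ | (∀ i, x i ∈ Set.Icc (0:ℝ) 1) ∧
        ∀ ⦃i j⦄, (completeBipartiteGraph (Fin m) (Fin n)).Adj i j → x i + x j ≤ 1}
      = {x : (Fin m ⊕ Fin n) → ℝ | (∀ i, x i ∈ Icc (0:ℝ) 1) ∧
        ∀ a b, x (Sum.inl a) + x (Sum.inr b) ≤ 1} := by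
    ext x
    simp only [mem_setOf_eq, completeBipartiteGraph_adj]
    constructor
    · rintro ⟨h1, h2⟩
      exact ⟨h1, fun a b => h2 (by simp)⟩
    · rintro ⟨h1, h2⟩
      refine ⟨h1, ?_⟩
      rintro (a | a) (b | b) hadj
      · simp at hadj
      · exact h2 a b
      · rw [add_comm]; exact h2 b a
      · simp at hadj
  have hIpos : 0 ≤ ∫ t in (0:ℝ)..1, t ^ (m-1) * (1-t) ^ n := by
    refine intervalIntegral.integral_nonneg zero_le_one fun t ht => ?_
    exact mul_nonneg (pow_nonneg ht.1 _) (pow_nonneg (by linarith [ht.2]) _)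
  have hvol : gvol (completeBipartiteGraph (Fin m) (Fin n))
      = (m:ℝ) * ∫ t in (0:ℝ)..1, t ^ (m-1) * (1-t) ^ n := by
    rw [gvol, hsetEq, gvolAux_volume_S m n hm hn hne, gvolAux_lint_final m n hm hne,
      ENNReal.toReal_ofReal (mul_nonneg (Nat.cast_nonneg m) hIpos)]
  constructor
  · rw [hvol, gvolAux_beta1 m n hm]
  · rw [hvol, gvolAux_beta2 m n hn, gvolAux_parts m n hm hn]
end

section
/- Let G be a finite simple graph with k = |V(G)| vertices, let n be a positive integer, and let 1/2 ≤ r ≤ 1 be a point where the sliced volume functions are differentiable. Then (d/dr) vol(nG, r) = n·(1−r)^{k(n−1)} · (d/dr) vol(G, r), where nG = G + G + ⋯ + G is the join of n copies of G. -/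
open MeasureTheory Set Filter Topology ENNReal

/-- `nG`, the join of `n` copies of `G`: vertices in different copies are always
adjacent, and vertices within a copy are adjacent according to `G`. -/
def joinPow {V : Type*} (G : SimpleGraph V) (n : ℕ) : SimpleGraph (Fin n × V) where
  Adj x y := x.1 ≠ y.1 ∨ (x.1 = y.1 ∧ G.Adj x.2 y.2)
  symm := by
    constructor
    rintro x y (h | ⟨h, h'⟩)
    · exact Or.inl h.symm
    · exact Or.inr ⟨h.symm, h'.symm⟩
  loopless := by
    constructor
    rintro x (h | ⟨-, h⟩)
    · exact h rfl
    · exact G.irrefl h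

namespace SvolAux

set_option linter.unusedSectionVars false
set_option linter.unusedVariables false

/-- The region whose volume is `svol`. -/
def reg {V : Type*} (G : SimpleGraph V) (a : ℝ) : Set (V → ℝ) :=
  {x | (∀ i, x i ∈ Set.Icc (0:ℝ) a) ∧ ∀ ⦃i j⦄, G.Adj i j → x i + x j ≤ 1}

lemma svol_def {V : Type*} [Fintype V] (G : SimpleGraph V) (a : ℝ) :
    svol G a = (volume (reg G a)).toReal := rfl

variable {V : Type*} [Fintype V]

lemma measurableSet_reg (G : SimpleGraph V) (a : ℝ) : MeasurableSet (reg G a) := by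
  have h1 : MeasurableSet {x : V → ℝ | ∀ i, x i ∈ Set.Icc (0:ℝ) a} := by
    rw [show {x : V → ℝ | ∀ i, x i ∈ Set.Icc (0:ℝ) a}
        = ⋂ i, (fun x : V → ℝ => x i) ⁻¹' (Set.Icc 0 a) by ext x; simp]
    exact MeasurableSet.iInter fun i => (measurable_pi_apply i) measurableSet_Icc
  have h2 : MeasurableSet {x : V → ℝ | ∀ ⦃i j⦄, G.Adj i j → x i + x j ≤ 1} := by
    rw [show {x : V → ℝ | ∀ ⦃i j⦄, G.Adj i j → x i + x j ≤ 1}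
        = ⋂ i, ⋂ j, {x : V → ℝ | G.Adj i j → x i + x j ≤ 1} by ext x; simp [Set.mem_iInter]]
    refine MeasurableSet.iInter fun i => MeasurableSet.iInter fun j => ?_
    by_cases h : G.Adj i j
    · simp only [h, true_implies]
      exact measurableSet_le ((measurable_pi_apply i).add (measurable_pi_apply j))
        measurable_const
    · simp [h]
  exact h1.inter h2

lemma reg_subset_box (G : SimpleGraph V) (a : ℝ) :
    reg G a ⊆ Set.pi Set.univ (fun _ => Set.Icc (0:ℝ) a) := fun x hx i _ => hx.1 i

lemma volume_reg_ne_top (G : SimpleGraph V) (a : ℝ) : volume (reg G a) ≠ ⊤ := by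
  refine ne_top_of_le_ne_top ?_ (measure_mono (reg_subset_box G a))
  rw [volume_pi_pi]
  exact (ENNReal.prod_lt_top fun i _ =>
    (by simp [Real.volume_Icc] : volume (Set.Icc (0:ℝ) a) < ⊤)).ne

lemma reg_mono (G : SimpleGraph V) {a b : ℝ} (hab : a ≤ b) : reg G a ⊆ reg G b :=
  fun x hx => ⟨fun i => ⟨(hx.1 i).1, (hx.1 i).2.trans hab⟩, hx.2⟩

lemma svol_mono (G : SimpleGraph V) {a b : ℝ} (hab : a ≤ b) : svol G a ≤ svol G b :=
  ENNReal.toReal_mono (volume_reg_ne_top G b) (measure_mono (reg_mono G hab))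

/-- The "copy `a` is in `A`, all other coordinates in `[0,c]`" set. -/
def T (n k : ℕ) (a : Fin n) (A : Set (Fin k → ℝ)) (c : ℝ) : Set (Fin n × Fin k → ℝ) :=
  {x | (fun v => x (a, v)) ∈ A ∧ ∀ q : Fin n × Fin k, q.1 ≠ a → x q ∈ Set.Icc 0 c}

variable {n k : ℕ}

/-- Equivalence between `Fin k` and the vertices of copy `a`. -/
def copyEquiv (a : Fin n) : Fin k ≃ {q : Fin n × Fin k // q.1 = a} where
  toFun v := ⟨(a, v), rfl⟩
  invFun q := q.1.2
  left_inv v := rfl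
  right_inv := by rintro ⟨⟨b, v⟩, rfl⟩; rfl

lemma card_aux (a : Fin n) : Fintype.card {q : Fin n × Fin k // ¬ q.1 = a} = k * (n - 1) := by
  have h1 : Fintype.card {q : Fin n × Fin k // q.1 = a} = k :=
    (Fintype.card_congr (copyEquiv a).symm).trans (Fintype.card_fin k)
  have h2 := Fintype.card_subtype_compl (fun q : Fin n × Fin k => q.1 = a)
  rw [h1, Fintype.card_prod, Fintype.card_fin, Fintype.card_fin] at h2
  rw [h2]
  cases n with
  | zero => exact absurd a.2 (by simp)
  | succ m => simp [Nat.succ_sub_one, Nat.succ_mul, Nat.mul_comm]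

lemma measurableSet_T (a : Fin n) {A : Set (Fin k → ℝ)} (hA : MeasurableSet A) (c : ℝ) :
    MeasurableSet (T n k a A c) := by
  have h1 : MeasurableSet {x : Fin n × Fin k → ℝ | (fun v => x (a, v)) ∈ A} :=
    (measurable_pi_lambda _ fun v => measurable_pi_apply (a, v)) hA
  have h2 : MeasurableSet {x : Fin n × Fin k → ℝ |
      ∀ q : Fin n × Fin k, q.1 ≠ a → x q ∈ Set.Icc 0 c} := by
    rw [show {x : Fin n × Fin k → ℝ | ∀ q : Fin n × Fin k, q.1 ≠ a → x q ∈ Set.Icc 0 c}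
        = ⋂ q : Fin n × Fin k, {x | q.1 ≠ a → x q ∈ Set.Icc 0 c} by ext x; simp [Set.mem_iInter]]
    refine MeasurableSet.iInter fun q => ?_
    by_cases h : q.1 = a
    · simp [h]
    · simp only [h, ne_eq, not_false_iff, true_implies]
      exact (measurable_pi_apply q) measurableSet_Icc
  exact h1.inter h2

lemma vol_T (a : Fin n) {A : Set (Fin k → ℝ)} (hA : MeasurableSet A) (c : ℝ) :
    volume (T n k a A c) = volume A * (ENNReal.ofReal c) ^ (k * (n - 1)) := by
  classical
  set p : Fin n × Fin k → Prop := fun q => q.1 = a with hp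
  set e := MeasurableEquiv.piEquivPiSubtypeProd (fun _ : Fin n × Fin k => ℝ) p with he
  set g := MeasurableEquiv.piCongrLeft (fun _ : {q : Fin n × Fin k // p q} => ℝ)
      (copyEquiv a) with hg
  set A' : Set ({q : Fin n × Fin k // p q} → ℝ) := g.symm ⁻¹' A with hA'
  set B' : Set ({q : Fin n × Fin k // ¬ p q} → ℝ) :=
    Set.pi Set.univ (fun _ => Set.Icc (0:ℝ) c) with hB'
  have hT : T n k a A c = e ⁻¹' (A' ×ˢ B') := by
    ext x
    simp only [T, Set.mem_setOf_eq, Set.mem_preimage, Set.mem_prod, hA',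
      Set.mem_preimage, hB', Set.mem_pi, Set.mem_univ, true_implies]
    constructor
    · rintro ⟨h1, h2⟩
      exact ⟨by convert h1 using 1; funext v; rfl, fun q => h2 q q.2⟩
    · rintro ⟨h1, h2⟩
      exact ⟨by convert h1 using 1; funext v; rfl, fun q hq => h2 ⟨q, hq⟩⟩
  have hA'meas : MeasurableSet A' := g.symm.measurable hA
  have hB'meas : MeasurableSet B' :=
    MeasurableSet.univ_pi fun _ => measurableSet_Icc
  have hvolA' : volume A' = volume A :=
    ((volume_measurePreserving_piCongrLeft _ (copyEquiv a)).symm g).measure_preimage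
      hA.nullMeasurableSet
  have hvolB' : volume B' = (ENNReal.ofReal c) ^ (k * (n - 1)) := by
    rw [hB', volume_pi_pi]
    simp only [Real.volume_Icc, sub_zero, Finset.prod_const, Finset.card_univ]
    exact congrArg _ (card_aux a)
  rw [hT, (volume_preserving_piEquivPiSubtypeProd (fun _ : Fin n × Fin k => ℝ) p).measure_preimage
      (hA'meas.prod hB'meas).nullMeasurableSet,
    Measure.volume_eq_prod, Measure.prod_prod, hvolA', hvolB']

variable {G : SimpleGraph (Fin k)} {s r : ℝ}

lemma joinPow_adj {a b : Fin n} {i j : Fin k} :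
    (joinPow G n).Adj (a, i) (b, j) ↔ a ≠ b ∨ (a = b ∧ G.Adj i j) := Iff.rfl

lemma copy_mem_reg {x : Fin n × Fin k → ℝ} (hx : x ∈ reg (joinPow G n) r) (a : Fin n) :
    (fun v => x (a, v)) ∈ reg G r := by
  refine ⟨fun v => hx.1 (a, v), fun i j hij => ?_⟩
  exact hx.2 (joinPow_adj.mpr (Or.inr ⟨rfl, hij⟩))

lemma diff_subset_iUnion (hs : 1/2 ≤ s) (hsr : s ≤ r) (hr1 : r ≤ 1) :
    reg (joinPow G n) r \ reg (joinPow G n) s ⊆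
      ⋃ a : Fin n, T n k a (reg G r \ reg G s) (1 - s) := by
  rintro x ⟨hxr, hxs⟩
  have hbig : ∃ q : Fin n × Fin k, s < x q := by
    by_contra h
    push_neg at h
    exact hxs ⟨fun q => ⟨(hxr.1 q).1, h q⟩, hxr.2⟩
  obtain ⟨⟨a, v⟩, hav⟩ := hbig
  refine Set.mem_iUnion.mpr ⟨a, ?_, ?_⟩
  · refine ⟨copy_mem_reg hxr a, fun hmem => ?_⟩
    exact absurd (hmem.1 v).2 (not_le.mpr hav)
  · intro q hq
    have hadj : (joinPow G n).Adj q (a, v) := Or.inl hq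
    have := hxr.2 hadj
    exact ⟨(hxr.1 q).1, by linarith [hav]⟩

lemma iUnion_subset_diff (hs : 1/2 ≤ s) (hsr : s ≤ r) (hr1 : r ≤ 1) :
    (⋃ a : Fin n, T n k a (reg G r \ reg G s) (1 - r)) ⊆
      reg (joinPow G n) r \ reg (joinPow G n) s := by
  have hr0 : 1/2 ≤ r := hs.trans hsr
  rintro x hx
  obtain ⟨a, ⟨⟨har, has⟩, hother⟩⟩ := Set.mem_iUnion.mp hx
  have hbnd : ∀ q : Fin n × Fin k, x q ∈ Set.Icc (0:ℝ) r ∧ (q.1 ≠ a → x q ≤ 1 - r) := by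
    intro q
    by_cases hq : q.1 = a
    · refine ⟨?_, fun h => absurd hq h⟩
      have := har.1 q.2
      have hxq : x q = x (a, q.2) := by rw [← hq]
      rw [hxq]; exact this
    · have := hother q hq
      exact ⟨⟨this.1, this.2.trans (by linarith)⟩, fun _ => this.2⟩
  constructor
  · refine ⟨fun q => (hbnd q).1, ?_⟩
    rintro ⟨b, i⟩ ⟨c, j⟩ hadj
    rcases hadj with hbc | ⟨hbc, hij⟩
    · by_cases hb : b = a
      · have hc : c ≠ a := fun h => hbc (by rw [hb, h])
        have h1 : x (b, i) ≤ r := ((hbnd (b, i)).1).2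
        have h2 : x (c, j) ≤ 1 - r := (hbnd (c, j)).2 hc
        linarith
      · have h1 : x (b, i) ≤ 1 - r := (hbnd (b, i)).2 hb
        have h2 : x (c, j) ≤ r := ((hbnd (c, j)).1).2
        linarith
    · subst hbc
      by_cases hb : b = a
      · subst hb
        exact har.2 hij
      · have h1 : x (b, i) ≤ 1 - r := (hbnd (b, i)).2 hb
        have h2 : x (b, j) ≤ 1 - r := (hbnd (b, j)).2 hb
        linarith
  · intro hmem
    exact has ⟨fun v => ⟨(har.1 v).1, (hmem.1 (a, v)).2⟩, har.2⟩

lemma T_disjoint (hs : 1/2 ≤ s) (hsr : s ≤ r) (hr1 : r ≤ 1) :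
    Pairwise (Function.onFun Disjoint fun a : Fin n => T n k a (reg G r \ reg G s) (1 - r)) := by
  have hr0 : 1/2 ≤ r := hs.trans hsr
  intro a b hab
  rw [Function.onFun, Set.disjoint_left]
  rintro x ⟨⟨_, _⟩, hothera⟩ ⟨⟨hbr, hbs⟩, _⟩
  refine hbs ⟨fun v => ?_, hbr.2⟩
  have h := hothera (b, v) (fun h => hab h.symm)
  exact ⟨h.1, by linarith [h.2]⟩

/-- The key sandwich inequality. -/
lemma sandwich (hs : 1/2 ≤ s) (hsr : s ≤ r) (hr1 : r ≤ 1) :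
    (n:ℝ) * (1 - r) ^ (k * (n - 1)) * (svol G r - svol G s)
      ≤ svol (joinPow G n) r - svol (joinPow G n) s ∧
    svol (joinPow G n) r - svol (joinPow G n) s
      ≤ (n:ℝ) * (1 - s) ^ (k * (n - 1)) * (svol G r - svol G s) := by
  have hs1 : s ≤ 1 := hsr.trans hr1
  set A : Set (Fin k → ℝ) := reg G r \ reg G s with hA
  have hAmeas : MeasurableSet A := (measurableSet_reg G r).diff (measurableSet_reg G s)
  have hμA : volume A ≠ ⊤ :=
    ne_top_of_le_ne_top (volume_reg_ne_top G r) (measure_mono Set.diff_subset)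
  have hF : svol G r - svol G s = (volume A).toReal := by
    rw [svol_def, svol_def, hA,
      measure_diff (reg_mono G hsr) (measurableSet_reg G s).nullMeasurableSet
        (volume_reg_ne_top G s),
      ENNReal.toReal_sub_of_le (measure_mono (reg_mono G hsr)) (volume_reg_ne_top G r)]
  set D : Set (Fin n × Fin k → ℝ) := reg (joinPow G n) r \ reg (joinPow G n) s with hD
  have hμD : volume D ≠ ⊤ :=
    ne_top_of_le_ne_top (volume_reg_ne_top _ r) (measure_mono Set.diff_subset)
  have hJ : svol (joinPow G n) r - svol (joinPow G n) s = (volume D).toReal := by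
    rw [svol_def, svol_def, hD,
      measure_diff (reg_mono _ hsr) (measurableSet_reg _ s).nullMeasurableSet
        (volume_reg_ne_top _ s),
      ENNReal.toReal_sub_of_le (measure_mono (reg_mono _ hsr)) (volume_reg_ne_top _ r)]
  have hsum : ∀ c : ℝ, ∑ a : Fin n, volume (T n k a A c)
      = (n : ℝ≥0∞) * (volume A * (ENNReal.ofReal c) ^ (k * (n - 1))) := by
    intro c
    simp only [vol_T _ hAmeas c, Finset.sum_const, Finset.card_univ, Fintype.card_fin,
      nsmul_eq_mul]
  have hupper : volume D ≤ (n : ℝ≥0∞) * (volume A * (ENNReal.ofReal (1 - s)) ^ (k * (n - 1))) := by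
    refine (measure_mono (diff_subset_iUnion hs hsr hr1)).trans ?_
    exact (measure_iUnion_fintype_le _ _).trans (le_of_eq (hsum (1 - s)))
  have hlower : (n : ℝ≥0∞) * (volume A * (ENNReal.ofReal (1 - r)) ^ (k * (n - 1)))
      ≤ volume D := by
    refine le_trans (le_of_eq ?_) (measure_mono (iUnion_subset_diff hs hsr hr1))
    rw [measure_iUnion (T_disjoint hs hsr hr1) (fun a => measurableSet_T a hAmeas _),
      tsum_fintype, hsum (1 - r)]
  have htoReal : ∀ c : ℝ, 0 ≤ c →
      ((n : ℝ≥0∞) * (volume A * (ENNReal.ofReal c) ^ (k * (n - 1)))).toReal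
        = (n:ℝ) * c ^ (k * (n - 1)) * (volume A).toReal := by
    intro c hc
    rw [ENNReal.toReal_mul, ENNReal.toReal_mul, ENNReal.toReal_pow,
      ENNReal.toReal_ofReal hc, ENNReal.toReal_natCast]
    ring
  have hne : ∀ c : ℝ, (n : ℝ≥0∞) * (volume A * (ENNReal.ofReal c) ^ (k * (n - 1))) ≠ ⊤ :=
    fun c => ENNReal.mul_ne_top (ENNReal.natCast_ne_top n)
      (ENNReal.mul_ne_top hμA (ENNReal.pow_ne_top ENNReal.ofReal_ne_top))
  constructor
  · rw [hF, hJ, ← htoReal (1 - r) (by linarith)]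
    exact ENNReal.toReal_mono hμD hlower
  · rw [hF, hJ, ← htoReal (1 - s) (by linarith)]
    exact ENNReal.toReal_mono (hne (1 - s)) hupper

end SvolAux

open SvolAux in
/-- For a graph `G` with `k` vertices and `1/2 ≤ r ≤ 1` a differentiability point
of the sliced volume functions:
`(d/dr) vol(nG, r) = n·(1-r)^{k(n-1)}·(d/dr) vol(G, r)`. -/
theorem deriv_svol_joinPow (k : ℕ) (G : SimpleGraph (Fin k)) (n : ℕ) (hn : 1 ≤ n)
    (r : ℝ) (hr0 : 1 / 2 ≤ r) (hr1 : r ≤ 1)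
    (hG : DifferentiableAt ℝ (svol G) r)
    (hnG : DifferentiableAt ℝ (svol (joinPow G n)) r) :
    deriv (svol (joinPow G n)) r =
      (n : ℝ) * (1 - r) ^ (k * (n - 1)) * deriv (svol G) r := by
  set F : ℝ → ℝ := svol G with hFdef
  set J : ℝ → ℝ := svol (joinPow G n) with hJdef
  set p : ℕ := k * (n - 1) with hpdef
  set c : ℝ := (n : ℝ) * (1 - r) ^ p with hcdef
  obtain ⟨l, hlneb, hlle, hlmem⟩ :
      ∃ l : Filter ℝ, l.NeBot ∧ l ≤ 𝓝[≠] r ∧ ∀ᶠ t in l, t ∈ Set.Icc (1/2:ℝ) 1 := by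
    rcases lt_or_eq_of_le hr1 with h | h
    · refine ⟨𝓝[>] r, inferInstance, nhdsWithin_mono r (fun x hx => ne_of_gt hx), ?_⟩
      filter_upwards [(eventually_lt_nhds h).filter_mono nhdsWithin_le_nhds,
        eventually_mem_nhdsWithin] with t h1 h2
      exact ⟨le_of_lt (lt_of_le_of_lt hr0 h2), le_of_lt h1⟩
    · have h' : (1/2:ℝ) < r := by rw [h]; norm_num
      refine ⟨𝓝[<] r, inferInstance, nhdsWithin_mono r (fun x hx => ne_of_lt hx), ?_⟩
      filter_upwards [(eventually_gt_nhds h').filter_mono nhdsWithin_le_nhds,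
        eventually_mem_nhdsWithin] with t h1 h2
      exact ⟨le_of_lt h1, le_of_lt (lt_of_lt_of_le h2 hr1)⟩
  haveI := hlneb
  have hJs : Tendsto (slope J r) l (𝓝 (deriv J r)) :=
    (hasDerivAt_iff_tendsto_slope.mp hnG.hasDerivAt).mono_left hlle
  have hFs : Tendsto (slope F r) l (𝓝 (deriv F r)) :=
    (hasDerivAt_iff_tendsto_slope.mp hG.hasDerivAt).mono_left hlle
  have hne : ∀ᶠ t in l, t ≠ r := hlle self_mem_nhdsWithin
  have herr : ∀ᶠ t in l, |slope J r t - c * slope F r t|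
      ≤ ((n:ℝ) * |(1-t)^p - (1-r)^p|) * |slope F r t| := by
    filter_upwards [hlmem, hne] with t ht htne
    have key : |(J t - J r) - c * (F t - F r)|
        ≤ ((n:ℝ) * |(1-t)^p - (1-r)^p|) * |F t - F r| := by
      rcases lt_or_gt_of_ne htne with hlt | hgt
      · obtain ⟨hL, hU⟩ := sandwich (n := n) (G := G) ht.1 (le_of_lt hlt) hr1
        have hFm : 0 ≤ F r - F t := sub_nonneg.mpr (svol_mono G (le_of_lt hlt))
        have hpow : (1 - r)^p ≤ (1 - t)^p :=
          pow_le_pow_left₀ (by linarith) (by linarith) p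
        have habs1 : |(1-t)^p - (1-r)^p| = (1-t)^p - (1-r)^p :=
          abs_of_nonneg (by linarith)
        have habs2 : |F t - F r| = F r - F t := by
          rw [abs_sub_comm]; exact abs_of_nonneg hFm
        have h9 : (n:ℝ) * (1 - r)^p * (F r - F t) ≤ (n:ℝ) * (1 - t)^p * (F r - F t) :=
          mul_le_mul_of_nonneg_right
            (mul_le_mul_of_nonneg_left hpow (Nat.cast_nonneg n)) hFm
        rw [habs1, habs2, abs_le]
        constructor <;> [nlinarith [hL, hU, h9]; nlinarith [hL, hU, h9]]
      · obtain ⟨hL, hU⟩ := sandwich (n := n) (G := G) hr0 (le_of_lt hgt) ht.2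
        have hFm : 0 ≤ F t - F r := sub_nonneg.mpr (svol_mono G (le_of_lt hgt))
        have hpow : (1 - t)^p ≤ (1 - r)^p :=
          pow_le_pow_left₀ (by linarith [ht.2]) (by linarith) p
        have habs1 : |(1-t)^p - (1-r)^p| = (1-r)^p - (1-t)^p := by
          rw [abs_sub_comm]; exact abs_of_nonneg (by linarith)
        have habs2 : |F t - F r| = F t - F r := abs_of_nonneg hFm
        have h9 : (n:ℝ) * (1 - t)^p * (F t - F r) ≤ (n:ℝ) * (1 - r)^p * (F t - F r) :=
          mul_le_mul_of_nonneg_right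
            (mul_le_mul_of_nonneg_left hpow (Nat.cast_nonneg n)) hFm
        rw [habs1, habs2, abs_le]
        constructor <;> [nlinarith [hL, hU, h9]; nlinarith [hL, hU, h9]]
    have htr : t - r ≠ 0 := sub_ne_zero.mpr htne
    have habs : (0:ℝ) < |t - r| := abs_pos.mpr htr
    have h2 : |slope F r t| = |F t - F r| / |t - r| := by
      rw [slope_def_field, abs_div]
    have h1 : |slope J r t - c * slope F r t|
        = |(J t - J r) - c * (F t - F r)| / |t - r| := by
      rw [show slope J r t - c * slope F r t
          = ((J t - J r) - c * (F t - F r)) / (t - r) by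
        rw [slope_def_field, slope_def_field]; field_simp, abs_div]
    rw [h1, h2, ← mul_div_assoc]
    exact div_le_div_of_nonneg_right key habs.le
  have hcont : Tendsto (fun t : ℝ => (n:ℝ) * |(1-t)^p - (1-r)^p|) l (𝓝 0) := by
    have hc1 : Tendsto (fun t : ℝ => (1-t)^p) (𝓝 r) (𝓝 ((1-r)^p)) :=
      ((continuous_const.sub continuous_id).pow p).tendsto r
    have h0 : Tendsto (fun t : ℝ => (1-t)^p - (1-r)^p) l (𝓝 0) := by
      have h00 : Tendsto (fun t : ℝ => (1-t)^p - (1-r)^p) (𝓝 r) (𝓝 ((1-r)^p - (1-r)^p)) :=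
        hc1.sub tendsto_const_nhds
      rw [sub_self] at h00
      exact h00.mono_left (hlle.trans nhdsWithin_le_nhds)
    have h0' := h0.abs
    have := h0'.const_mul (n:ℝ)
    simpa using this
  have hbound : Tendsto (fun t => ((n:ℝ) * |(1-t)^p - (1-r)^p|) * |slope F r t|) l (𝓝 0) := by
    have := hcont.mul hFs.abs
    simpa using this
  have hdiff0 : Tendsto (fun t => slope J r t - c * slope F r t) l (𝓝 0) :=
    squeeze_zero_norm' (herr.mono fun t ht => by simpa [Real.norm_eq_abs] using ht) hbound
  have hd := hdiff0.add (hFs.const_mul c)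
  have h3 : (fun t => (slope J r t - c * slope F r t) + c * slope F r t) = slope J r := by
    ext t; ring
  rw [h3, zero_add] at hd
  exact tendsto_nhds_unique hJs hd
end

section
/- For every n ≥ 1 and every 1/2 ≤ r ≤ 1, the sliced volume of the graph polytope of the complete graph K_n satisfies vol(K_n, r) = 2^{1−n} − (1−r)^n. -/
open MeasureTheory Set

section aux

variable {m : ℕ} (r : ℝ)

def sliceT (r : ℝ) (i : Fin (m + 1)) : Set (Fin (m + 1) → ℝ) :=
  {x | x i ∈ Ioc (1/2 : ℝ) r ∧ ∀ j, j ≠ i → x j ∈ Icc (0:ℝ) (1 - x i)}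

lemma measurableSet_sliceT (i : Fin (m + 1)) : MeasurableSet (sliceT r i) := by
  have heq : sliceT r i = ((fun x : Fin (m+1) → ℝ => x i) ⁻¹' Ioc (1/2:ℝ) r) ∩
      ⋂ j, ⋂ (_ : j ≠ i), ({x : Fin (m+1) → ℝ | 0 ≤ x j} ∩ {x | x j + x i ≤ 1}) := by
    ext x
    simp only [sliceT, mem_setOf_eq, mem_inter_iff, mem_preimage, mem_iInter, mem_Icc, mem_Ioc]
    constructor
    · rintro ⟨h1, h2⟩
      exact ⟨h1, fun j hj => ⟨(h2 j hj).1, by linarith [(h2 j hj).2]⟩⟩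
    · rintro ⟨h1, h2⟩
      exact ⟨h1, fun j hj => ⟨(h2 j hj).1, by linarith [(h2 j hj).2]⟩⟩
  rw [heq]
  refine ((measurable_pi_apply i) measurableSet_Ioc).inter ?_
  refine MeasurableSet.iInter fun j => MeasurableSet.iInter fun hj => ?_
  exact (measurableSet_le measurable_const (measurable_pi_apply j)).inter
    (measurableSet_le ((measurable_pi_apply j).add (measurable_pi_apply i)) measurable_const)

lemma volume_sliceT (hr0 : 1/2 ≤ r) (hr1 : r ≤ 1) (i : Fin (m + 1)) :
    volume (sliceT r i) = ENNReal.ofReal (((1/2:ℝ)^(m+1) - (1-r)^(m+1))/(m+1)) := by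
  set A : Set (ℝ × (Fin m → ℝ)) :=
    {p | p.1 ∈ Ioc (1/2:ℝ) r ∧ ∀ j, p.2 j ∈ Icc (0:ℝ) (1 - p.1)} with hA
  have hAmeas : MeasurableSet A := by
    have heq : A = ((fun p : ℝ × (Fin m → ℝ) => p.1) ⁻¹' Ioc (1/2:ℝ) r) ∩
        ⋂ j, ({p : ℝ × (Fin m → ℝ) | 0 ≤ p.2 j} ∩ {p | p.2 j + p.1 ≤ 1}) := by
      ext p
      simp only [hA, mem_setOf_eq, mem_inter_iff, mem_preimage, mem_iInter, mem_Icc, mem_Ioc]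
      constructor
      · rintro ⟨h1, h2⟩
        exact ⟨h1, fun j => ⟨(h2 j).1, by linarith [(h2 j).2]⟩⟩
      · rintro ⟨h1, h2⟩
        exact ⟨h1, fun j => ⟨(h2 j).1, by linarith [(h2 j).2]⟩⟩
    rw [heq]
    refine (measurable_fst measurableSet_Ioc).inter (MeasurableSet.iInter fun j => ?_)
    have hm1 : Measurable fun p : ℝ × (Fin m → ℝ) => p.2 j :=
      (measurable_pi_apply j).comp measurable_snd
    have hm2 : Measurable fun p : ℝ × (Fin m → ℝ) => p.2 j + p.1 := hm1.add measurable_fst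
    exact (measurableSet_le measurable_const hm1).inter
      (measurableSet_le hm2 measurable_const)
  have hpre : sliceT r i = (MeasurableEquiv.piFinSuccAbove (fun _ => ℝ) i) ⁻¹' A := by
    ext x
    simp only [sliceT, mem_setOf_eq, mem_preimage, MeasurableEquiv.piFinSuccAbove_apply,
      Fin.insertNthEquiv_symm_apply, hA, Fin.removeNth]
    constructor
    · rintro ⟨h1, h2⟩
      exact ⟨h1, fun j => h2 _ (Fin.succAbove_ne i j)⟩
    · rintro ⟨h1, h2⟩
      refine ⟨h1, fun j hj => ?_⟩
      obtain ⟨k, rfl⟩ := Fin.exists_succAbove_eq hj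
      exact h2 k
  have hmp := measurePreserving_piFinSuccAbove (fun _ : Fin (m+1) => (volume : Measure ℝ)) i
  rw [hpre, show (volume : Measure (Fin (m+1) → ℝ)) = Measure.pi fun _ => volume from volume_pi,
    hmp.measure_preimage hAmeas.nullMeasurableSet]
  rw [Measure.prod_apply hAmeas]
  have hslice : ∀ t : ℝ, (Measure.pi fun _ : Fin m => (volume : Measure ℝ)) (Prod.mk t ⁻¹' A) =
      (Ioc (1/2:ℝ) r).indicator (fun t => ENNReal.ofReal ((1-t)^m)) t := by
    intro t
    by_cases ht : t ∈ Ioc (1/2:ℝ) r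
    · rw [indicator_of_mem ht]
      have hset : Prod.mk t ⁻¹' A = univ.pi (fun _ : Fin m => Icc (0:ℝ) (1 - t)) := by
        ext y
        simp only [hA, mem_preimage, mem_setOf_eq, mem_pi, mem_univ, true_implies]
        exact ⟨fun h => h.2, fun h => ⟨ht, h⟩⟩
      rw [hset, show (Measure.pi fun _ : Fin m => (volume : Measure ℝ)) = volume from
        volume_pi.symm, volume_pi_pi]
      simp only [Real.volume_Icc, sub_zero, Finset.prod_const, Finset.card_univ,
        Fintype.card_fin]
      rw [ENNReal.ofReal_pow (by simp only [mem_Ioc] at ht; linarith [ht.2] : (0:ℝ) ≤ 1 - t)]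
    · rw [indicator_of_notMem ht]
      have hset : Prod.mk t ⁻¹' A = ∅ := by
        ext y
        simp only [hA, mem_preimage, mem_setOf_eq, mem_empty_iff_false, iff_false, not_and]
        exact fun h => absurd h ht
      simp [hset]
  simp_rw [hslice]
  rw [lintegral_indicator measurableSet_Ioc]
  have hint : IntegrableOn (fun t : ℝ => (1-t)^m) (Ioc (1/2:ℝ) r) volume :=
    (Continuous.pow (by continuity) m).integrableOn_Ioc
  have hnn : 0 ≤ᶠ[ae (volume.restrict (Ioc (1/2:ℝ) r))] fun t : ℝ => (1-t)^m := by
    refine (ae_restrict_iff' measurableSet_Ioc).2 (ae_of_all _ fun t ht => ?_)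
    simp only [mem_Ioc] at ht
    have h1 : (0:ℝ) ≤ 1 - t := by linarith [ht.2]
    positivity
  rw [← ofReal_integral_eq_lintegral_ofReal hint hnn]
  congr 1
  rw [← intervalIntegral.integral_of_le hr0,
    intervalIntegral.integral_comp_sub_left (fun t => t^m) 1, integral_pow]
  norm_num

end aux

/-- For `n ≥ 1` and `1/2 ≤ r ≤ 1`, `vol(K_n, r) = 2^{1-n} - (1-r)^n`. -/
theorem svol_complete (n : ℕ) (hn : 1 ≤ n) (r : ℝ) (hr0 : 1 / 2 ≤ r) (hr1 : r ≤ 1) :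
    svol (⊤ : SimpleGraph (Fin n)) r = (2 : ℝ) ^ ((1 : ℤ) - (n : ℤ)) - (1 - r) ^ n := by
  obtain ⟨m, rfl⟩ : ∃ m, n = m + 1 := ⟨n - 1, (Nat.succ_pred_eq_of_pos hn).symm⟩
  set S : Set (Fin (m+1) → ℝ) := {x | (∀ i, x i ∈ Set.Icc (0:ℝ) r) ∧
      ∀ ⦃i j⦄, (⊤ : SimpleGraph (Fin (m+1))).Adj i j → x i + x j ≤ 1} with hSdef
  set C : Set (Fin (m+1) → ℝ) := univ.pi fun _ => Icc (0:ℝ) (1/2) with hCdef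
  have hSeq : S = C ∪ ⋃ i, sliceT r i := by
    ext x
    simp only [hSdef, hCdef, mem_setOf_eq, mem_union, mem_pi, mem_univ, true_implies,
      mem_iUnion, SimpleGraph.top_adj, sliceT, mem_Icc, mem_Ioc]
    constructor
    · rintro ⟨hbox, hsum⟩
      by_cases hall : ∀ i, x i ≤ 1/2
      · exact Or.inl fun i => ⟨(hbox i).1, hall i⟩
      · push_neg at hall
        obtain ⟨i, hi⟩ := hall
        refine Or.inr ⟨i, ⟨hi, (hbox i).2⟩, fun j hj => ⟨(hbox j).1, ?_⟩⟩
        have := hsum (Ne.symm hj)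
        linarith
    · rintro (h | ⟨i, ⟨hi1, hi2⟩, hrest⟩)
      · refine ⟨fun i => ⟨(h i).1, le_trans (h i).2 hr0⟩, fun i j _ => ?_⟩
        linarith [(h i).2, (h j).2]
      · constructor
        · intro j
          by_cases hj : j = i
          · subst hj; exact ⟨by linarith, hi2⟩
          · obtain ⟨h1, h2⟩ := hrest j hj
            exact ⟨h1, by linarith⟩
        · intro j k hjk
          by_cases hj : j = i
          · subst hj
            have := (hrest k (Ne.symm hjk)).2
            linarith
          · by_cases hk : k = i
            · subst hk
              have := (hrest j hjk).2
              linarith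
            · have h1 := (hrest j hj).2
              have h2 := (hrest k hk).2
              linarith
  have hCmeas : MeasurableSet C := MeasurableSet.univ_pi fun _ => measurableSet_Icc
  have hdisjCT : Disjoint C (⋃ i, sliceT r i) := by
    rw [disjoint_iUnion_right]
    intro i
    rw [Set.disjoint_left]
    intro x hx hx2
    have h1 := (hx i (mem_univ i)).2
    have h2 := hx2.1.1
    linarith [h1]
  have hdisjT : Pairwise (Function.onFun Disjoint fun i : Fin (m+1) => sliceT r i) := by
    intro i j hij
    rw [Function.onFun, Set.disjoint_left]
    intro x hxi hxj
    have h1 := hxi.1.1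
    have h2 := (hxj.2 i hij).2
    have h3 := hxj.1.1
    linarith
  have hvol : volume S = volume C + ∑ i : Fin (m+1), volume (sliceT r i) := by
    rw [hSeq, measure_union hdisjCT (MeasurableSet.iUnion (measurableSet_sliceT r)),
      measure_iUnion hdisjT (measurableSet_sliceT r), tsum_fintype]
  have hvolC : volume C = ENNReal.ofReal ((1/2:ℝ)^(m+1)) := by
    rw [hCdef, volume_pi_pi]
    simp only [Real.volume_Icc, sub_zero, Finset.prod_const, Finset.card_univ, Fintype.card_fin]
    rw [ENNReal.ofReal_pow (by norm_num : (0:ℝ) ≤ 1/2)]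
  have hJ : (0:ℝ) ≤ ((1/2:ℝ)^(m+1) - (1-r)^(m+1))/(m+1) := by
    apply div_nonneg _ (by positivity)
    have h1 : (0:ℝ) ≤ 1 - r := by linarith
    have : (1-r:ℝ)^(m+1) ≤ (1/2:ℝ)^(m+1) := pow_le_pow_left₀ h1 (by linarith) (m+1)
    linarith
  rw [svol]
  rw [show {x : Fin (m+1) → ℝ | (∀ i, x i ∈ Set.Icc (0:ℝ) r) ∧
      ∀ ⦃i j⦄, (⊤ : SimpleGraph (Fin (m+1))).Adj i j → x i + x j ≤ 1} = S from rfl]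
  rw [hvol, hvolC]
  simp only [volume_sliceT r hr0 hr1, Finset.sum_const, Finset.card_univ, Fintype.card_fin,
    nsmul_eq_mul]
  rw [← ENNReal.ofReal_natCast, ← ENNReal.ofReal_mul (by positivity), ← ENNReal.ofReal_add (by positivity) (by positivity)]
  rw [ENNReal.toReal_ofReal (by positivity)]
  have hR : (2:ℝ) ^ ((1:ℤ) - ((m+1:ℕ):ℤ)) = 2 * (1/2:ℝ)^(m+1) := by
    rw [zpow_sub₀ (two_ne_zero), zpow_one, zpow_natCast, div_pow, one_pow]
    field_simp
  rw [hR]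
  have hm1 : ((m:ℝ) + 1) ≠ 0 := by positivity
  push_cast
  rw [mul_div_cancel₀ _ hm1]
  ring
end

section
/- For all positive integers n and k, the volume of the graph polytope of the complete n-partite graph nD_k (the join of n copies of the null graph D_k on k vertices) is vol(nD_k) = 2^{−kn} + n·2^{−kn}·(1/C(kn, k))·Σ_{i=0}^{k−1} C(kn, i). -/
set_option maxHeartbeats 1000000
open intervalIntegral


open MeasureTheory

lemma key_integral (a b : ℕ) : ∫ t in (1/2:ℝ)..1, t^a * (1-t)^b =
    ((a.factorial : ℝ) * b.factorial / (a+b+1).factorial) *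
      (∑ i ∈ Finset.range (a+1), ((a+b+1).choose i : ℝ)) * ((2:ℝ)^(a+b+1))⁻¹ := by
  induction a generalizing b with
  | zero =>
    simp only [pow_zero, one_mul]
    rw [show (fun t : ℝ => (1-t)^b) = (fun t : ℝ => ((fun s : ℝ => s ^ b) (1 - t))) from rfl,
      integral_comp_sub_left (fun s : ℝ => s ^ b) 1]
    norm_num [integral_pow]
    rw [Nat.factorial_succ]
    push_cast
    have hb : (b:ℝ) + 1 ≠ 0 := by positivity
    have hf : (b.factorial : ℝ) ≠ 0 := by positivity
    field_simp
    rw [← mul_pow]; norm_num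
  | succ a ih =>
    have hu : ∀ x ∈ Set.uIcc (1/2:ℝ) 1, HasDerivAt (fun t : ℝ => t^(a+1))
        (((a:ℝ)+1) * x ^ a) x := by
      intro x _
      simpa using (hasDerivAt_pow (a+1) x)
    have hv : ∀ x ∈ Set.uIcc (1/2:ℝ) 1, HasDerivAt (fun t : ℝ => -(1-t)^(b+1)/((b:ℝ)+1))
        ((1-x)^b) x := by
      intro x _
      have h1 : HasDerivAt (fun t : ℝ => (1-t)) (-1) x := by
        simpa using ((hasDerivAt_id x).const_sub 1)
      have h2 : HasDerivAt (fun t : ℝ => (1-t)^(b+1))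
          (-(((b:ℝ)+1) * (1-x)^b)) x := by
        have := (h1.pow (b+1))
        simpa [Pi.pow_def, mul_comm, mul_assoc, mul_left_comm] using this
      have h3 := (h2.neg).div_const ((b:ℝ)+1)
      have hb : (b:ℝ) + 1 ≠ 0 := by positivity
      refine h3.congr_deriv ?_
      rw [neg_neg, mul_div_cancel_left₀ _ hb]
    have hInt1 : IntervalIntegrable (fun x : ℝ => ((a:ℝ)+1) * x ^ a) volume (1/2) 1 :=
      (continuous_const.mul (continuous_pow a)).intervalIntegrable _ _
    have hInt2 : IntervalIntegrable (fun x : ℝ => (1-x)^b) volume (1/2) 1 :=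
      (((continuous_const.sub continuous_id).pow b)).intervalIntegrable _ _
    have H := integral_mul_deriv_eq_deriv_mul hu hv hInt1 hInt2
    rw [H]
    have expand : ∫ x in (1/2:ℝ)..1, ((a:ℝ)+1) * x ^ a * (-(1-x)^(b+1)/((b:ℝ)+1))
        = -(((a:ℝ)+1)/((b:ℝ)+1)) * ∫ x in (1/2:ℝ)..1, x ^ a * (1-x)^(b+1) := by
      rw [← intervalIntegral.integral_const_mul]
      congr 1; funext x; ring
    rw [expand, ih (b+1)]
    rw [show a+(b+1)+1 = a+b+2 from by omega, show a+1+b+1 = a+b+2 from by omega]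
    rw [Finset.sum_range_succ (fun i => (((a+b+2).choose i : ℕ) : ℝ)) (a+1)]
    have hchoose : ((a+b+2).choose (a+1) : ℝ) * ((a+1).factorial) * ((b+1).factorial)
        = ((a+b+2).factorial) := by
      rw [← Nat.cast_mul, ← Nat.cast_mul]
      rw [show (b+1 : ℕ) = a+b+2-(a+1) from by omega]
      rw [Nat.choose_mul_factorial_mul_factorial (by omega : a+1 ≤ a+b+2)]
    have h1 : ((a+1).factorial : ℝ) = ((a:ℝ)+1) * a.factorial := by
      rw [Nat.factorial_succ]; push_cast; ring
    have h2 : ((b+1).factorial : ℝ) = ((b:ℝ)+1) * b.factorial := by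
      rw [Nat.factorial_succ]; push_cast; ring
    have hb : (b:ℝ) + 1 ≠ 0 := by positivity
    have ha1 : (a:ℝ) + 1 ≠ 0 := by positivity
    have hfa : ((a.factorial : ℕ) : ℝ) ≠ 0 := by positivity
    have hfb : ((b.factorial : ℕ) : ℝ) ≠ 0 := by positivity
    have hfab : (((a+b+2).factorial : ℕ) : ℝ) ≠ 0 := by positivity
    have hC : (((a+b+2).choose (a+1) : ℕ) : ℝ)
        = ((a+b+2).factorial : ℝ) / (((a+1).factorial : ℝ) * ((b+1).factorial : ℝ)) := by
      rw [eq_div_iff (by rw [h1, h2]; positivity)]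
      linarith [hchoose]
    set S := ∑ i ∈ Finset.range (a+1), (((a+b+2).choose i : ℕ) : ℝ) with hS
    rw [hC, h1, h2]
    have h2pow : ((2:ℝ)^(a+b+2)) ≠ 0 := by positivity
    have hsplit : (2:ℝ)^(a+b+2) = 2^(a+1) * 2^(b+1) := by
      rw [← pow_add]; congr 1; omega
    rw [hsplit]
    rw [show (1:ℝ) - 1/2 = 1/2 by norm_num, one_div, inv_pow, inv_pow]
    field_simp
    ring

lemma hyperplane_null_s13 {ι : Type*} [Fintype ι] [DecidableEq ι] {v w : ι} (h : v ≠ w) :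
    volume {x : ι → ℝ | x v = x w} = 0 := by
  set L : (ι → ℝ) →ₗ[ℝ] ℝ := (LinearMap.proj v : (ι → ℝ) →ₗ[ℝ] ℝ) - (LinearMap.proj w : (ι → ℝ) →ₗ[ℝ] ℝ) with hL
  have hset : {x : ι → ℝ | x v = x w} = (LinearMap.ker L : Set (ι → ℝ)) := by
    ext x
    simp [hL, sub_eq_zero, LinearMap.mem_ker, eq_comm]
  rw [hset]
  refine Measure.addHaar_submodule _ _ ?_
  intro htop
  have h1 : (Pi.single v 1 : ι → ℝ) ∈ LinearMap.ker L := htop ▸ Submodule.mem_top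
  simp [hL, LinearMap.mem_ker, Pi.single_apply, h.symm] at h1

def Tset (n k : ℕ) (v : Fin n × Fin k) : Set (Fin n × Fin k → ℝ) :=
  {x | (1/2 < x v ∧ x v ≤ 1) ∧ ∀ u, u ≠ v →
      0 ≤ x u ∧ x u ≤ (if u.1 = v.1 then x v else 1 - x v)}

lemma card_same (n k : ℕ) (v : Fin n × Fin k) :
    (Finset.univ.filter
      (fun u : {u : Fin n × Fin k // ¬ u = v} => u.val.1 = v.1)).card = k - 1 := by
  rw [← Fintype.card_subtype]
  have E : {u : {u : Fin n × Fin k // ¬ u = v} // u.val.1 = v.1} ≃ {j : Fin k // ¬ j = v.2} :=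
    { toFun := fun u => ⟨u.val.val.2, fun h => u.val.prop (Prod.ext u.prop h)⟩
      invFun := fun j => ⟨⟨(v.1, j.val), fun h => j.prop (by
        have := congrArg Prod.snd h; simpa using this)⟩, rfl⟩
      left_inv := by
        rintro ⟨⟨⟨u1, u2⟩, hu⟩, hp⟩
        simp only at hp
        subst hp
        rfl
      right_inv := by rintro ⟨j, hj⟩; rfl }
  rw [Fintype.card_congr E, Fintype.card_subtype_compl, Fintype.card_subtype_eq, Fintype.card_fin]

lemma card_other (n k : ℕ) (v : Fin n × Fin k) (hn : 1 ≤ n) (hk : 1 ≤ k) :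
    (Finset.univ.filter
      (fun u : {u : Fin n × Fin k // ¬ u = v} => ¬ u.val.1 = v.1)).card = k * n - k := by
  have h := Finset.card_filter_add_card_filter_not (s := Finset.univ)
    (p := fun u : {u : Fin n × Fin k // ¬ u = v} => u.val.1 = v.1)
  rw [card_same n k v, Finset.card_univ, Fintype.card_subtype_compl,
    Fintype.card_subtype_eq, Fintype.card_prod, Fintype.card_fin, Fintype.card_fin] at h
  have hkn : k * n = n * k := Nat.mul_comm k n
  have hle : k ≤ k * n := Nat.le_mul_of_pos_right k (by omega)
  omega

lemma volume_Tset (n k : ℕ) (hn : 1 ≤ n) (hk : 1 ≤ k) (v : Fin n × Fin k) :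
    volume (Tset n k v) =
      ENNReal.ofReal (∫ t in (1/2:ℝ)..1, t^(k-1) * (1-t)^(k*n-k)) := by
  haveI : Unique {u : Fin n × Fin k // u = v} :=
    ⟨⟨⟨v, rfl⟩⟩, by rintro ⟨u, rfl⟩; rfl⟩
  haveI : Fintype {u : Fin n × Fin k // u = v} := Subtype.fintype _
  have hdef : ((default : {u : Fin n × Fin k // u = v}) : Fin n × Fin k) = v :=
    (default : {u : Fin n × Fin k // u = v}).prop
  set c : ℝ → {u : Fin n × Fin k // ¬ u = v} → ℝ :=
    fun t u => if u.val.1 = v.1 then t else 1 - t with hc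
  set B : Set (({u : Fin n × Fin k // u = v} → ℝ) × ({u : Fin n × Fin k // ¬ u = v} → ℝ)) :=
    {p | (1/2 < p.1 default ∧ p.1 default ≤ 1) ∧
      ∀ u, 0 ≤ p.2 u ∧ p.2 u ≤ c (p.1 default) u} with hB
  have hmeas1 : Measurable (fun p : ({u : Fin n × Fin k // u = v} → ℝ) ×
      ({u : Fin n × Fin k // ¬ u = v} → ℝ) => p.1 default) :=
    (measurable_pi_apply _).comp measurable_fst
  have hmeas2 : ∀ u, Measurable (fun p : ({u : Fin n × Fin k // u = v} → ℝ) ×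
      ({u : Fin n × Fin k // ¬ u = v} → ℝ) => p.2 u) :=
    fun u => (measurable_pi_apply _).comp measurable_snd
  have hBmeas : MeasurableSet B := by
    have hrw : B = ({p | 1/2 < p.1 default} ∩ {p | p.1 default ≤ 1}) ∩
        ⋂ u, ({p | 0 ≤ p.2 u} ∩ {p | p.2 u ≤ c (p.1 default) u}) := by
      ext p
      simp only [hB, Set.mem_setOf_eq, Set.mem_inter_iff, Set.mem_iInter, and_assoc,
        forall_and]
    rw [hrw]
    refine (((measurableSet_lt measurable_const hmeas1).inter
      (measurableSet_le hmeas1 measurable_const)).inter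
      (MeasurableSet.iInter fun u => (measurableSet_le measurable_const (hmeas2 u)).inter
        (measurableSet_le (hmeas2 u) ?_)))
    by_cases hcase : u.val.1 = v.1
    · simpa [hc, hcase] using hmeas1
    · simpa [hc, hcase] using (hmeas1.const_sub 1)
  have hpre : Tset n k v = (MeasurableEquiv.piEquivPiSubtypeProd
      (fun _ : Fin n × Fin k => ℝ) (fun u => u = v)) ⁻¹' B := by
    ext x
    simp only [Set.mem_preimage, MeasurableEquiv.piEquivPiSubtypeProd,
      MeasurableEquiv.coe_mk, Equiv.piEquivPiSubtypeProd_apply, hB, Set.mem_setOf_eq,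
      Tset, hdef]
    constructor
    · rintro ⟨⟨h1, h2⟩, h3⟩
      exact ⟨⟨h1, h2⟩, fun u => h3 u.val u.prop⟩
    · rintro ⟨⟨h1, h2⟩, h3⟩
      exact ⟨⟨h1, h2⟩, fun u hu => h3 ⟨u, hu⟩⟩
  rw [hpre, (volume_preserving_piEquivPiSubtypeProd
    (fun _ : Fin n × Fin k => ℝ) (fun u => u = v)).measure_preimage
    hBmeas.nullMeasurableSet]
  rw [Measure.volume_eq_prod, Measure.prod_apply hBmeas]
  set g : ℝ → ENNReal := Set.indicator (Set.Ioc (1/2:ℝ) 1)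
    (fun t => ENNReal.ofReal t ^ (k-1) * ENNReal.ofReal (1-t) ^ (k*n-k)) with hg
  have hsec : ∀ y : {u : Fin n × Fin k // u = v} → ℝ,
      volume (Prod.mk y ⁻¹' B) = g (y default) := by
    intro y
    by_cases ht : 1/2 < y default ∧ y default ≤ 1
    · have hrw : Prod.mk y ⁻¹' B =
          Set.pi Set.univ (fun u => Set.Icc 0 (c (y default) u)) := by
        ext z
        simp only [hB, Set.mem_preimage, Set.mem_setOf_eq, Set.mem_pi, Set.mem_univ,
          Set.mem_Icc, forall_true_left, ht, true_and]
      rw [hrw, volume_pi_pi]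
      have hstep : (∏ u : {u : Fin n × Fin k // ¬ u = v},
            volume (Set.Icc (0:ℝ) (c (y default) u)))
          = ∏ u : {u : Fin n × Fin k // ¬ u = v},
              (if u.val.1 = v.1 then ENNReal.ofReal (y default)
                else ENNReal.ofReal (1 - y default)) := by
        refine Finset.prod_congr rfl fun u _ => ?_
        by_cases hcase : u.val.1 = v.1 <;> simp [Real.volume_Icc, hc, hcase]
      rw [hstep, Finset.prod_ite, Finset.prod_const, Finset.prod_const,
        card_same n k v, card_other n k v hn hk,
        hg, Set.indicator_of_mem (Set.mem_Ioc.mpr ht)]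
    · have hrw : Prod.mk y ⁻¹' B = ∅ := by
        ext z
        simp only [hB, Set.mem_preimage, Set.mem_setOf_eq, Set.mem_empty_iff_false,
          iff_false]
        rintro ⟨h1, -⟩
        exact ht h1
      rw [hrw, measure_empty, hg,
        Set.indicator_of_notMem (by simpa [Set.mem_Ioc] using ht)]
  have hgmeas : Measurable g := by
    refine Measurable.indicator ?_ measurableSet_Ioc
    exact ((ENNReal.measurable_ofReal.comp measurable_id).pow_const _).mul
      ((ENNReal.measurable_ofReal.comp (measurable_const.sub measurable_id)).pow_const _)
  refine (lintegral_congr hsec).trans ?_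
  rw [show (Subtype.fintype (fun u : Fin n × Fin k => u = v))
    = Unique.fintype from Subsingleton.elim _ _]
  refine Eq.trans ((volume_preserving_funUnique
    {u : Fin n × Fin k // u = v} ℝ).lintegral_comp hgmeas) ?_
  rw [hg, lintegral_indicator measurableSet_Ioc]
  have hcong : ∫⁻ t in Set.Ioc (1/2:ℝ) 1,
        ENNReal.ofReal t ^ (k-1) * ENNReal.ofReal (1-t) ^ (k*n-k)
      = ∫⁻ t in Set.Ioc (1/2:ℝ) 1, ENNReal.ofReal (t^(k-1) * (1-t)^(k*n-k)) := by
    refine setLIntegral_congr_fun measurableSet_Ioc (fun t ht => ?_)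
    have h0 : (0:ℝ) ≤ t := le_trans (by norm_num) ht.1.le
    have h1 : (0:ℝ) ≤ 1 - t := by linarith [ht.2]
    rw [ENNReal.ofReal_mul (by positivity), ENNReal.ofReal_pow h0, ENNReal.ofReal_pow h1]
  rw [hcong, ← ofReal_integral_eq_lintegral_ofReal]
  · rw [intervalIntegral.integral_of_le (by norm_num : (1/2:ℝ) ≤ 1)]
  · exact Continuous.integrableOn_Ioc ((continuous_pow (k-1)).mul ((continuous_const.sub continuous_id).pow (k*n-k)))
  · refine (ae_restrict_iff' measurableSet_Ioc).mpr (ae_of_all _ fun t ht => ?_)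
    have h0 : (0:ℝ) ≤ t := le_trans (by norm_num) ht.1.le
    have h1 : (0:ℝ) ≤ 1 - t := by linarith [ht.2]
    positivity

lemma Tset_measurable (n k : ℕ) (v : Fin n × Fin k) : MeasurableSet (Tset n k v) := by
  have hrw : Tset n k v = ({x : Fin n × Fin k → ℝ | 1/2 < x v} ∩ {x | x v ≤ 1}) ∩
      ⋂ u : {u : Fin n × Fin k // u ≠ v},
        ({x : Fin n × Fin k → ℝ | 0 ≤ x u.val} ∩
          {x | x u.val ≤ if u.val.1 = v.1 then x v else 1 - x v}) := by
    ext x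
    simp only [Tset, Set.mem_setOf_eq, Set.mem_inter_iff, Set.mem_iInter]
    constructor
    · rintro ⟨⟨h1, h2⟩, h3⟩
      exact ⟨⟨h1, h2⟩, fun u => h3 u.val u.prop⟩
    · rintro ⟨⟨h1, h2⟩, h3⟩
      exact ⟨⟨h1, h2⟩, fun u hu => h3 ⟨u, hu⟩⟩
  rw [hrw]
  refine (((measurableSet_lt measurable_const (measurable_pi_apply v)).inter
    (measurableSet_le (measurable_pi_apply v) measurable_const)).inter
    (MeasurableSet.iInter fun u =>
      (measurableSet_le measurable_const (measurable_pi_apply _)).inter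
        (measurableSet_le (measurable_pi_apply _) ?_)))
  by_cases hcase : u.val.1 = v.1
  · simpa [hcase] using (measurable_pi_apply v)
  · simpa [hcase] using ((measurable_pi_apply v).const_sub 1)

lemma Tset_pairwise_aedisjoint (n k : ℕ) :
    Pairwise (Function.onFun (MeasureTheory.AEDisjoint volume) (Tset n k)) := by
  intro v w hvw
  by_cases hcase : v.1 = w.1
  · refine measure_mono_null ?_ (hyperplane_null_s13 hvw)
    rintro x ⟨hxv, hxw⟩
    have h1 := (hxv.2 w hvw.symm)
    rw [if_pos hcase.symm] at h1
    have h2 := (hxw.2 v hvw)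
    rw [if_pos hcase] at h2
    exact le_antisymm h2.2 h1.2
  · refine (Set.disjoint_left.mpr ?_).aedisjoint
    rintro x ⟨hxv, hv3⟩ ⟨hxw, _⟩
    have h1 := hv3 w hvw.symm
    rw [if_neg (fun h => hcase h.symm)] at h1
    linarith [hxv.1, hxw.1, h1.2]

lemma joinPow_bot_adj (n k : ℕ) (i j : Fin n × Fin k) :
    (joinPow (⊥ : SimpleGraph (Fin k)) n).Adj i j ↔ i.1 ≠ j.1 := by
  constructor
  · rintro (h | ⟨h, hfalse⟩)
    · exact h
    · exact absurd hfalse (by simp)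
  · exact Or.inl

lemma set_decomp (n k : ℕ) (hn : 1 ≤ n) (hk : 1 ≤ k) :
    {x : Fin n × Fin k → ℝ | (∀ i, x i ∈ Set.Icc (0:ℝ) 1) ∧
      ∀ ⦃i j⦄, (joinPow (⊥ : SimpleGraph (Fin k)) n).Adj i j → x i + x j ≤ 1}
    = (Set.pi Set.univ fun _ : Fin n × Fin k => Set.Icc (0:ℝ) (1/2)) ∪
        ⋃ v, Tset n k v := by
  ext x
  simp only [Set.mem_setOf_eq, Set.mem_union, Set.mem_iUnion, Set.mem_pi, Set.mem_univ,
    Set.mem_Icc, forall_true_left, true_implies]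
  constructor
  · rintro ⟨hbox, hedge⟩
    by_cases hsmall : ∀ u, x u ≤ 1/2
    · exact Or.inl fun u => ⟨(hbox u).1, hsmall u⟩
    · right
      push_neg at hsmall
      obtain ⟨w, hw⟩ := hsmall
      obtain ⟨v, hvmem, hvmax⟩ := Finset.exists_max_image
        (Finset.univ.filter fun u : Fin n × Fin k => u.1 = w.1) x ⟨w, by simp⟩
      simp only [Finset.mem_filter, Finset.mem_univ, true_and] at hvmem
      refine ⟨v, ⟨lt_of_lt_of_le hw (hvmax w (by simp)), (hbox v).2⟩, ?_⟩
      intro u hu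
      by_cases hcase : u.1 = v.1
      · rw [if_pos hcase]
        exact ⟨(hbox u).1, hvmax u (by simp [hcase, hvmem])⟩
      · rw [if_neg hcase]
        have h := hedge ((joinPow_bot_adj n k u v).mpr hcase)
        exact ⟨(hbox u).1, by linarith⟩
  · rintro (hsmall | ⟨v, hv, hrest⟩)
    · refine ⟨fun u => ⟨(hsmall u).1, le_trans (hsmall u).2 (by norm_num)⟩, ?_⟩
      intro i j _
      linarith [(hsmall i).2, (hsmall j).2]
    · have hv0 : (0:ℝ) ≤ x v := le_trans (by norm_num) hv.1.le
      constructor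
      · intro u
        by_cases huv : u = v
        · subst huv; exact ⟨hv0, hv.2⟩
        · have h := hrest u huv
          by_cases hcase : u.1 = v.1
          · rw [if_pos hcase] at h
            exact ⟨h.1, le_trans h.2 hv.2⟩
          · rw [if_neg hcase] at h
            exact ⟨h.1, by linarith [h.2]⟩
      · intro i j hadj'
        have hij : i.1 ≠ j.1 := (joinPow_bot_adj n k i j).mp hadj'
        by_cases hiv : i = v
        · have hjv : j ≠ v := by rintro rfl; exact hij (by rw [hiv])
          have h := hrest j hjv
          have hj1 : ¬ j.1 = v.1 := by rw [← hiv]; exact fun h' => hij h'.symm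
          rw [if_neg hj1] at h
          rw [hiv]
          linarith [h.2]
        · by_cases hjv : j = v
          · have h := hrest i hiv
            have hi1 : ¬ i.1 = v.1 := by rw [← hjv]; exact hij
            rw [if_neg hi1] at h
            rw [hjv]
            linarith [h.2]
          · have hi := hrest i hiv
            have hj := hrest j hjv
            by_cases hcase : i.1 = v.1
            · rw [if_pos hcase] at hi
              have hcj : ¬ j.1 = v.1 := fun h => hij (hcase.trans h.symm)
              rw [if_neg hcj] at hj
              linarith [hi.2, hj.2]
            · rw [if_neg hcase] at hi
              by_cases hcj : j.1 = v.1
              · rw [if_pos hcj] at hj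
                linarith [hi.2, hj.2]
              · rw [if_neg hcj] at hj
                linarith [hi.2, hj.2, hv.1]

/-- The volume of the complete `n`-partite graph `nD_k` (the join of `n` copies of
the edgeless graph `D_k` on `k` vertices):
`vol(nD_k) = 2^{-kn} + n·2^{-kn}·(1/C(kn,k))·Σ_{i=0}^{k-1} C(kn,i)`. -/
theorem vol_joinPow_null (n k : ℕ) (hn : 1 ≤ n) (hk : 1 ≤ k) :
    gvol (joinPow (⊥ : SimpleGraph (Fin k)) n) =
      ((2 : ℝ) ^ (k * n))⁻¹ +
        (n : ℝ) * ((2 : ℝ) ^ (k * n))⁻¹ * (1 / ((k * n).choose k : ℝ)) *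
          ∑ i ∈ Finset.range k, (((k * n).choose i : ℕ) : ℝ) := by
  classical
  have hk_le : k ≤ k * n := Nat.le_mul_of_pos_right k (by omega)
  rw [gvol, set_decomp n k hn hk]
  have hdisj : Disjoint (Set.pi Set.univ fun _ : Fin n × Fin k => Set.Icc (0:ℝ) (1/2))
      (⋃ v, Tset n k v) := by
    rw [Set.disjoint_left]
    rintro x hx hx2
    rw [Set.mem_iUnion] at hx2
    obtain ⟨v, hv⟩ := hx2
    exact absurd hv.1.1 (not_lt.mpr (hx v (Set.mem_univ v)).2)
  rw [measure_union hdisj (MeasurableSet.iUnion (Tset_measurable n k))]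
  rw [measure_iUnion₀ (Tset_pairwise_aedisjoint n k)
    (fun v => (Tset_measurable n k v).nullMeasurableSet), tsum_fintype]
  have hS0 : volume (Set.pi Set.univ fun _ : Fin n × Fin k => Set.Icc (0:ℝ) (1/2))
      = ENNReal.ofReal ((1/2:ℝ)^(k*n)) := by
    rw [volume_pi_pi]
    simp only [Real.volume_Icc, sub_zero]
    rw [Finset.prod_const, Finset.card_univ, Fintype.card_prod, Fintype.card_fin,
      Fintype.card_fin, ← ENNReal.ofReal_pow (by norm_num)]
    rw [show n * k = k * n from Nat.mul_comm n k]
  rw [hS0]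
  rw [Finset.sum_congr rfl (fun v _ => volume_Tset n k hn hk v), Finset.sum_const,
    Finset.card_univ, Fintype.card_prod, Fintype.card_fin, Fintype.card_fin, nsmul_eq_mul]
  have hkey := key_integral (k-1) (k*n-k)
  rw [show k-1+(k*n-k)+1 = k*n from by omega, show k-1+1 = k from by omega] at hkey
  have hJnn : 0 ≤ ∫ t in (1/2:ℝ)..1, t^(k-1) * (1-t)^(k*n-k) := by
    rw [hkey]
    positivity
  rw [ENNReal.toReal_add ENNReal.ofReal_ne_top
    (ENNReal.mul_ne_top (ENNReal.natCast_ne_top _) ENNReal.ofReal_ne_top),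
    ENNReal.toReal_mul, ENNReal.toReal_ofReal hJnn, ENNReal.toReal_ofReal (by positivity),
    ENNReal.toReal_natCast]
  rw [hkey]
  have hCr : ((k*n).choose k : ℝ) * (k.factorial : ℝ) * ((k*n-k).factorial : ℝ)
      = ((k*n).factorial : ℝ) := by
    exact_mod_cast congrArg (Nat.cast (R := ℝ))
      (Nat.choose_mul_factorial_mul_factorial hk_le)
  have hmfp : (k:ℝ) * ((k-1).factorial : ℝ) = (k.factorial : ℝ) := by
    exact_mod_cast congrArg (Nat.cast (R := ℝ)) (Nat.mul_factorial_pred (by omega))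
  have hfab : ((k*n).factorial : ℝ) ≠ 0 := by positivity
  have hCne : ((k*n).choose k : ℝ) ≠ 0 := by
    have := Nat.choose_pos hk_le
    positivity
  have hscal : (n:ℝ) * (k:ℝ) *
      (((k-1).factorial : ℝ) * ((k*n-k).factorial : ℝ) / ((k*n).factorial : ℝ))
      = (n:ℝ) * (1 / ((k*n).choose k : ℝ)) := by
    have h1 : ((k*n).choose k : ℝ) * ((k:ℝ) * ((k-1).factorial:ℝ)) * ((k*n-k).factorial:ℝ)
        = ((k*n).factorial : ℝ) := by
      rw [hmfp]; exact hCr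
    field_simp
    linear_combination h1
  rw [div_pow, one_pow, one_div]
  push_cast
  linear_combination ((∑ i ∈ Finset.range k, (((k*n).choose i : ℕ):ℝ)) *
    ((2:ℝ)^(k*n))⁻¹) * hscal
end
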